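/- arXiv:2407.02326 — 3 statements merged into one kernel-verified Lean document; each statement's English description precedes it below -/
import Mathlib

section
/- Every finite description linear order is order-isomorphic to the linguage 𝐋(M) of some deterministic finite automaton M over the alphabet {0,1}. -/
/-- A deterministic finite automaton with a partial transition function. -/
structure PDFA (σ : Type) where
  /-- the (finite) set of states -/
  State : Type
  finState : Finite State
  /-- the start state -/
  start : State
  /-- the set of accept states -/
  accept : Set State
  /-- the partial transition function -/
  step : State → σ → Option State

namespace PDFA

variable {σ : Type} (M : PDFA σ)

/-- The extended (partial) transition function `δ̂`, reading the word left to right. -/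
def run (q : M.State) (w : List σ) : Option M.State :=
  w.foldlM (fun q a => M.step q a) q

/-- The language accepted by the automaton. -/
def lang : Set (List σ) := {w | ∃ q ∈ M.accept, M.run M.start w = some q}

end PDFA

/-- The inorder relation `<₂` on finite binary words: `x <₂ y` iff, writing
`x = w·x'`, `y = w·y'` with `w` the longest common prefix, either `x'` begins
with `0`(=`false`) or `y'` begins with `1`(=`true`). -/
def inlt : List Bool → List Bool → Prop
  | [], [] => False
  | [], b :: _ => b = true
  | a :: _, [] => a = false
  | a :: x, b :: y => (a = false ∧ b = true) ∨ (a = b ∧ inlt x y)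

/-- The class of finite description linear orders, as a predicate on pairs
`(L, r)` of a type and a binary relation: the smallest class containing the
empty and one-element orders and closed under order isomorphism, binary sums,
multiplication by `ω`, multiplication by `ω*`, and finitary shuffles. -/
inductive FinDesc : (L : Type) → (L → L → Prop) → Prop
  | empty : FinDesc Empty (fun _ _ => False)
  | single : FinDesc PUnit (fun _ _ => False)
  | iso (L : Type) (r : L → L → Prop) (L' : Type) (r' : L' → L' → Prop) :
      FinDesc L r → Nonempty (r' ≃r r) → FinDesc L' r'
  | sum (L₀ : Type) (r₀ : L₀ → L₀ → Prop) (L₁ : Type) (r₁ : L₁ → L₁ → Prop) :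
      FinDesc L₀ r₀ → FinDesc L₁ r₁ → FinDesc (L₀ ⊕ L₁) (Sum.Lex r₀ r₁)
  | omegaMul (L : Type) (r : L → L → Prop) :
      FinDesc L r → FinDesc (ℕ × L) (Prod.Lex (· < ·) r)
  | omegaStarMul (L : Type) (r : L → L → Prop) :
      FinDesc L r → FinDesc (ℕ × L) (Prod.Lex (fun m n : ℕ => n < m) r)
  | shuffle (n : ℕ) (hn : 1 ≤ n) (L : Fin n → Type) (r : ∀ i, L i → L i → Prop)
      (χ : ℚ → Fin n)
      (hχ : ∀ i, ∀ a b : ℚ, a < b → ∃ q, a < q ∧ q < b ∧ χ q = i) :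
      (∀ i, FinDesc (L i) (r i)) →
      FinDesc ((q : ℚ) × L (χ q)) (Sigma.Lex (· < ·) (fun q => r (χ q)))


namespace Lingu


/-- numeric value of a word, in (0,1) -/
def ev : List Bool → ℚ
  | [] => 1/2
  | false :: w => ev w / 2
  | true :: w => 1/2 + ev w / 2

lemma ev_pos (w : List Bool) : 0 < ev w ∧ ev w < 1 := by
  induction w with
  | nil => norm_num [ev]
  | cons b w ih =>
    cases b <;> simp only [ev] <;> constructor <;> nlinarith [ih.1, ih.2]

lemma inlt_iff_ev {x y : List Bool} : inlt x y ↔ ev x < ev y := by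
  induction x generalizing y with
  | nil =>
    cases y with
    | nil => simp [inlt]
    | cons b y =>
      obtain ⟨h1, h2⟩ := ev_pos y
      cases b
      · simp only [inlt, ev]
        constructor
        · rintro ⟨⟩
        · intro h; exfalso; linarith
      · simp only [inlt, ev]
        constructor
        · intro _; linarith
        · intro _; trivial
  | cons a x ih =>
    cases y with
    | nil =>
      obtain ⟨h1, h2⟩ := ev_pos x
      cases a
      · simp only [inlt, ev]
        constructor
        · intro _; linarith
        · intro _; trivial
      · simp only [inlt, ev]
        constructor
        · rintro ⟨⟩
        · intro h; exfalso; linarith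
    | cons b y =>
      obtain ⟨h1, h2⟩ := ev_pos x
      obtain ⟨h3, h4⟩ := ev_pos y
      cases a <;> cases b <;> simp [inlt, ev, ih]
      · constructor <;> intro h <;> linarith
      · linarith
      · linarith
      · constructor <;> intro h <;> linarith

lemma ev_inj : Function.Injective ev := by
  intro x y h
  induction x generalizing y with
  | nil =>
    cases y with
    | nil => rfl
    | cons b y =>
      obtain ⟨h1, h2⟩ := ev_pos y
      exfalso; cases b <;> simp only [ev] at h <;> linarith
  | cons a x ih =>
    cases y with
    | nil =>
      obtain ⟨h1, h2⟩ := ev_pos x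
      exfalso; cases a <;> simp only [ev] at h <;> linarith
    | cons b y =>
      obtain ⟨h1, h2⟩ := ev_pos x
      obtain ⟨h3, h4⟩ := ev_pos y
      cases a <;> cases b <;> simp only [ev] at h
      · rw [ih (by linarith)]
      · exfalso; linarith
      · exfalso; linarith
      · rw [ih (by linarith)]

lemma inlt_irrefl (x : List Bool) : ¬ inlt x x := by simp [inlt_iff_ev]

lemma inlt_trans {x y z : List Bool} : inlt x y → inlt y z → inlt x z := by
  simp only [inlt_iff_ev]; exact lt_trans

lemma inlt_trichotomy (x y : List Bool) : inlt x y ∨ x = y ∨ inlt y x := by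
  rcases lt_trichotomy (ev x) (ev y) with h | h | h
  · exact Or.inl (inlt_iff_ev.2 h)
  · exact Or.inr (Or.inl (ev_inj h))
  · exact Or.inr (Or.inr (inlt_iff_ev.2 h))

lemma inlt_append_same (x u v : List Bool) : inlt (x ++ u) (x ++ v) ↔ inlt u v := by
  induction x with
  | nil => rfl
  | cons a x ih => cases a <;> simp [inlt, ih]

lemma inlt_append_of_incomp {x y : List Bool} (hxy : ¬ x <+: y) (hyx : ¬ y <+: x)
    (u v : List Bool) : inlt (x ++ u) (y ++ v) ↔ inlt x y := by
  induction x generalizing y with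
  | nil => exact absurd (List.nil_prefix) hxy
  | cons a x ih =>
    cases y with
    | nil => exact absurd (List.nil_prefix) hyx
    | cons b y =>
      by_cases hab : a = b
      · subst hab
        have h1 : ¬ x <+: y := fun h => hxy (List.cons_prefix_cons.2 ⟨rfl, h⟩)
        have h2 : ¬ y <+: x := fun h => hyx (List.cons_prefix_cons.2 ⟨rfl, h⟩)
        simp [inlt, ih h1 h2]
      · cases a <;> cases b <;> simp_all [inlt]



/-- A parser: a partial DFA that can "exit" to one of `m` inner automata. -/
structure Parser (m : ℕ) where
  State : Type
  finState : Finite State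
  start : State
  step : State → Bool → Option (State ⊕ Fin m)

namespace Parser
variable {m : ℕ} (N : Parser m)

def step' : (N.State ⊕ Fin m) → Bool → Option (N.State ⊕ Fin m)
  | Sum.inl q, b => N.step q b
  | Sum.inr _, _ => none

def prun (s : N.State ⊕ Fin m) (w : List Bool) : Option (N.State ⊕ Fin m) :=
  w.foldlM N.step' s

lemma prun_nil (s) : N.prun s [] = some s := rfl

lemma prun_cons (s b w) : N.prun s (b :: w) =
    (N.step' s b).bind (fun s' => N.prun s' w) := by
  simp only [prun, List.foldlM_cons]; rfl

lemma prun_append (s u v) : N.prun s (u ++ v) =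
    (N.prun s u).bind (fun s' => N.prun s' v) := by
  simp only [prun, List.foldlM_append]; rfl

lemma prun_inr (k : Fin m) (w) : N.prun (Sum.inr k) w =
    if w = [] then some (Sum.inr k) else none := by
  cases w with
  | nil => rfl
  | cons b w => simp [prun_cons, step']

/-- `u` makes the parser exit to inner automaton `k`. -/
def Exit (u : List Bool) (k : Fin m) : Prop :=
  N.prun (Sum.inl N.start) u = some (Sum.inr k)

lemma exit_prefix {u u' : List Bool} {k k' : Fin m} (h : N.Exit u k)
    (h' : N.Exit u' k') (hp : u <+: u') : u = u' ∧ k = k' := by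
  obtain ⟨d, rfl⟩ := hp
  unfold Exit at h h'
  rw [prun_append, h, Option.bind_some, prun_inr] at h'
  split at h'
  · subst ‹d = []›
    refine ⟨by simp, ?_⟩
    simpa using h'
  · exact absurd h' (by simp)

end Parser

/-- The glued automaton: run the parser; on exit `k`, run `M k`. -/
def glue {m : ℕ} (N : Parser m) (M : Fin m → PDFA Bool) : PDFA Bool where
  State := N.State ⊕ (Σ k : Fin m, (M k).State)
  finState := by
    haveI := N.finState
    haveI : ∀ k, Finite ((M k).State) := fun k => (M k).finState
    infer_instance
  start := Sum.inl N.start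
  accept := {s | ∃ k q, q ∈ (M k).accept ∧ s = Sum.inr ⟨k, q⟩}
  step := fun s b => match s with
    | Sum.inl q => (N.step q b).map (Sum.map id fun k => ⟨k, (M k).start⟩)
    | Sum.inr ⟨k, p⟩ => ((M k).step p b).map fun p' => Sum.inr ⟨k, p'⟩


lemma glue_run_inr (k : Fin m) (p : (M k).State) (w : List Bool) :
    (glue N M).run (Sum.inr ⟨k, p⟩) w = ((M k).run p w).map (fun p' => Sum.inr ⟨k, p'⟩) := by
  induction w generalizing p with
  | nil => rfl
  | cons b w ih =>
    show ((glue N M).step _ b).bind _ = _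
    rw [show (glue N M).step (Sum.inr ⟨k, p⟩) b
        = ((M k).step p b).map fun p' => Sum.inr ⟨k, p'⟩ from rfl]
    cases h : (M k).step p b with
    | none =>
      simp [PDFA.run, List.foldlM_cons, h]; rfl
    | some p' =>
      have : (M k).run p (b :: w) = ((M k).step p b).bind fun q => (M k).run q w := by
        simp only [PDFA.run, List.foldlM_cons]; rfl
      rw [this, h]
      exact ih p'




variable {m : ℕ} (N : Parser m) (M : Fin m → PDFA Bool)

lemma glue_run_cons (s b w) : (glue N M).run s (b :: w) =
    ((glue N M).step s b).bind (fun s' => (glue N M).run s' w) := by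
  simp only [PDFA.run, List.foldlM_cons]; rfl

lemma glue_step_inl (q : N.State) (b : Bool) : (glue N M).step (Sum.inl q) b =
    (N.step q b).map (Sum.map id fun k => (⟨k, (M k).start⟩ : Σ k, (M k).State)) := rfl

lemma glue_accept_inr (k : Fin m) (p : (M k).State) :
    (Sum.inr ⟨k, p⟩ : (glue N M).State) ∈ (glue N M).accept ↔ p ∈ (M k).accept := by
  constructor
  · rintro ⟨k', q', hq', heq⟩
    obtain ⟨h1, h2⟩ := Sigma.mk.inj_iff.1 (Sum.inr.inj heq)
    subst h1
    rwa [eq_of_heq h2]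
  · intro hp; exact ⟨k, p, hp, rfl⟩

lemma glue_run_inl (w : List Bool) (q : N.State) :
    (∃ s ∈ (glue N M).accept, (glue N M).run (Sum.inl q) w = some s) ↔
    ∃ u k v, w = u ++ v ∧ N.prun (Sum.inl q) u = some (Sum.inr k) ∧ v ∈ (M k).lang := by
  induction w generalizing q with
  | nil =>
    constructor
    · rintro ⟨s, hs, hrun⟩
      exfalso
      obtain ⟨k, p, _, rfl⟩ := hs
      have hr : (glue N M).run (Sum.inl q) [] = some (Sum.inl q) := rfl
      rw [hr] at hrun
      cases hrun
    · rintro ⟨u, k, v, huv, hex, _⟩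
      exfalso
      obtain ⟨rfl, rfl⟩ := List.append_eq_nil_iff.1 huv.symm
      rw [Parser.prun_nil] at hex
      simp at hex
  | cons b w ih =>
    erw [glue_run_cons, glue_step_inl]
    cases hstep : N.step q b with
    | none =>
      simp only [Option.map_none, Option.bind_none]
      constructor
      · rintro ⟨s, hs, h⟩; cases h
      · rintro ⟨u, k, v, huv, hex, _⟩
        exfalso
        cases u with
        | nil => rw [Parser.prun_nil] at hex; simp at hex
        | cons b' u' =>
          rw [List.cons_append] at huv
          obtain ⟨rfl, hw⟩ := List.cons_eq_cons.1 huv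
          rw [Parser.prun_cons] at hex
          have : N.step' (Sum.inl q) b = N.step q b := rfl
          rw [this, hstep] at hex
          simp at hex
    | some s0 =>
      cases s0 with
      | inl q' =>
        simp only [Option.map_some, Option.bind_some, Sum.map_inl, id]
        erw [Option.bind_some, ih q']
        constructor
        · rintro ⟨u, k, v, huv, hex, hv⟩
          refine ⟨b :: u, k, v, by simp [huv], ?_, hv⟩
          rw [Parser.prun_cons]
          have : N.step' (Sum.inl q) b = N.step q b := rfl
          rw [this, hstep, Option.bind_some]
          exact hex
        · rintro ⟨u, k, v, huv, hex, hv⟩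
          cases u with
          | nil => rw [Parser.prun_nil] at hex; simp at hex
          | cons b' u' =>
            rw [List.cons_append] at huv
            obtain ⟨rfl, hw⟩ := List.cons_eq_cons.1 huv
            rw [Parser.prun_cons] at hex
            have : N.step' (Sum.inl q) b = N.step q b := rfl
            rw [this, hstep, Option.bind_some] at hex
            exact ⟨u', k, v, hw, hex, hv⟩
      | inr k0 =>
        simp only [Option.map_some, Option.bind_some, Sum.map_inr]
        constructor
        · rintro ⟨s, hs, hrun⟩
          erw [Option.bind_some, glue_run_inr] at hrun
          obtain ⟨p', hp', rfl⟩ := Option.map_eq_some_iff.1 hrun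
          refine ⟨[b], k0, w, rfl, ?_, p', (glue_accept_inr N M k0 p').1 hs, hp'⟩
          rw [Parser.prun_cons]
          have : N.step' (Sum.inl q) b = N.step q b := rfl
          rw [this, hstep, Option.bind_some, Parser.prun_nil]
        · rintro ⟨u, k, v, huv, hex, p', hp', hrun⟩
          cases u with
          | nil => rw [Parser.prun_nil] at hex; simp at hex
          | cons b' u' =>
            rw [List.cons_append] at huv
            obtain ⟨rfl, hw⟩ := List.cons_eq_cons.1 huv
            rw [Parser.prun_cons] at hex
            have : N.step' (Sum.inl q) b = N.step q b := rfl
            rw [this, hstep, Option.bind_some, Parser.prun_inr] at hex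
            split at hex
            · subst hw
              obtain ⟨rfl⟩ : k0 = k := by simpa using hex
              subst ‹u' = []›
              refine ⟨Sum.inr ⟨k0, p'⟩, (glue_accept_inr N M k0 p').2 hp', ?_⟩
              erw [List.nil_append, Option.bind_some, glue_run_inr, hrun]
              rfl
            · simp at hex

lemma mem_glue_lang (w : List Bool) :
    w ∈ (glue N M).lang ↔ ∃ u k v, w = u ++ v ∧ N.Exit u k ∧ v ∈ (M k).lang :=
  glue_run_inl N M w N.start






theorem master {m : ℕ} (N : Parser m) (M : Fin m → PDFA Bool)
    {ι : Type} (s : ι → ι → Prop) (t : ι → Type) (tr : ∀ i, t i → t i → Prop)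
    (col : ι → Fin m) (c : ι → List Bool)
    (hc : ∀ u k, N.Exit u k ↔ ∃ i, col i = k ∧ c i = u)
    (hinj : Function.Injective c)
    (horder : ∀ i j, s i j ↔ inlt (c i) (c j))
    (e : ∀ i, tr i ≃r (fun x y : (M (col i)).lang => inlt x.1 y.1)) :
    Nonempty ((Sigma.Lex s tr) ≃r fun x y : (glue N M).lang => inlt x.1 y.1) := by
  have hexit : ∀ i, N.Exit (c i) (col i) := fun i => (hc _ _).2 ⟨i, rfl, rfl⟩
  have hincomp : ∀ i j, i ≠ j → ¬ c i <+: c j := by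
    intro i j hij hp
    exact hij (hinj ((N.exit_prefix (hexit i) (hexit j) hp).1))
  have hmem : ∀ (p : Σ i, t i), c p.1 ++ ((e p.1) p.2).1 ∈ (glue N M).lang := by
    intro ⟨i, x⟩
    exact (mem_glue_lang N M _).2 ⟨c i, col i, ((e i) x).1, rfl, hexit i, ((e i) x).2⟩
  set F : (Σ i, t i) → (glue N M).lang := fun p => ⟨c p.1 ++ ((e p.1) p.2).1, hmem p⟩ with hF
  have hFinj : Function.Injective F := by
    rintro ⟨i, x⟩ ⟨j, y⟩ hxy
    have heq : c i ++ ((e i) x).1 = c j ++ ((e j) y).1 := congrArg Subtype.val hxy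
    have hij : i = j := by
      by_contra hij
      rcases List.prefix_or_prefix_of_prefix (List.prefix_append (c i) ((e i) x).1)
        (heq ▸ List.prefix_append (c j) ((e j) y).1) with hp | hp
      · exact hincomp i j hij hp
      · exact hincomp j i (Ne.symm hij) hp
    subst hij
    have hxy2 : ((e i) x) = ((e i) y) := Subtype.ext (List.append_cancel_left heq)
    exact congrArg _ ((e i).toEquiv.injective hxy2)
  have hFsurj : Function.Surjective F := by
    rintro ⟨w, hw⟩
    obtain ⟨u, k, v, rfl, hex, hv⟩ := (mem_glue_lang N M w).1 hw
    obtain ⟨i, hcol, hcu⟩ := (hc u k).1 hex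
    subst hcol
    subst hcu
    refine ⟨⟨i, (e i).symm ⟨v, hv⟩⟩, ?_⟩
    apply Subtype.ext
    show c i ++ ((e i) ((e i).symm ⟨v, hv⟩)).1 = c i ++ v
    rw [RelIso.apply_symm_apply]
  refine ⟨RelIso.mk (Equiv.ofBijective F ⟨hFinj, hFsurj⟩) ?_⟩
  rintro ⟨i, x⟩ ⟨j, y⟩
  show inlt (c i ++ ((e i) x).1) (c j ++ ((e j) y).1) ↔ Sigma.Lex s tr ⟨i, x⟩ ⟨j, y⟩
  by_cases hij : i = j
  · subst hij
    rw [inlt_append_same, Sigma.lex_iff]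
    have h1 : ¬ s i i := fun h => inlt_irrefl _ ((horder i i).1 h)
    have h2 : inlt ((e i) x).1 ((e i) y).1 ↔ tr i x y := (e i).map_rel_iff
    constructor
    · intro h
      exact Or.inr ⟨rfl, h2.1 h⟩
    · rintro (h | ⟨h', hs⟩)
      · exact absurd h h1
      · exact h2.2 hs
  · rw [inlt_append_of_incomp (hincomp i j hij) (hincomp j i (Ne.symm hij)), Sigma.lex_iff]
    rw [← horder]
    constructor
    · exact Or.inl
    · rintro (h | ⟨h, _⟩)
      · exact h
      · exact absurd h hij




/-- maximal element w.r.t. an (irreflexive, transitive) relation among members of a list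
satisfying `P`. -/
lemma exists_rel_max {α β : Type} (lt : β → β → Prop)
    (htrans : ∀ {x y z}, lt x y → lt y z → lt x z)
    (hirr : ∀ x, ¬ lt x x)
    (f : α → β) (P : α → Prop) :
    ∀ l : List α, (∃ p ∈ l, P p) →
      ∃ p0 ∈ l, P p0 ∧ ∀ p ∈ l, P p → ¬ lt (f p0) (f p) := by
  intro l
  induction l with
  | nil => rintro ⟨p, hp, _⟩; simp at hp
  | cons a l ih =>
    intro h
    by_cases hl : ∃ p ∈ l, P p
    · obtain ⟨p0, hp0l, hp0P, hp0max⟩ := ih hl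
      by_cases hcmp : lt (f p0) (f a)
      · by_cases hPa : P a
        · refine ⟨a, by simp, hPa, ?_⟩
          rintro p hp hPp
          rcases List.mem_cons.1 hp with rfl | hp
          · exact hirr _
          · intro hlt
            exact hp0max p hp hPp (htrans hcmp hlt)
        · refine ⟨p0, by simp [hp0l], hp0P, ?_⟩
          rintro p hp hPp
          rcases List.mem_cons.1 hp with rfl | hp
          · exact absurd hPp hPa
          · exact hp0max p hp hPp
      · refine ⟨p0, by simp [hp0l], hp0P, ?_⟩
        rintro p hp hPp
        rcases List.mem_cons.1 hp with rfl | hp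
        · exact hcmp
        · exact hp0max p hp hPp
    · obtain ⟨p, hp, hPp⟩ := h
      rcases List.mem_cons.1 hp with rfl | hp
      · refine ⟨p, by simp, hPp, ?_⟩
        rintro q hq hPq
        rcases List.mem_cons.1 hq with rfl | hq
        · exact hirr _
        · exact absurd ⟨q, hq, hPq⟩ hl
      · exact absurd ⟨p, hp, hPp⟩ hl

theorem colored_bf {m : ℕ} {Y : Type} [Countable Y] [Nonempty Y]
    (ltY : Y → Y → Prop) (colY : Y → Fin m) (χ : ℚ → Fin m)
    (htri : ∀ a b, ltY a b ∨ a = b ∨ ltY b a)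
    (htrans : ∀ {a b c}, ltY a b → ltY b c → ltY a c)
    (hirr : ∀ a, ¬ ltY a a)
    (hbet : ∀ i a b, ltY a b → ∃ z, ltY a z ∧ ltY z b ∧ colY z = i)
    (hup : ∀ i a, ∃ z, ltY a z ∧ colY z = i)
    (hdn : ∀ i a, ∃ z, ltY z a ∧ colY z = i)
    (hχ : ∀ i, ∀ a b : ℚ, a < b → ∃ q, a < q ∧ q < b ∧ χ q = i) :
    ∃ e : ℚ ≃ Y, (∀ a b : ℚ, a < b ↔ ltY (e a) (e b)) ∧ ∀ q, colY (e q) = χ q := by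
  classical
  obtain ⟨fQ, hfQ⟩ := exists_surjective_nat ℚ
  obtain ⟨fY, hfY⟩ := exists_surjective_nat Y
  set Good : List (ℚ × Y) → Prop := fun l =>
    (∀ p ∈ l, χ p.1 = colY p.2) ∧ ∀ p ∈ l, ∀ q ∈ l, (p.1 < q.1 ↔ ltY p.2 q.2) with hGood
  have hgeq : ∀ l, Good l → ∀ p ∈ l, ∀ q ∈ l, p.1 = q.1 → p.2 = q.2 := by
    intro l hG p hp q hq hpq
    rcases htri p.2 q.2 with h | h | h
    · exact absurd ((hG.2 p hp q hq).2 h) (by rw [hpq]; exact lt_irrefl _)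
    · exact h
    · exact absurd ((hG.2 q hq p hp).2 h) (by rw [hpq]; exact lt_irrefl _)
  have hgeq' : ∀ l, Good l → ∀ p ∈ l, ∀ q ∈ l, p.2 = q.2 → p.1 = q.1 := by
    intro l hG p hp q hq hpq
    rcases lt_trichotomy p.1 q.1 with h | h | h
    · exact absurd ((hG.2 p hp q hq).1 h) (by rw [hpq]; exact hirr _)
    · exact h
    · exact absurd ((hG.2 q hq p hp).1 h) (by rw [hpq]; exact hirr _)
  -- extension on the ℚ side
  have extL : ∀ l, Good l → ∀ a : ℚ, ∃ y, Good ((a, y) :: l) := by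
    intro l hG a
    by_cases hex : ∃ p ∈ l, p.1 = a
    · obtain ⟨p, hp, hpa⟩ := hex
      refine ⟨p.2, ?_, ?_⟩
      · rintro q hq
        rcases List.mem_cons.1 hq with rfl | hq
        · show χ a = colY p.2
          rw [← hpa]; exact hG.1 p hp
        · exact hG.1 q hq
      · rintro q hq q' hq'
        rcases List.mem_cons.1 hq with rfl | hq <;> rcases List.mem_cons.1 hq' with rfl | hq'
        · simp [hirr]
        · show a < q'.1 ↔ ltY p.2 q'.2
          rw [← hpa]; exact hG.2 p hp q' hq'
        · show q.1 < a ↔ ltY q.2 p.2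
          rw [← hpa]; exact hG.2 q hq p hp
        · exact hG.2 q hq q' hq'
    · -- find y correctly positioned, of color χ a
      have key : ∃ y, colY y = χ a ∧ (∀ p ∈ l, p.1 < a → ltY p.2 y) ∧
          (∀ p ∈ l, a < p.1 → ltY y p.2) := by
        by_cases hb : ∃ p ∈ l, p.1 < a <;> by_cases ha : ∃ p ∈ l, a < p.1
        · obtain ⟨p0, hp0l, hp0P, hp0max⟩ := exists_rel_max ltY htrans hirr
            (Prod.snd) (fun p => p.1 < a) l hb
          obtain ⟨q0, hq0l, hq0P, hq0min⟩ := exists_rel_max (fun x y => ltY y x)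
            (fun h1 h2 => htrans h2 h1) hirr (Prod.snd) (fun p => a < p.1) l ha
          have hlt : ltY p0.2 q0.2 := (hG.2 p0 hp0l q0 hq0l).1 (lt_trans hp0P hq0P)
          obtain ⟨z, hz1, hz2, hz3⟩ := hbet (χ a) _ _ hlt
          refine ⟨z, hz3, ?_, ?_⟩
          · intro p hp hpa
            rcases htri p.2 p0.2 with h | h | h
            · exact htrans h hz1
            · rw [h]; exact hz1
            · exact absurd h (hp0max p hp hpa)
          · intro p hp hpa
            rcases htri q0.2 p.2 with h | h | h
            · exact htrans hz2 h
            · rw [← h]; exact hz2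
            · exact absurd h (hq0min p hp hpa)
        · obtain ⟨p0, hp0l, hp0P, hp0max⟩ := exists_rel_max ltY htrans hirr
            (Prod.snd) (fun p => p.1 < a) l hb
          obtain ⟨z, hz1, hz3⟩ := hup (χ a) p0.2
          refine ⟨z, hz3, ?_, fun p hp hpa => absurd ⟨p, hp, hpa⟩ ha⟩
          intro p hp hpa
          rcases htri p.2 p0.2 with h | h | h
          · exact htrans h hz1
          · rw [h]; exact hz1
          · exact absurd h (hp0max p hp hpa)
        · obtain ⟨q0, hq0l, hq0P, hq0min⟩ := exists_rel_max (fun x y => ltY y x)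
            (fun h1 h2 => htrans h2 h1) hirr (Prod.snd) (fun p => a < p.1) l ha
          obtain ⟨z, hz2, hz3⟩ := hdn (χ a) q0.2
          refine ⟨z, hz3, fun p hp hpa => absurd ⟨p, hp, hpa⟩ hb, ?_⟩
          intro p hp hpa
          rcases htri q0.2 p.2 with h | h | h
          · exact htrans hz2 h
          · rw [← h]; exact hz2
          · exact absurd h (hq0min p hp hpa)
        · obtain ⟨z, _, hz3⟩ := hup (χ a) Classical.ofNonempty
          exact ⟨z, hz3, fun p hp hpa => absurd ⟨p, hp, hpa⟩ hb,
            fun p hp hpa => absurd ⟨p, hp, hpa⟩ ha⟩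
      obtain ⟨y, hycol, hy1, hy2⟩ := key
      have hyiff : ∀ p ∈ l, (p.1 < a ↔ ltY p.2 y) ∧ (a < p.1 ↔ ltY y p.2) := by
        intro p hp
        constructor
        · constructor
          · exact hy1 p hp
          · intro h
            rcases lt_trichotomy p.1 a with h' | h' | h'
            · exact h'
            · exact absurd ⟨p, hp, h'⟩ hex
            · exact absurd (htrans (hy2 p hp h') h) (hirr _)
        · constructor
          · exact hy2 p hp
          · intro h
            rcases lt_trichotomy a p.1 with h' | h' | h'
            · exact h'
            · exact absurd ⟨p, hp, h'.symm⟩ hex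
            · exact absurd (htrans (hy1 p hp h') h) (hirr _)
      refine ⟨y, ?_, ?_⟩
      · rintro q hq
        rcases List.mem_cons.1 hq with rfl | hq
        · exact hycol.symm
        · exact hG.1 q hq
      · rintro q hq q' hq'
        rcases List.mem_cons.1 hq with rfl | hq <;> rcases List.mem_cons.1 hq' with rfl | hq'
        · simp [hirr]
        · exact (hyiff q' hq').2
        · exact (hyiff q hq).1
        · exact hG.2 q hq q' hq'
  -- extension on the Y side
  have extR : ∀ l, Good l → ∀ y : Y, ∃ a, Good ((a, y) :: l) := by
    intro l hG y
    by_cases hex : ∃ p ∈ l, p.2 = y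
    · obtain ⟨p, hp, hpy⟩ := hex
      refine ⟨p.1, ?_, ?_⟩
      · rintro q hq
        rcases List.mem_cons.1 hq with rfl | hq
        · show χ p.1 = colY y
          rw [← hpy]; exact hG.1 p hp
        · exact hG.1 q hq
      · rintro q hq q' hq'
        rcases List.mem_cons.1 hq with rfl | hq <;> rcases List.mem_cons.1 hq' with rfl | hq'
        · simp [hirr]
        · show p.1 < q'.1 ↔ ltY y q'.2
          rw [← hpy]; exact hG.2 p hp q' hq'
        · show q.1 < p.1 ↔ ltY q.2 y
          rw [← hpy]; exact hG.2 q hq p hp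
        · exact hG.2 q hq q' hq'
    · have key : ∃ a, χ a = colY y ∧ (∀ p ∈ l, ltY p.2 y → p.1 < a) ∧
          (∀ p ∈ l, ltY y p.2 → a < p.1) := by
        by_cases hb : ∃ p ∈ l, ltY p.2 y <;> by_cases ha : ∃ p ∈ l, ltY y p.2
        · obtain ⟨p0, hp0l, hp0P, hp0max⟩ := exists_rel_max (· < ·)
            (fun h1 h2 => lt_trans h1 h2) (fun x => lt_irrefl x)
            (Prod.fst) (fun p => ltY p.2 y) l hb
          obtain ⟨q0, hq0l, hq0P, hq0min⟩ := exists_rel_max (fun x y : ℚ => y < x)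
            (fun h1 h2 => lt_trans h2 h1) (fun x => lt_irrefl x)
            (Prod.fst) (fun p => ltY y p.2) l ha
          have hlt : p0.1 < q0.1 := (hG.2 p0 hp0l q0 hq0l).2 (htrans hp0P hq0P)
          obtain ⟨z, hz1, hz2, hz3⟩ := hχ (colY y) _ _ hlt
          refine ⟨z, hz3, ?_, ?_⟩
          · intro p hp hpy
            rcases lt_trichotomy p.1 p0.1 with h | h | h
            · exact lt_trans h hz1
            · rw [h]; exact hz1
            · exact absurd h (hp0max p hp hpy)
          · intro p hp hpy
            rcases lt_trichotomy q0.1 p.1 with h | h | h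
            · exact lt_trans hz2 h
            · rw [← h]; exact hz2
            · exact absurd h (hq0min p hp hpy)
        · obtain ⟨p0, hp0l, hp0P, hp0max⟩ := exists_rel_max (· < ·)
            (fun h1 h2 => lt_trans h1 h2) (fun x => lt_irrefl x)
            (Prod.fst) (fun p => ltY p.2 y) l hb
          obtain ⟨z, hz1, _, hz3⟩ := hχ (colY y) p0.1 (p0.1 + 1) (by linarith)
          refine ⟨z, hz3, ?_, fun p hp hpy => absurd ⟨p, hp, hpy⟩ ha⟩
          intro p hp hpy
          rcases lt_trichotomy p.1 p0.1 with h | h | h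
          · exact lt_trans h hz1
          · rw [h]; exact hz1
          · exact absurd h (hp0max p hp hpy)
        · obtain ⟨q0, hq0l, hq0P, hq0min⟩ := exists_rel_max (fun x y : ℚ => y < x)
            (fun h1 h2 => lt_trans h2 h1) (fun x => lt_irrefl x)
            (Prod.fst) (fun p => ltY y p.2) l ha
          obtain ⟨z, _, hz2, hz3⟩ := hχ (colY y) (q0.1 - 1) q0.1 (by linarith)
          refine ⟨z, hz3, fun p hp hpy => absurd ⟨p, hp, hpy⟩ hb, ?_⟩
          intro p hp hpy
          rcases lt_trichotomy q0.1 p.1 with h | h | h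
          · exact lt_trans hz2 h
          · rw [← h]; exact hz2
          · exact absurd h (hq0min p hp hpy)
        · obtain ⟨z, _, _, hz3⟩ := hχ (colY y) 0 1 (by norm_num)
          exact ⟨z, hz3, fun p hp hpy => absurd ⟨p, hp, hpy⟩ hb,
            fun p hp hpy => absurd ⟨p, hp, hpy⟩ ha⟩
      obtain ⟨a, hacol, ha1, ha2⟩ := key
      have haiff : ∀ p ∈ l, (p.1 < a ↔ ltY p.2 y) ∧ (a < p.1 ↔ ltY y p.2) := by
        intro p hp
        constructor
        · constructor
          · intro h
            rcases htri p.2 y with h' | h' | h'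
            · exact h'
            · exact absurd ⟨p, hp, h'⟩ hex
            · exact absurd (lt_trans (ha2 p hp h') h) (lt_irrefl _)
          · exact ha1 p hp
        · constructor
          · intro h
            rcases htri y p.2 with h' | h' | h'
            · exact h'
            · exact absurd ⟨p, hp, h'.symm⟩ hex
            · exact absurd (lt_trans (ha1 p hp h') h) (lt_irrefl _)
          · exact ha2 p hp
      refine ⟨a, ?_, ?_⟩
      · rintro q hq
        rcases List.mem_cons.1 hq with rfl | hq
        · exact hacol
        · exact hG.1 q hq
      · rintro q hq q' hq'
        rcases List.mem_cons.1 hq with rfl | hq <;> rcases List.mem_cons.1 hq' with rfl | hq'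
        · simp [hirr]
        · exact (haiff q' hq').2
        · exact (haiff q hq).1
        · exact hG.2 q hq q' hq'
  -- the chain
  have step : ∀ (k : ℕ) (l : List (ℚ × Y)), Good l → ∃ l', Good l' ∧ (∀ p ∈ l, p ∈ l') ∧
      (∃ y, (fQ k, y) ∈ l') ∧ (∃ a, (a, fY k) ∈ l') := by
    intro k l hl
    obtain ⟨y, hy⟩ := extL l hl (fQ k)
    obtain ⟨a, ha⟩ := extR _ hy (fY k)
    exact ⟨(a, fY k) :: (fQ k, y) :: l, ha, fun p hp => by simp [hp],
      ⟨y, by simp⟩, ⟨a, by simp⟩⟩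
  choose nxt hnxtG hnxtM hnxtQ hnxtY using step
  have goodnil : Good [] := ⟨by simp, by simp⟩
  set g : ℕ → {l : List (ℚ × Y) // Good l} := fun n =>
    Nat.rec ⟨[], goodnil⟩ (fun k ih => ⟨nxt k ih.1 ih.2, hnxtG k ih.1 ih.2⟩) n with hg
  have hgsucc : ∀ k, (g (k + 1)).1 = nxt k (g k).1 (g k).2 := fun k => rfl
  have mono : ∀ k k', k ≤ k' → ∀ p ∈ (g k).1, p ∈ (g k').1 := by
    intro k k' hkk'
    induction hkk' with
    | refl => exact fun p hp => hp
    | @step k'' h ih =>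
      intro p hp
      rw [hgsucc k'']
      exact hnxtM _ _ _ p (ih p hp)
  set R : ℚ → Y → Prop := fun a y => ∃ k, (a, y) ∈ (g k).1 with hR
  have compat : ∀ a y b z, R a y → R b z → (a < b ↔ ltY y z) := by
    rintro a y b z ⟨k1, h1⟩ ⟨k2, h2⟩
    have h1' := mono k1 (max k1 k2) (le_max_left _ _) _ h1
    have h2' := mono k2 (max k1 k2) (le_max_right _ _) _ h2
    exact (g (max k1 k2)).2.2 (a, y) h1' (b, z) h2'
  have colo : ∀ a y, R a y → χ a = colY y := by
    rintro a y ⟨k, h⟩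
    exact (g k).2.1 (a, y) h
  have func : ∀ a y y', R a y → R a y' → y = y' := by
    rintro a y y' ⟨k1, h1⟩ ⟨k2, h2⟩
    have h1' := mono k1 (max k1 k2) (le_max_left _ _) _ h1
    have h2' := mono k2 (max k1 k2) (le_max_right _ _) _ h2
    exact hgeq _ (g (max k1 k2)).2 (a, y) h1' (a, y') h2' rfl
  have total : ∀ a : ℚ, ∃ y, R a y := by
    intro a
    obtain ⟨k, rfl⟩ := hfQ a
    obtain ⟨y, hy⟩ := hnxtQ k (g k).1 (g k).2
    exact ⟨y, k + 1, by rw [hgsucc]; exact hy⟩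
  have surjR : ∀ y : Y, ∃ a, R a y := by
    intro y
    obtain ⟨k, rfl⟩ := hfY y
    obtain ⟨a, ha⟩ := hnxtY k (g k).1 (g k).2
    exact ⟨a, k + 1, by rw [hgsucc]; exact ha⟩
  choose F hF using total
  have hord : ∀ a b : ℚ, a < b ↔ ltY (F a) (F b) := fun a b =>
    compat a (F a) b (F b) (hF a) (hF b)
  have hbij : Function.Bijective F := by
    constructor
    · intro a b hab
      rcases lt_trichotomy a b with h | h | h
      · exact absurd (hab ▸ (hord a b).1 h) (hirr _)
      · exact h
      · exact absurd (hab ▸ (hord b a).1 h) (hirr _)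
    · intro y
      obtain ⟨a, ha⟩ := surjR y
      exact ⟨a, func a (F a) y (hF a) ha⟩
  exact ⟨Equiv.ofBijective F hbij, hord, fun q => (colo q (F q) (hF q)).symm⟩



/-! ### Blocks `1^v 0` and `0^v 1` -/

def block (v : ℕ) : List Bool := List.replicate v true ++ [false]

lemma block_succ (v : ℕ) : block (v + 1) = true :: block v := by
  simp [block, List.replicate_succ]

lemma block_zero : block 0 = [false] := rfl

lemma block_lt_iff {v w : ℕ} (hvw : v ≠ w) (u z : List Bool) :
    inlt (block v ++ u) (block w ++ z) ↔ v < w := by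
  induction v generalizing w with
  | zero =>
    cases w with
    | zero => exact absurd rfl hvw
    | succ w =>
      rw [block_zero, block_succ]
      simp only [List.cons_append]
      constructor
      · intro _; omega
      · intro _; left; exact ⟨by trivial, by trivial⟩
  | succ v ih =>
    cases w with
    | zero =>
      rw [block_zero, block_succ]
      simp only [List.cons_append]
      constructor
      · rintro (⟨h1, h2⟩ | ⟨h1, h2⟩) <;> simp at h1
      · omega
    | succ w =>
      rw [block_succ, block_succ]
      simp only [List.cons_append]
      have : v ≠ w := by omega
      constructor
      · rintro (⟨h1, _⟩ | ⟨_, h2⟩)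
        · simp at h1
        · have := (ih this).1 h2; omega
      · intro h
        right
        exact ⟨by trivial, (ih this).2 (by omega)⟩

lemma block_order (v w : ℕ) : inlt (block v) (block w) ↔ v < w := by
  by_cases hvw : v = w
  · subst hvw
    simp [inlt_irrefl]
  · have := block_lt_iff hvw [] []
    simpa using this

lemma block_cancel {v w : ℕ} {u z : List Bool} (h : block v ++ u = block w ++ z) :
    v = w ∧ u = z := by
  induction v generalizing w with
  | zero =>
    cases w with
    | zero => simpa [block_zero] using h
    | succ w => rw [block_zero, block_succ] at h; simp at h
  | succ v ih =>
    cases w with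
    | zero => rw [block_zero, block_succ] at h; simp at h
    | succ w =>
      rw [block_succ, block_succ] at h
      simp only [List.cons_append, List.cons.injEq, true_and] at h
      obtain ⟨h1, h2⟩ := ih h
      exact ⟨by omega, h2⟩

def coblock (v : ℕ) : List Bool := List.replicate v false ++ [true]

lemma coblock_succ (v : ℕ) : coblock (v + 1) = false :: coblock v := by
  simp [coblock, List.replicate_succ]

lemma coblock_zero : coblock 0 = [true] := rfl

lemma coblock_order (v w : ℕ) : inlt (coblock v) (coblock w) ↔ w < v := by
  induction v generalizing w with
  | zero =>
    cases w with
    | zero => simp [coblock_zero, inlt, Nat.lt_irrefl]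
    | succ w =>
      rw [coblock_zero, coblock_succ]
      simp only [inlt]
      constructor
      · rintro (⟨h1, _⟩ | ⟨h1, _⟩) <;> simp at h1
      · omega
  | succ v ih =>
    cases w with
    | zero =>
      rw [coblock_zero, coblock_succ]
      simp only [inlt]
      constructor
      · intro _; omega
      · intro _; left; exact ⟨by trivial, by trivial⟩
    | succ w =>
      rw [coblock_succ, coblock_succ]
      simp only [inlt]
      rw [ih]
      constructor
      · rintro (⟨_, h2⟩ | ⟨_, h2⟩)
        · simp at h2
        · omega
      · intro h; right; exact ⟨by trivial, by omega⟩

/-! ### The parsers for the simple cases -/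

/-- Parser for binary sums: exits to `0` on `0`, to `1` on `1`. -/
def sumParser : Parser 2 where
  State := Unit
  finState := inferInstance
  start := ()
  step := fun _ b => some (Sum.inr (if b then 1 else 0))

lemma sumParser_exit (u : List Bool) (k : Fin 2) :
    sumParser.Exit u k ↔ (u = [false] ∧ k = 0) ∨ (u = [true] ∧ k = 1) := by
  unfold Parser.Exit
  cases u with
  | nil =>
    rw [Parser.prun_nil]
    simp
  | cons b u =>
    rw [Parser.prun_cons]
    have : sumParser.step' (Sum.inl sumParser.start) b
        = some (Sum.inr (if b then 1 else 0)) := rfl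
    rw [this, Option.bind_some, Parser.prun_inr]
    cases u with
    | nil =>
      simp only [if_pos rfl]
      cases b <;> simp [eq_comm]
    | cons b' u' => simp

/-- Parser for `· ω`: loops on `1`, exits on `0`; exit words are `1^n 0`. -/
def omegaParser : Parser 1 where
  State := Unit
  finState := inferInstance
  start := ()
  step := fun _ b => if b then some (Sum.inl ()) else some (Sum.inr 0)

lemma omegaParser_exit (u : List Bool) (k : Fin 1) :
    omegaParser.Exit u k ↔ ∃ n, u = block n := by
  unfold Parser.Exit
  have hstart : omegaParser.start = () := rfl
  rw [hstart]
  induction u with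
  | nil =>
    rw [Parser.prun_nil]
    constructor
    · intro h; simp at h
    · rintro ⟨n, hn⟩
      exfalso
      cases n <;> simp [block_zero, block_succ] at hn
  | cons b u ih =>
    rw [Parser.prun_cons]
    cases b
    · have : omegaParser.step' (Sum.inl ()) false = some (Sum.inr 0) := rfl
      rw [this, Option.bind_some, Parser.prun_inr]
      constructor
      · intro h
        split at h
        · subst ‹u = []›; exact ⟨0, rfl⟩
        · simp at h
      · rintro ⟨n, hn⟩
        cases n with
        | zero =>
          obtain rfl : u = [] := by simpa [block_zero] using hn
          simp [Fin.ext_iff]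
        | succ n => rw [block_succ] at hn; simp at hn
    · have : omegaParser.step' (Sum.inl ()) true = some (Sum.inl ()) := rfl
      erw [this, Option.bind_some]
      constructor
      · intro h
        obtain ⟨n, rfl⟩ := ih.1 h
        exact ⟨n + 1, by rw [block_succ]⟩
      · rintro ⟨n, hn⟩
        cases n with
        | zero => rw [block_zero] at hn; simp at hn
        | succ n =>
          rw [block_succ] at hn
          have hu : u = block n := by simpa using hn
          exact ih.2 ⟨n, hu⟩

/-- Parser for `· ω*`: loops on `0`, exits on `1`; exit words are `0^n 1`. -/
def omegaStarParser : Parser 1 where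
  State := Unit
  finState := inferInstance
  start := ()
  step := fun _ b => if b then some (Sum.inr 0) else some (Sum.inl ())

lemma omegaStarParser_exit (u : List Bool) (k : Fin 1) :
    omegaStarParser.Exit u k ↔ ∃ n, u = coblock n := by
  unfold Parser.Exit
  have hstart : omegaStarParser.start = () := rfl
  rw [hstart]
  induction u with
  | nil =>
    rw [Parser.prun_nil]
    constructor
    · intro h; simp at h
    · rintro ⟨n, hn⟩
      exfalso
      cases n <;> simp [coblock_zero, coblock_succ] at hn
  | cons b u ih =>
    rw [Parser.prun_cons]
    cases b
    · have : omegaStarParser.step' (Sum.inl ()) false = some (Sum.inl ()) := rfl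
      erw [this, Option.bind_some]
      constructor
      · intro h
        obtain ⟨n, rfl⟩ := ih.1 h
        exact ⟨n + 1, by rw [coblock_succ]⟩
      · rintro ⟨n, hn⟩
        cases n with
        | zero => rw [coblock_zero] at hn; simp at hn
        | succ n =>
          rw [coblock_succ] at hn
          have hu : u = coblock n := by simpa using hn
          exact ih.2 ⟨n, hu⟩
    · have : omegaStarParser.step' (Sum.inl ()) true = some (Sum.inr 0) := rfl
      rw [this, Option.bind_some, Parser.prun_inr]
      constructor
      · intro h
        split at h
        · subst ‹u = []›; exact ⟨0, rfl⟩
        · simp at h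
      · rintro ⟨n, hn⟩
        cases n with
        | zero =>
          obtain rfl : u = [] := by simpa [coblock_zero] using hn
          simp [Fin.ext_iff]
        | succ n => rw [coblock_succ] at hn; simp at hn

/-! ### Machinery for the shuffle case -/

section Shuffle

variable {n : ℕ}

/-- value of a letter: left letters `(i, false)` get `i`, right letters `(i, true)`
get `n+1+i`; the end marker (implicit) has value `n`. -/
def val (n : ℕ) (a : Fin n × Bool) : ℕ := if a.2 then n + 1 + a.1.1 else a.1.1

lemma val_le (a : Fin n × Bool) : val n a ≤ 2 * n := by
  rcases a with ⟨⟨i, hi⟩, d⟩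
  cases d <;> simp [val] <;> omega

lemma val_ne (a : Fin n × Bool) : val n a ≠ n := by
  rcases a with ⟨⟨i, hi⟩, d⟩
  cases d <;> simp [val] <;> omega

lemma val_inj {a b : Fin n × Bool} (h : val n a = val n b) : a = b := by
  rcases a with ⟨⟨i, hi⟩, d⟩
  rcases b with ⟨⟨j, hj⟩, d'⟩
  cases d <;> cases d' <;> simp [val] at h
  · have : i = j := by omega
    subst this; rfl
  · exact absurd h (by omega)
  · exact absurd h (by omega)
  · have : i = j := by omega
    subst this; rfl

/-- the binary codeword of a sequence of letters. -/
def wordOf (s : List (Fin n × Bool)) : List Bool :=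
  (s.map (fun a => block (val n a))).flatten ++ block n

lemma wordOf_nil : wordOf ([] : List (Fin n × Bool)) = block n := by
  simp [wordOf]

lemma wordOf_cons (a : Fin n × Bool) (s : List (Fin n × Bool)) :
    wordOf (a :: s) = block (val n a) ++ wordOf s := by
  simp [wordOf, List.flatten_cons]

lemma wordOf_inj : Function.Injective (wordOf (n := n)) := by
  intro s t h
  induction s generalizing t with
  | nil =>
    cases t with
    | nil => rfl
    | cons b t =>
      rw [wordOf_nil, wordOf_cons] at h
      have h' : block n ++ [] = block (val n b) ++ wordOf t := by simpa using h
      exact absurd (block_cancel h').1.symm (val_ne b)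
  | cons a s ih =>
    cases t with
    | nil =>
      rw [wordOf_nil, wordOf_cons] at h
      have h' : block (val n a) ++ wordOf s = block n ++ [] := by simpa using h
      exact absurd (block_cancel h').1 (val_ne a)
    | cons b t =>
      rw [wordOf_cons, wordOf_cons] at h
      obtain ⟨h1, h2⟩ := block_cancel h
      rw [val_inj h1, ih h2]

lemma wordOf_append_cons (s u : List (Fin n × Bool)) (a : Fin n × Bool) :
    wordOf (s ++ a :: u) =
      (s.map (fun x => block (val n x))).flatten ++ (block (val n a) ++ wordOf u) := by
  simp [wordOf, List.flatten_append, List.flatten_cons, List.append_assoc]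

lemma wordOf_eq_flat (s : List (Fin n × Bool)) :
    wordOf s = (s.map (fun x => block (val n x))).flatten ++ (block n ++ []) := by
  simp [wordOf]

lemma W1a (s u : List (Fin n × Bool)) (a : Fin n × Bool) :
    inlt (wordOf s) (wordOf (s ++ a :: u)) ↔ n < val n a := by
  rw [wordOf_append_cons, wordOf_eq_flat, inlt_append_same,
    block_lt_iff (fun h => val_ne a h.symm)]

lemma W1b (s u : List (Fin n × Bool)) (a : Fin n × Bool) :
    inlt (wordOf (s ++ a :: u)) (wordOf s) ↔ val n a < n := by
  rw [wordOf_append_cons, wordOf_eq_flat s, inlt_append_same, block_lt_iff (val_ne a)]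

lemma W2 (p s' t' : List (Fin n × Bool)) (a b : Fin n × Bool) (hab : val n a ≠ val n b) :
    inlt (wordOf (p ++ a :: s')) (wordOf (p ++ b :: t')) ↔ val n a < val n b := by
  rw [wordOf_append_cons, wordOf_append_cons, inlt_append_same, block_lt_iff hab]

/-- Generic prefix trichotomy for lists. -/
lemma list_tricho {α : Type} : ∀ s t : List α,
    s <+: t ∨ t <+: s ∨ ∃ p a s' b t', a ≠ b ∧ s = p ++ a :: s' ∧ t = p ++ b :: t' := by
  intro s
  induction s with
  | nil => intro t; exact Or.inl (List.nil_prefix)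
  | cons a s ih =>
    intro t
    cases t with
    | nil => exact Or.inr (Or.inl (List.nil_prefix))
    | cons b t =>
      by_cases hab : a = b
      · subst hab
        rcases ih t with h | h | ⟨p, x, s', y, t', hxy, hs, ht⟩
        · exact Or.inl (List.cons_prefix_cons.2 ⟨rfl, h⟩)
        · exact Or.inr (Or.inl (List.cons_prefix_cons.2 ⟨rfl, h⟩))
        · exact Or.inr (Or.inr ⟨a :: p, x, s', y, t', hxy, by simp [hs], by simp [ht]⟩)
      · exact Or.inr (Or.inr ⟨[], a, s, b, t, hab, rfl, rfl⟩)

variable (n) in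
/-- positions: nonempty sequences of letters. -/
def Pos (n : ℕ) : Type := {s : List (Fin n × Bool) // s ≠ []}

instance : Countable (Pos n) := by unfold Pos; infer_instance

/-- order on positions. -/
def plt (p q : Pos n) : Prop := inlt (wordOf p.1) (wordOf q.1)

/-- color of a position: the color of its last letter. -/
def colP (hn : 1 ≤ n) (p : Pos n) : Fin n :=
  ((p.1.getLast?).map Prod.fst).getD ⟨0, hn⟩

lemma colP_concat (hn : 1 ≤ n) (s : List (Fin n × Bool)) (a : Fin n × Bool)
    (h : s ++ [a] ≠ []) : colP hn ⟨s ++ [a], h⟩ = a.1 := by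
  simp [colP, List.getLast?_concat]

lemma plt_tri (p q : Pos n) : plt p q ∨ p = q ∨ plt q p := by
  rcases inlt_trichotomy (wordOf p.1) (wordOf q.1) with h | h | h
  · exact Or.inl h
  · exact Or.inr (Or.inl (Subtype.ext (wordOf_inj h)))
  · exact Or.inr (Or.inr h)

lemma plt_up (hn : 1 ≤ n) (i : Fin n) (p : Pos n) :
    ∃ z : Pos n, plt p z ∧ colP hn z = i := by
  refine ⟨⟨p.1 ++ [(i, true)], by simp⟩, ?_, colP_concat hn _ _ _⟩
  show inlt (wordOf p.1) (wordOf (p.1 ++ (i, true) :: []))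
  rw [W1a]
  simp [val]
  omega

lemma plt_dn (hn : 1 ≤ n) (i : Fin n) (p : Pos n) :
    ∃ z : Pos n, plt z p ∧ colP hn z = i := by
  refine ⟨⟨p.1 ++ [(i, false)], by simp⟩, ?_, colP_concat hn _ _ _⟩
  show inlt (wordOf (p.1 ++ (i, false) :: [])) (wordOf p.1)
  rw [W1b]
  simpa [val] using i.2

lemma plt_bet (hn : 1 ≤ n) (i : Fin n) (p q : Pos n) (hpq : plt p q) :
    ∃ z : Pos n, plt p z ∧ plt z q ∧ colP hn z = i := by
  have hpq' : inlt (wordOf p.1) (wordOf q.1) := hpq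
  rcases list_tricho p.1 q.1 with hp | hq | ⟨p0, a, s', b, t', hab, hs, ht⟩
  · obtain ⟨d, hd⟩ := hp
    cases d with
    | nil =>
      exfalso
      have h' : p.1 = q.1 := by simpa using hd
      rw [← h'] at hpq'
      exact inlt_irrefl _ hpq'
    | cons a u =>
      have hna : n < val n a := by
        rw [← hd] at hpq'
        exact (W1a p.1 u a).1 hpq'
      refine ⟨⟨q.1 ++ [(i, false)], by simp⟩, ?_, ?_, colP_concat hn _ _ _⟩
      · show inlt (wordOf p.1) (wordOf (q.1 ++ [(i, false)]))
        have : q.1 ++ [(i, false)] = p.1 ++ a :: (u ++ [(i, false)]) := by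
          rw [← hd]; simp
        rw [this, W1a]
        exact hna
      · show inlt (wordOf (q.1 ++ (i, false) :: [])) (wordOf q.1)
        rw [W1b]
        simpa [val] using i.2
  · obtain ⟨d, hd⟩ := hq
    cases d with
    | nil =>
      exfalso
      have h' : q.1 = p.1 := by simpa using hd
      rw [← h'] at hpq'
      exact inlt_irrefl _ hpq'
    | cons b u =>
      have hnb : val n b < n := by
        rw [← hd] at hpq'
        exact (W1b q.1 u b).1 hpq'
      refine ⟨⟨p.1 ++ [(i, true)], by simp⟩, ?_, ?_, colP_concat hn _ _ _⟩
      · show inlt (wordOf p.1) (wordOf (p.1 ++ (i, true) :: []))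
        rw [W1a]
        simp [val]; omega
      · show inlt (wordOf (p.1 ++ [(i, true)])) (wordOf q.1)
        have : p.1 ++ [(i, true)] = q.1 ++ b :: (u ++ [(i, true)]) := by
          rw [← hd]; simp
        rw [this, W1b]
        exact hnb
  · have hab' : val n a ≠ val n b := fun h => hab (val_inj h)
    have hvab : val n a < val n b := by
      rw [hs, ht] at hpq'
      exact (W2 p0 s' t' a b hab').1 hpq'
    refine ⟨⟨p.1 ++ [(i, true)], by simp⟩, ?_, ?_, colP_concat hn _ _ _⟩
    · show inlt (wordOf p.1) (wordOf (p.1 ++ (i, true) :: []))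
      rw [W1a]
      simp [val]; omega
    · show inlt (wordOf (p.1 ++ [(i, true)])) (wordOf q.1)
      have : p.1 ++ [(i, true)] = p0 ++ a :: (s' ++ [(i, true)]) := by
        rw [hs]; simp
      rw [this, ht, W2 _ _ _ _ _ hab']
      exact hvab

end Shuffle

section ShufParser

variable {n : ℕ}

/-- The parser for the shuffle case: reads blocks `1^v 0` with `v ≤ 2n`, `v ≠ n`,
remembering the color of the last completed block; the block `1^n 0` is the end
marker, at which the parser exits with the remembered color. -/
def shufParser (n : ℕ) (hn : 1 ≤ n) : Parser n where
  State := Option (Fin n) × {x : ℕ // x ≤ 2 * n}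
  finState := by
    have : Finite {x : ℕ // x ≤ 2 * n} :=
      Finite.of_injective (fun c => (⟨c.1, by have := c.2; omega⟩ : Fin (2 * n + 1)))
        (fun a b h => Subtype.ext (by simpa [Fin.ext_iff] using h))
    infer_instance
  start := (none, ⟨0, by omega⟩)
  step := fun s b =>
    if b then
      if h : s.2.1 + 1 ≤ 2 * n then some (Sum.inl (s.1, ⟨s.2.1 + 1, h⟩)) else none
    else if h : s.2.1 < n then some (Sum.inl (some ⟨s.2.1, h⟩, ⟨0, by omega⟩))
    else if h2 : s.2.1 = n then s.1.map Sum.inr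
    else some (Sum.inl (some ⟨s.2.1 - (n + 1), by have := s.2.2; omega⟩, ⟨0, by omega⟩))

variable (hn : 1 ≤ n)

lemma sp_stepT1 (l : Option (Fin n)) (c : {x : ℕ // x ≤ 2 * n}) (h : c.1 + 1 ≤ 2 * n) :
    (shufParser n hn).step' (Sum.inl (l, c)) true = some (Sum.inl (l, ⟨c.1 + 1, h⟩)) := by
  show (shufParser n hn).step (l, c) true = _
  simp [shufParser, h]

lemma sp_stepT2 (l : Option (Fin n)) (c : {x : ℕ // x ≤ 2 * n}) (h : ¬ c.1 + 1 ≤ 2 * n) :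
    (shufParser n hn).step' (Sum.inl (l, c)) true = none := by
  show (shufParser n hn).step (l, c) true = _
  simp [shufParser, h]

lemma sp_stepF1 (l : Option (Fin n)) (c : {x : ℕ // x ≤ 2 * n}) (h : c.1 < n) :
    (shufParser n hn).step' (Sum.inl (l, c)) false
      = some (Sum.inl (some ⟨c.1, h⟩, ⟨0, by omega⟩)) := by
  show (shufParser n hn).step (l, c) false = _
  simp [shufParser, h]

lemma sp_stepF2 (l : Option (Fin n)) (c : {x : ℕ // x ≤ 2 * n}) (h : c.1 = n) :
    (shufParser n hn).step' (Sum.inl (l, c)) false = l.map Sum.inr := by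
  show (shufParser n hn).step (l, c) false = _
  have h1 : ¬ c.1 < n := by omega
  simp [shufParser, h1, h]

lemma sp_stepF3 (l : Option (Fin n)) (c : {x : ℕ // x ≤ 2 * n}) (h1 : ¬ c.1 < n)
    (h2 : c.1 ≠ n) :
    (shufParser n hn).step' (Sum.inl (l, c)) false
      = some (Sum.inl (some ⟨c.1 - (n + 1), by have := c.2; omega⟩, ⟨0, by omega⟩)) := by
  show (shufParser n hn).step (l, c) false = _
  simp [shufParser, h1, h2]

lemma sp_runOnes (j : ℕ) (l : Option (Fin n)) (c : {x : ℕ // x ≤ 2 * n}) (w : List Bool) :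
    (shufParser n hn).prun (Sum.inl (l, c)) (List.replicate j true ++ w) =
    if h : c.1 + j ≤ 2 * n then (shufParser n hn).prun (Sum.inl (l, ⟨c.1 + j, h⟩)) w
    else none := by
  induction j generalizing c with
  | zero =>
    have hc : c.1 + 0 ≤ 2 * n := by have := c.2; omega
    rw [List.replicate_zero, List.nil_append, dif_pos hc]
    have heq : (⟨c.1 + 0, hc⟩ : {x : ℕ // x ≤ 2 * n}) = c := Subtype.ext (Nat.add_zero _)
    rw [heq]
  | succ j ih =>
    rw [List.replicate_succ, List.cons_append, Parser.prun_cons]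
    by_cases h : c.1 + 1 ≤ 2 * n
    · erw [sp_stepT1 hn l c h, Option.bind_some, ih ⟨c.1 + 1, h⟩]
      by_cases h' : c.1 + 1 + j ≤ 2 * n
      · rw [dif_pos h', dif_pos (show c.1 + (j + 1) ≤ 2 * n by omega)]
        have heq : (⟨c.1 + 1 + j, h'⟩ : {x : ℕ // x ≤ 2 * n})
            = ⟨c.1 + (j + 1), by omega⟩ := Subtype.ext (show c.1 + 1 + j = c.1 + (j + 1) by omega)
        rw [heq]
      · rw [dif_neg h', dif_neg (show ¬ c.1 + (j + 1) ≤ 2 * n by omega)]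
    · rw [sp_stepT2 hn l c h, Option.bind_none,
        dif_neg (show ¬ c.1 + (j + 1) ≤ 2 * n by omega)]

/-- the color of the last letter, with default `l`. -/
def lastCol (l : Option (Fin n)) (s : List (Fin n × Bool)) : Option (Fin n) :=
  match s.getLast? with
  | some a => some a.1
  | none => l

lemma lastCol_nil (l : Option (Fin n)) : lastCol l [] = l := rfl

lemma lastCol_cons (l : Option (Fin n)) (a : Fin n × Bool) (s : List (Fin n × Bool)) :
    lastCol l (a :: s) = lastCol (some a.1) s := by
  cases s with
  | nil => simp [lastCol]
  | cons b s' =>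
    cases hx : (b :: s').getLast? with
    | none => exact absurd (List.getLast?_eq_none_iff.1 hx) (by simp)
    | some x => simp [lastCol, List.getLast?_cons_cons, hx]

lemma lastCol_eq_colP {s : List (Fin n × Bool)} (h : s ≠ []) (l : Option (Fin n)) :
    lastCol l s = some (colP hn ⟨s, h⟩) := by
  cases h' : s.getLast? with
  | none => exact absurd (List.getLast?_eq_none_iff.1 h') h
  | some a => simp [lastCol, colP, h']

lemma lead : ∀ u : List Bool, ∃ j u', u = List.replicate j true ++ u' ∧
    (u' = [] ∨ ∃ v, u' = false :: v) := by
  intro u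
  induction u with
  | nil => exact ⟨0, [], rfl, Or.inl rfl⟩
  | cons b u ih =>
    cases b
    · exact ⟨0, false :: u, rfl, Or.inr ⟨u, rfl⟩⟩
    · obtain ⟨j, u', hu, hcase⟩ := ih
      exact ⟨j + 1, u', by rw [List.replicate_succ, List.cons_append, hu], hcase⟩

lemma val_of_lt {a : Fin n × Bool} (h : val n a < n) : (a.1 : ℕ) = val n a := by
  rcases a with ⟨⟨i, hi⟩, d⟩
  cases d <;> simp [val] at h ⊢ <;> omega

lemma val_of_gt {a : Fin n × Bool} (h : n < val n a) : (a.1 : ℕ) = val n a - (n + 1) := by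
  rcases a with ⟨⟨i, hi⟩, d⟩
  cases d <;> simp [val] at h ⊢ <;> omega

lemma exitB : ∀ (s : List (Fin n × Bool)) (l : Option (Fin n)) (k : Fin n),
    lastCol l s = some k →
    (shufParser n hn).prun (Sum.inl (l, ⟨0, by omega⟩)) (wordOf s) = some (Sum.inr k) := by
  intro s
  induction s with
  | nil =>
    intro l k hl
    rw [lastCol_nil] at hl
    rw [wordOf_nil]
    show (shufParser n hn).prun _ (List.replicate n true ++ [false]) = _
    rw [sp_runOnes, dif_pos (show 0 + n ≤ 2 * n by omega)]
    rw [Parser.prun_cons, sp_stepF2 hn l _ (by omega : (0 : ℕ) + n = n), hl]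
    rfl
  | cons a s ih =>
    intro l k hl
    rw [lastCol_cons] at hl
    rw [wordOf_cons]
    have hblock : block (val n a) ++ wordOf s
        = List.replicate (val n a) true ++ (false :: wordOf s) := by
      simp [block]
    rw [hblock, sp_runOnes, dif_pos (show 0 + val n a ≤ 2 * n by have := val_le a; omega)]
    rw [Parser.prun_cons]
    by_cases hv : val n a < n
    · erw [sp_stepF1 hn l _ (show 0 + val n a < n by omega), Option.bind_some]
      have heq : (⟨0 + val n a, show 0 + val n a < n by omega⟩ : Fin n) = a.1 := by
        apply Fin.ext
        show 0 + val n a = (a.1 : ℕ)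
        rw [val_of_lt hv]
        omega
      rw [heq]
      exact ih (some a.1) k hl
    · have hv' : n < val n a := by have := val_ne a; omega
      erw [sp_stepF3 hn l _ (show ¬ 0 + val n a < n by omega)
        (show 0 + val n a ≠ n by omega), Option.bind_some]
      have heq : ∀ hh : 0 + val n a - (n + 1) < n,
          (⟨0 + val n a - (n + 1), hh⟩ : Fin n) = a.1 := by
        intro hh
        apply Fin.ext
        show 0 + val n a - (n + 1) = (a.1 : ℕ)
        rw [val_of_gt hv']
        omega
      rw [heq _]
      exact ih (some a.1) k hl

lemma exitF : ∀ (N : ℕ) (u : List Bool), u.length ≤ N → ∀ (l : Option (Fin n)) (k : Fin n),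
    (shufParser n hn).prun (Sum.inl (l, ⟨0, by omega⟩)) u = some (Sum.inr k) →
    ∃ s, u = wordOf s ∧ lastCol l s = some k := by
  intro N
  induction N with
  | zero =>
    intro u hu l k hrun
    obtain rfl : u = [] := List.length_eq_zero_iff.1 (Nat.le_zero.1 hu)
    rw [Parser.prun_nil] at hrun
    simp at hrun
  | succ N ih =>
    intro u hu l k hrun
    obtain ⟨j, u', rfl, hcase⟩ := lead u
    rw [sp_runOnes] at hrun
    by_cases h : 0 + j ≤ 2 * n
    swap
    · rw [dif_neg h] at hrun; simp at hrun
    rw [dif_pos h] at hrun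
    rcases hcase with rfl | ⟨v, rfl⟩
    · rw [Parser.prun_nil] at hrun; simp at hrun
    · rw [Parser.prun_cons] at hrun
      have hlen : v.length ≤ N := by
        rw [List.length_append, List.length_replicate] at hu
        simp only [List.length_cons] at hu
        omega
      by_cases h1 : 0 + j < n
      · erw [sp_stepF1 hn l _ h1, Option.bind_some] at hrun
        obtain ⟨s', rfl, hlast⟩ := ih v hlen _ k hrun
        refine ⟨(⟨0 + j, h1⟩, false) :: s', ?_, ?_⟩
        · rw [wordOf_cons]
          have hva : val n ((⟨0 + j, h1⟩ : Fin n), false) = j := by simp [val]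
          rw [hva]
          simp [block]
        · rw [lastCol_cons]
          exact hlast
      · by_cases h2 : 0 + j = n
        · rw [sp_stepF2 hn l _ h2] at hrun
          cases l with
          | none => simp at hrun
          | some cc =>
            rw [show (Option.map Sum.inr (some cc)
                : Option ((shufParser n hn).State ⊕ Fin n)) = some (Sum.inr cc) from rfl,
              Option.bind_some, Parser.prun_inr] at hrun
            split at hrun
            · subst ‹v = []›
              obtain rfl : cc = k := by simpa using hrun
              refine ⟨[], ?_, rfl⟩
              rw [wordOf_nil]
              rw [show j = n by omega]
              simp [block]
            · simp at hrun
        · erw [sp_stepF3 hn l _ h1 h2, Option.bind_some] at hrun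
          obtain ⟨s', rfl, hlast⟩ := ih v hlen _ k hrun
          refine ⟨(⟨0 + j - (n + 1), by omega⟩, true) :: s', ?_, ?_⟩
          · rw [wordOf_cons]
            have hva : val n ((⟨0 + j - (n + 1), by omega⟩ : Fin n), true) = j := by
              simp [val]; omega
            rw [hva]
            simp [block]
          · rw [lastCol_cons]
            exact hlast

lemma shufExit (u : List Bool) (k : Fin n) :
    (shufParser n hn).Exit u k ↔ ∃ p : Pos n, u = wordOf p.1 ∧ colP hn p = k := by
  unfold Parser.Exit
  have hst : (Sum.inl (shufParser n hn).start
      : (shufParser n hn).State ⊕ Fin n) = Sum.inl (none, ⟨0, by omega⟩) := rfl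
  rw [hst]
  constructor
  · intro h
    obtain ⟨s, rfl, hlast⟩ := exitF hn u.length u le_rfl none k h
    have hne : s ≠ [] := by
      rintro rfl
      rw [lastCol_nil] at hlast
      simp at hlast
    refine ⟨⟨s, hne⟩, rfl, ?_⟩
    rw [lastCol_eq_colP hn hne none] at hlast
    simpa using hlast
  · rintro ⟨⟨s, hne⟩, rfl, hcol⟩
    apply exitB
    rw [lastCol_eq_colP hn hne none, hcol]

end ShufParser

/-! ### The automata for the base cases -/

lemma pdfa_run_cons (M : PDFA Bool) (q : M.State) (b : Bool) (w : List Bool) :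
    M.run q (b :: w) = (M.step q b).bind (fun q' => M.run q' w) := by
  simp only [PDFA.run, List.foldlM_cons]; rfl

def emptyM : PDFA Bool where
  State := PUnit
  finState := inferInstance
  start := ⟨⟩
  accept := ∅
  step := fun _ _ => none

lemma emptyM_lang (w : List Bool) : w ∉ emptyM.lang := by
  rintro ⟨q, hq, _⟩; exact hq

def singleM : PDFA Bool where
  State := PUnit
  finState := inferInstance
  start := ⟨⟩
  accept := Set.univ
  step := fun _ _ => none

lemma singleM_lang (w : List Bool) : w ∈ singleM.lang ↔ w = [] := by
  constructor
  · rintro ⟨q, -, hrun⟩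
    cases w with
    | nil => rfl
    | cons b w' =>
      rw [pdfa_run_cons] at hrun
      exact absurd hrun (by simp [singleM])
  · rintro rfl
    exact ⟨⟨⟩, trivial, rfl⟩

lemma block_inj : Function.Injective block := by
  intro a b h
  have := congrArg List.length h
  simpa [block] using this

lemma coblock_inj : Function.Injective coblock := by
  intro a b h
  have := congrArg List.length h
  simpa [coblock] using this

/-- iso between a `Prod.Lex` over `ℕ` and the corresponding constant `Sigma.Lex`. -/
def prodLexIso {L : Type} (r : L → L → Prop) (s : ℕ → ℕ → Prop) :
    (Prod.Lex s r) ≃r (Sigma.Lex s (fun _ : ℕ => r)) where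
  toEquiv := (Equiv.sigmaEquivProd ℕ L).symm
  map_rel_iff' := by
    rintro ⟨a, x⟩ ⟨b, y⟩
    show Sigma.Lex s (fun _ => r) ⟨a, x⟩ ⟨b, y⟩ ↔ Prod.Lex s r (a, x) (b, y)
    rw [Sigma.lex_iff, Prod.lex_iff]
    constructor
    · rintro (h | ⟨h, hs⟩)
      · exact Or.inl h
      · dsimp only at h
        subst h
        exact Or.inr ⟨rfl, hs⟩
    · rintro (h | ⟨h, hs⟩)
      · exact Or.inl h
      · dsimp only at h
        subst h
        exact Or.inr ⟨rfl, hs⟩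

/-- iso between a binary `Sum.Lex` and the corresponding `Sigma.Lex` over `Bool`. -/
def sumLexIso {L₀ L₁ : Type} (r₀ : L₀ → L₀ → Prop) (r₁ : L₁ → L₁ → Prop) :
    (Sum.Lex r₀ r₁) ≃r (Sigma.Lex (fun a b : Bool => a = false ∧ b = true)
      (fun b => Bool.rec (motive := fun b => cond b L₁ L₀ → cond b L₁ L₀ → Prop) r₀ r₁ b)) where
  toEquiv :=
    { toFun := Sum.elim (fun x => ⟨false, x⟩) (fun y => ⟨true, y⟩)
      invFun := fun p => p.1.rec (motive := fun b => cond b L₁ L₀ → L₀ ⊕ L₁)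
        (fun x => Sum.inl x) (fun y => Sum.inr y) p.2
      left_inv := by rintro (x | y) <;> rfl
      right_inv := by rintro ⟨b, x⟩; cases b <;> rfl }
  map_rel_iff' := by
    rintro (x | y) (x' | y')
    · dsimp only [Equiv.coe_fn_mk, Sum.elim_inl, Sum.elim_inr]
      rw [Sigma.lex_iff]
      constructor
      · rintro (⟨-, h⟩ | ⟨h, hs⟩)
        · simp at h
        · exact Sum.Lex.inl hs
      · intro h
        cases h
        exact Or.inr ⟨rfl, by assumption⟩
    · dsimp only [Equiv.coe_fn_mk, Sum.elim_inl, Sum.elim_inr]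
      constructor
      · intro _; exact Sum.Lex.sep x y'
      · intro _; exact Sigma.Lex.left _ _ ⟨rfl, rfl⟩
    · dsimp only [Equiv.coe_fn_mk, Sum.elim_inl, Sum.elim_inr]
      rw [Sigma.lex_iff]
      constructor
      · rintro (⟨h, -⟩ | ⟨h, hs⟩) <;> simp at h
      · intro h; cases h
    · dsimp only [Equiv.coe_fn_mk, Sum.elim_inl, Sum.elim_inr]
      rw [Sigma.lex_iff]
      constructor
      · rintro (⟨h, -⟩ | ⟨h, hs⟩)
        · simp at h
        · exact Sum.Lex.inr hs
      · intro h
        cases h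
        exact Or.inr ⟨rfl, by assumption⟩

end Lingu

/-- Every finite description linear order is order-isomorphic to
the linguage `𝐋(M)` of some deterministic finite automaton `M` over `{0,1}`. -/
theorem finDesc_isLinguage (L : Type) (r : L → L → Prop) (h : FinDesc L r) :
    ∃ M : PDFA Bool, Nonempty (r ≃r fun x y : M.lang => inlt x.1 y.1) := by
  induction h with
  | empty =>
    haveI : IsEmpty ↥Lingu.emptyM.lang := ⟨fun x => Lingu.emptyM_lang x.1 x.2⟩
    exact ⟨Lingu.emptyM, ⟨RelIso.mk (Equiv.equivOfIsEmpty _ _) (fun {a b} => isEmptyElim a)⟩⟩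
  | single =>
    have hmem : [] ∈ Lingu.singleM.lang := (Lingu.singleM_lang []).2 rfl
    let E : PUnit ≃ ↥Lingu.singleM.lang :=
      { toFun := fun _ => ⟨[], hmem⟩
        invFun := fun _ => ⟨⟩
        left_inv := fun _ => rfl
        right_inv := fun w => Subtype.ext ((Lingu.singleM_lang w.1).1 w.2).symm }
    refine ⟨Lingu.singleM, ⟨RelIso.mk E ?_⟩⟩
    intro a b
    show inlt [] [] ↔ False
    simp [inlt]
  | iso L2 r2 L3 r3 hFD hne ih =>
    obtain ⟨M, ⟨f⟩⟩ := ih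
    obtain ⟨g⟩ := hne
    exact ⟨M, ⟨g.trans f⟩⟩
  | sum L₀ r₀ L₁ r₁ h₀ h₁ ih₀ ih₁ =>
    obtain ⟨M₀, ⟨f₀⟩⟩ := ih₀
    obtain ⟨M₁, ⟨f₁⟩⟩ := ih₁
    have hc : ∀ u k, Lingu.sumParser.Exit u k ↔
        ∃ i : Bool, (if i then (1 : Fin 2) else 0) = k ∧ [i] = u := by
      intro u k
      rw [Lingu.sumParser_exit]
      constructor
      · rintro (⟨rfl, rfl⟩ | ⟨rfl, rfl⟩)
        · exact ⟨false, rfl, rfl⟩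
        · exact ⟨true, rfl, rfl⟩
      · rintro ⟨i, rfl, rfl⟩
        cases i
        · exact Or.inl ⟨rfl, rfl⟩
        · exact Or.inr ⟨rfl, rfl⟩
    have hinj : Function.Injective (fun i : Bool => [i]) := by
      intro a b hab; simpa using hab
    have horder : ∀ i j : Bool, (i = false ∧ j = true) ↔ inlt [i] [j] := by
      intro i j; cases i <;> cases j <;> simp [inlt]
    have e : ∀ b : Bool,
        (Bool.rec (motive := fun b => cond b L₁ L₀ → cond b L₁ L₀ → Prop) r₀ r₁ b) ≃r
        (fun x y : ((![M₀, M₁]) (if b then (1 : Fin 2) else 0)).lang => inlt x.1 y.1) := by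
      intro b
      cases b
      · exact f₀
      · exact f₁
    obtain ⟨iso⟩ := Lingu.master Lingu.sumParser ![M₀, M₁]
      (fun a b : Bool => a = false ∧ b = true)
      (fun b => cond b L₁ L₀)
      (fun b => Bool.rec (motive := fun b => cond b L₁ L₀ → cond b L₁ L₀ → Prop) r₀ r₁ b)
      (fun b => if b then 1 else 0) (fun b => [b]) hc hinj horder e
    exact ⟨_, ⟨(Lingu.sumLexIso r₀ r₁).trans iso⟩⟩
  | omegaMul L2 r2 hFD ih =>
    obtain ⟨M0, ⟨f0⟩⟩ := ih
    have hc : ∀ u k, Lingu.omegaParser.Exit u k ↔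
        ∃ i : ℕ, (0 : Fin 1) = k ∧ Lingu.block i = u := by
      intro u k
      rw [Lingu.omegaParser_exit u k]
      constructor
      · rintro ⟨i, rfl⟩; exact ⟨i, Subsingleton.elim _ _, rfl⟩
      · rintro ⟨i, rfl, rfl⟩; exact ⟨i, rfl⟩
    have horder : ∀ i j : ℕ, i < j ↔ inlt (Lingu.block i) (Lingu.block j) :=
      fun i j => (Lingu.block_order i j).symm
    have e : ∀ i : ℕ, r2 ≃r
        (fun x y : ((![M0]) ((fun _ : ℕ => (0 : Fin 1)) i)).lang => inlt x.1 y.1) :=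
      fun _ => f0
    obtain ⟨iso⟩ := Lingu.master Lingu.omegaParser ![M0] (· < ·) (fun _ : ℕ => L2)
      (fun _ => r2) (fun _ => 0) Lingu.block hc Lingu.block_inj horder e
    exact ⟨_, ⟨(Lingu.prodLexIso r2 (· < ·)).trans iso⟩⟩
  | omegaStarMul L2 r2 hFD ih =>
    obtain ⟨M0, ⟨f0⟩⟩ := ih
    have hc : ∀ u k, Lingu.omegaStarParser.Exit u k ↔
        ∃ i : ℕ, (0 : Fin 1) = k ∧ Lingu.coblock i = u := by
      intro u k
      rw [Lingu.omegaStarParser_exit u k]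
      constructor
      · rintro ⟨i, rfl⟩; exact ⟨i, Subsingleton.elim _ _, rfl⟩
      · rintro ⟨i, rfl, rfl⟩; exact ⟨i, rfl⟩
    have horder : ∀ i j : ℕ, (fun a b : ℕ => b < a) i j ↔
        inlt (Lingu.coblock i) (Lingu.coblock j) :=
      fun i j => (Lingu.coblock_order i j).symm
    have e : ∀ i : ℕ, r2 ≃r
        (fun x y : ((![M0]) ((fun _ : ℕ => (0 : Fin 1)) i)).lang => inlt x.1 y.1) :=
      fun _ => f0
    obtain ⟨iso⟩ := Lingu.master Lingu.omegaStarParser ![M0] (fun a b : ℕ => b < a)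
      (fun _ : ℕ => L2) (fun _ => r2) (fun _ => 0) Lingu.coblock hc Lingu.coblock_inj horder e
    exact ⟨_, ⟨(Lingu.prodLexIso r2 (fun a b : ℕ => b < a)).trans iso⟩⟩
  | shuffle n hn L2 r2 χ hχ hFD ih =>
    choose Ms hMs using ih
    have E : ∀ i, r2 i ≃r (fun x y : (Ms i).lang => inlt x.1 y.1) := fun i => (hMs i).some
    haveI : Nonempty (Lingu.Pos n) := ⟨⟨[(⟨0, hn⟩, false)], by simp⟩⟩
    obtain ⟨e, he1, he2⟩ := Lingu.colored_bf (Lingu.plt (n := n)) (Lingu.colP hn) χ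
      Lingu.plt_tri (fun {a b c} h1 h2 => Lingu.inlt_trans h1 h2)
      (fun p => Lingu.inlt_irrefl _)
      (Lingu.plt_bet hn) (Lingu.plt_up hn) (Lingu.plt_dn hn) hχ
    have hc : ∀ u k, (Lingu.shufParser n hn).Exit u k ↔
        ∃ q : ℚ, χ q = k ∧ Lingu.wordOf (e q).1 = u := by
      intro u k
      rw [Lingu.shufExit hn]
      constructor
      · rintro ⟨p, rfl, rfl⟩
        refine ⟨e.symm p, ?_, ?_⟩
        · rw [← he2 (e.symm p), Equiv.apply_symm_apply]
        · rw [Equiv.apply_symm_apply]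
      · rintro ⟨q, rfl, rfl⟩
        exact ⟨e q, rfl, he2 q⟩
    have hinj : Function.Injective (fun q : ℚ => Lingu.wordOf (e q).1) := by
      intro a b hab
      exact e.injective (Subtype.ext (Lingu.wordOf_inj hab))
    have horder : ∀ a b : ℚ, a < b ↔ inlt (Lingu.wordOf (e a).1) (Lingu.wordOf (e b).1) := he1
    obtain ⟨iso⟩ := Lingu.master (Lingu.shufParser n hn) Ms (· < ·)
      (fun q => L2 (χ q)) (fun q => r2 (χ q)) χ (fun q => Lingu.wordOf (e q).1)
      hc hinj horder (fun q => E (χ q))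
    exact ⟨_, ⟨iso⟩⟩
end

section
/- For every deterministic finite automaton M over the alphabet {0,1}, the linguage 𝐋(M) is a finite description linear order. -/
@[simp] lemma inlt_nil_nil : inlt [] [] ↔ False := Iff.rfl
@[simp] lemma inlt_nil_cons {b : Bool} {y : List Bool} : inlt [] (b :: y) ↔ b = true := Iff.rfl
@[simp] lemma inlt_cons_nil {a : Bool} {x : List Bool} : inlt (a :: x) [] ↔ a = false := Iff.rfl
@[simp] lemma inlt_cons_cons {a b : Bool} {x y : List Bool} :
    inlt (a :: x) (b :: y) ↔ (a = false ∧ b = true) ∨ (a = b ∧ inlt x y) := Iff.rfl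

lemma inlt_irrefl : ∀ x : List Bool, ¬ inlt x x := by
  intro x; induction x with
  | nil => simp
  | cons a t ih => simp [ih]

lemma inlt_trans : ∀ x y z : List Bool, inlt x y → inlt y z → inlt x z := by
  intro x
  induction x with
  | nil =>
    intro y z hxy hyz
    cases y with
    | nil => simp at hxy
    | cons b ys =>
      simp at hxy; subst hxy
      cases z with
      | nil => simp at hyz
      | cons c zs =>
        rcases hyz with ⟨h, _⟩ | ⟨rfl, _⟩
        · simp at h
        · simp
  | cons a xs ih =>
    intro y z hxy hyz
    cases y with
    | nil =>
      simp at hxy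
      cases z with
      | nil => simp at hyz
      | cons c zs =>
        simp at hyz; subst hyz; simp [hxy]
    | cons b ys =>
      cases z with
      | nil =>
        simp at hyz
        rcases hxy with ⟨ha, _⟩ | ⟨rfl, _⟩
        · simp [ha]
        · simp [hyz]
      | cons c zs =>
        rcases hxy with ⟨ha, hb⟩ | ⟨rfl, h1⟩
        · rcases hyz with ⟨hb', hc⟩ | ⟨rfl, h2⟩
          · subst hb; simp at hb'
          · exact Or.inl ⟨ha, hb⟩
        · rcases hyz with ⟨hb', hc⟩ | ⟨rfl, h2⟩
          · exact Or.inl ⟨hb', hc⟩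
          · exact Or.inr ⟨rfl, ih ys zs h1 h2⟩

lemma inlt_asymm {x y : List Bool} (h : inlt x y) : ¬ inlt y x :=
  fun h' => inlt_irrefl x (inlt_trans _ _ _ h h')

lemma inlt_total : ∀ x y : List Bool, x = y ∨ inlt x y ∨ inlt y x := by
  intro x
  induction x with
  | nil => intro y; cases y with
    | nil => exact Or.inl rfl
    | cons b ys => cases b <;> simp
  | cons a xs ih =>
    intro y
    cases y with
    | nil => cases a <;> simp
    | cons b ys =>
      by_cases hab : a = b
      · subst hab
        rcases ih ys with h | h | h
        · exact Or.inl (by rw [h])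
        · exact Or.inr (Or.inl (Or.inr ⟨rfl, h⟩))
        · exact Or.inr (Or.inr (Or.inr ⟨rfl, h⟩))
      · cases a <;> cases b
        · exact absurd rfl hab
        · exact Or.inr (Or.inl (Or.inl ⟨rfl, rfl⟩))
        · exact Or.inr (Or.inr (Or.inl ⟨rfl, rfl⟩))
        · exact absurd rfl hab

lemma inlt_append_iff : ∀ (w x y : List Bool), inlt (w ++ x) (w ++ y) ↔ inlt x y := by
  intro w
  induction w with
  | nil => intro x y; rfl
  | cons a t ih => intro x y; simp [ih]

lemma inlt_self_append_true (w t : List Bool) : inlt w (w ++ true :: t) := by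
  have := (inlt_append_iff w [] (true :: t)).mpr (by simp)
  simpa using this

lemma inlt_append_false_self (w t : List Bool) : inlt (w ++ false :: t) w := by
  have := (inlt_append_iff w (false :: t) []).mpr (by simp)
  simpa using this

lemma inlt_append_false_true (w s t : List Bool) : inlt (w ++ false :: s) (w ++ true :: t) :=
  (inlt_append_iff w _ _).mpr (by simp)

lemma inlt_cases : ∀ {x y : List Bool}, inlt x y →
    (∃ t, y = x ++ true :: t) ∨ (∃ t, x = y ++ false :: t) ∨
    (∃ c s t, x = c ++ false :: s ∧ y = c ++ true :: t) := by
  intro x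
  induction x with
  | nil =>
    intro y h
    cases y with
    | nil => simp at h
    | cons b ys => simp at h; subst h; exact Or.inl ⟨ys, rfl⟩
  | cons a xs ih =>
    intro y h
    cases y with
    | nil =>
      simp at h; subst h; exact Or.inr (Or.inl ⟨xs, rfl⟩)
    | cons b ys =>
      rcases h with ⟨rfl, rfl⟩ | ⟨rfl, h⟩
      · exact Or.inr (Or.inr ⟨[], xs, ys, rfl, rfl⟩)
      · rcases ih h with ⟨t, rfl⟩ | ⟨t, rfl⟩ | ⟨c, s, t, rfl, rfl⟩
        · exact Or.inl ⟨t, rfl⟩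
        · exact Or.inr (Or.inl ⟨t, rfl⟩)
        · exact Or.inr (Or.inr ⟨a :: c, s, t, rfl, rfl⟩)


/-! ### The `FinDescW` toolkit -/

def FinDescW (S : Set (List Bool)) : Prop :=
  FinDesc {w : List Bool // w ∈ S} (fun x y => inlt x.1 y.1)

def relIsoOfMono {α β : Type} {r : α → α → Prop} {s : β → β → Prop}
    (e : β ≃ α) (mono : ∀ p q : β, s p q → r (e p) (e q))
    (trich : ∀ p q : β, p = q ∨ s p q ∨ s q p)
    (irr : ∀ a : α, ¬ r a a) (asym : ∀ a b : α, r a b → ¬ r b a) :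
    r ≃r s where
  toEquiv := e.symm
  map_rel_iff' := by
    intro a b
    show s (e.symm a) (e.symm b) ↔ r a b
    constructor
    · intro h
      have h2 := mono _ _ h
      simpa using h2
    · intro h
      rcases trich (e.symm a) (e.symm b) with h' | h' | h'
      · exfalso
        apply irr a
        have hab : a = b := by
          have := congrArg e h'
          simpa using this
        exact hab ▸ h
      · exact h'
      · exfalso
        have h2 := mono _ _ h'
        simp only [Equiv.apply_symm_apply] at h2
        exact asym _ _ h h2

lemma subtype_inlt_trich {S : Set (List Bool)} :
    ∀ p q : {w // w ∈ S}, p = q ∨ inlt p.1 q.1 ∨ inlt q.1 p.1 := by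
  intro p q
  rcases inlt_total p.1 q.1 with h | h | h
  · exact Or.inl (Subtype.ext h)
  · exact Or.inr (Or.inl h)
  · exact Or.inr (Or.inr h)

lemma subtype_inlt_irr {S : Set (List Bool)} : ∀ a : {w // w ∈ S}, ¬ inlt a.1 a.1 :=
  fun a => inlt_irrefl a.1

lemma subtype_inlt_asym {S : Set (List Bool)} :
    ∀ a b : {w // w ∈ S}, inlt a.1 b.1 → ¬ inlt b.1 a.1 :=
  fun _ _ h => inlt_asymm h

lemma FinDescW.congr {S S' : Set (List Bool)} (h : FinDescW S) (hEq : S' = S) : FinDescW S' :=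
  hEq ▸ h

lemma FinDescW.ofEmpty {S : Set (List Bool)} (h : ∀ w, w ∉ S) : FinDescW S := by
  have hiE : IsEmpty {w : List Bool // w ∈ S} := ⟨fun x => h x.1 x.2⟩
  exact FinDesc.iso _ _ _ _ FinDesc.empty
    ⟨⟨Equiv.equivEmpty _, @fun a _ => isEmptyElim a⟩⟩

lemma FinDescW.ofSingleton {S : Set (List Bool)} (u : List Bool) (hS : ∀ w, w ∈ S ↔ w = u) :
    FinDescW S := by
  have hu : Unique {w : List Bool // w ∈ S} :=
    ⟨⟨⟨u, (hS u).mpr rfl⟩⟩, fun x => Subtype.ext (by simpa using (hS x.1).mp x.2)⟩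
  refine FinDesc.iso _ _ _ _ FinDesc.single ⟨⟨@Equiv.equivPUnit _ hu, ?_⟩⟩
  intro a b
  constructor
  · intro h; exact h.elim
  · intro h
    have ha : a.1 = u := (hS a.1).mp a.2
    have hb : b.1 = u := (hS b.1).mp b.2
    rw [ha, hb] at h
    exact absurd h (inlt_irrefl u)

lemma FinDescW.split {S S₁ S₂ : Set (List Bool)}
    (hU : ∀ w, w ∈ S ↔ w ∈ S₁ ∨ w ∈ S₂)
    (hsep : ∀ x ∈ S₁, ∀ y ∈ S₂, inlt x y)
    (h₁ : FinDescW S₁) (h₂ : FinDescW S₂) : FinDescW S := by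
  let f : {w // w ∈ S₁} ⊕ {w // w ∈ S₂} → {w // w ∈ S} :=
    Sum.elim (fun x => ⟨x.1, (hU _).mpr (Or.inl x.2)⟩) (fun x => ⟨x.1, (hU _).mpr (Or.inr x.2)⟩)
  have hinj : Function.Injective f := by
    rintro (x | x) (y | y) h
    · have hv := congrArg Subtype.val h
      exact congrArg Sum.inl (Subtype.ext hv)
    · have hv : x.1 = y.1 := congrArg Subtype.val h
      exact absurd (hv ▸ hsep x.1 x.2 y.1 y.2) (inlt_irrefl _)
    · have hv : x.1 = y.1 := congrArg Subtype.val h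
      exact absurd (hv.symm ▸ hsep y.1 y.2 x.1 x.2) (inlt_irrefl _)
    · have hv := congrArg Subtype.val h
      exact congrArg Sum.inr (Subtype.ext hv)
  have hsurj : Function.Surjective f := by
    rintro ⟨w, hw⟩
    rcases (hU w).mp hw with h | h
    · exact ⟨Sum.inl ⟨w, h⟩, rfl⟩
    · exact ⟨Sum.inr ⟨w, h⟩, rfl⟩
  refine FinDesc.iso _ _ _ _ (FinDesc.sum _ _ _ _ h₁ h₂)
    ⟨relIsoOfMono (Equiv.ofBijective f ⟨hinj, hsurj⟩) ?_ ?_ subtype_inlt_irr subtype_inlt_asym⟩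
  · intro p q h
    cases h with
    | inl h => exact h
    | inr h => exact h
    | sep x y => exact hsep x.1 x.2 y.1 y.2
  · rintro (x | x) (y | y)
    · rcases subtype_inlt_trich x y with h | h | h
      · exact Or.inl (congrArg Sum.inl h)
      · exact Or.inr (Or.inl (Sum.Lex.inl h))
      · exact Or.inr (Or.inr (Sum.Lex.inl h))
    · exact Or.inr (Or.inl (Sum.Lex.sep _ _))
    · exact Or.inr (Or.inr (Sum.Lex.sep _ _))
    · rcases subtype_inlt_trich x y with h | h | h
      · exact Or.inl (congrArg Sum.inr h)
      · exact Or.inr (Or.inl (Sum.Lex.inr h))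
      · exact Or.inr (Or.inr (Sum.Lex.inr h))

lemma FinDescW.append (p : List Bool) {S : Set (List Bool)} (h : FinDescW S) :
    FinDescW {w | ∃ v ∈ S, w = p ++ v} := by
  let f : {w // w ∈ S} → {w // w ∈ {w | ∃ v ∈ S, w = p ++ v}} :=
    fun x => ⟨p ++ x.1, ⟨x.1, x.2, rfl⟩⟩
  have hinj : Function.Injective f := by
    intro x y hxy
    exact Subtype.ext (List.append_cancel_left (congrArg Subtype.val hxy))
  have hsurj : Function.Surjective f := by
    rintro ⟨w, v, hv, rfl⟩
    exact ⟨⟨v, hv⟩, rfl⟩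
  refine FinDesc.iso _ _ _ _ h
    ⟨relIsoOfMono (Equiv.ofBijective f ⟨hinj, hsurj⟩) ?_ subtype_inlt_trich
      subtype_inlt_irr subtype_inlt_asym⟩
  intro x y hxy
  exact (inlt_append_iff p _ _).mpr hxy

/-! ### ω and ω* powers -/

def wpow (π : List Bool) : ℕ → List Bool
  | 0 => []
  | m + 1 => π ++ wpow π m

lemma wpow_add (π : List Bool) (m k : ℕ) : wpow π (m + k) = wpow π m ++ wpow π k := by
  induction m with
  | zero => simp [wpow]
  | succ m ih =>
    have : m + 1 + k = (m + k) + 1 := by omega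
    rw [this]
    simp only [wpow, ih, List.append_assoc]

lemma wpow_aux_inj {π : List Bool} {P : Set (List Bool)}
    (hnp : ∀ v ∈ P, ¬ π <+: v) :
    ∀ {m m' : ℕ} {v v' : List Bool}, m < m' → v ∈ P → wpow π m ++ v = wpow π m' ++ v' → False := by
  intro m m' v v' hm hv h
  have h1 : wpow π m' = wpow π m ++ wpow π (m' - m) := by
    rw [← wpow_add]; congr 1; omega
  rw [h1, List.append_assoc] at h
  have h2 := List.append_cancel_left h
  obtain ⟨k, hk⟩ : ∃ k, m' - m = k + 1 := ⟨m' - m - 1, by omega⟩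
  rw [hk] at h2
  exact hnp v hv ⟨wpow π k ++ v', by simpa [wpow] using h2.symm⟩

lemma FinDescW.omega (π : List Bool) {P : Set (List Bool)}
    (hP : FinDescW P) (hnp : ∀ v ∈ P, ¬ π <+: v)
    (hlt : ∀ v ∈ P, ∀ y : List Bool, inlt v (π ++ y)) :
    FinDescW {w | ∃ m v, v ∈ P ∧ w = wpow π m ++ v} := by
  let f : ℕ × {v // v ∈ P} → {w // w ∈ {w | ∃ m v, v ∈ P ∧ w = wpow π m ++ v}} :=
    fun mv => ⟨wpow π mv.1 ++ mv.2.1, ⟨mv.1, mv.2.1, mv.2.2, rfl⟩⟩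
  have hinj : Function.Injective f := by
    rintro ⟨m, v⟩ ⟨m', v'⟩ h
    have h' : wpow π m ++ v.1 = wpow π m' ++ v'.1 := congrArg Subtype.val h
    rcases lt_trichotomy m m' with hm | rfl | hm
    · exact absurd (wpow_aux_inj hnp hm v.2 h') id
    · have := List.append_cancel_left h'
      exact Prod.ext rfl (Subtype.ext this)
    · exact absurd (wpow_aux_inj hnp hm v'.2 h'.symm) id
  have hsurj : Function.Surjective f := by
    rintro ⟨w, m, v, hv, rfl⟩
    exact ⟨⟨m, ⟨v, hv⟩⟩, rfl⟩
  refine FinDesc.iso _ _ _ _ (FinDesc.omegaMul _ _ hP)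
    ⟨relIsoOfMono (Equiv.ofBijective f ⟨hinj, hsurj⟩) ?_ ?_ subtype_inlt_irr subtype_inlt_asym⟩
  · rintro ⟨m, v⟩ ⟨m', v'⟩ h
    rw [Prod.lex_def] at h
    rcases h with h | ⟨heq, h⟩
    · show inlt (wpow π m ++ _) (wpow π m' ++ _)
      have h1 : wpow π m' = wpow π m ++ wpow π (m' - m) := by
        rw [← wpow_add]; congr 1; omega
      rw [h1, List.append_assoc, inlt_append_iff]
      obtain ⟨k, hk⟩ : ∃ k, m' - m = k + 1 := ⟨m' - m - 1, by omega⟩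
      rw [hk]
      show inlt _ ((π ++ wpow π k) ++ _)
      rw [List.append_assoc]
      exact hlt _ v.2 _
    · cases heq
      show inlt (wpow π m ++ _) (wpow π m ++ _)
      rw [inlt_append_iff]
      exact h
  · rintro ⟨m, v⟩ ⟨m', v'⟩
    rcases lt_trichotomy m m' with hm | rfl | hm
    · exact Or.inr (Or.inl (Prod.Lex.left _ _ hm))
    · rcases subtype_inlt_trich v v' with h | h | h
      · exact Or.inl (by rw [h])
      · exact Or.inr (Or.inl (Prod.Lex.right _ h))
      · exact Or.inr (Or.inr (Prod.Lex.right _ h))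
    · exact Or.inr (Or.inr (Prod.Lex.left _ _ hm))

lemma FinDescW.omegaStar (π : List Bool) {P : Set (List Bool)}
    (hP : FinDescW P) (hnp : ∀ v ∈ P, ¬ π <+: v)
    (hlt : ∀ v ∈ P, ∀ y : List Bool, inlt (π ++ y) v) :
    FinDescW {w | ∃ m v, v ∈ P ∧ w = wpow π m ++ v} := by
  let f : ℕ × {v // v ∈ P} → {w // w ∈ {w | ∃ m v, v ∈ P ∧ w = wpow π m ++ v}} :=
    fun mv => ⟨wpow π mv.1 ++ mv.2.1, ⟨mv.1, mv.2.1, mv.2.2, rfl⟩⟩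
  have hinj : Function.Injective f := by
    rintro ⟨m, v⟩ ⟨m', v'⟩ h
    have h' : wpow π m ++ v.1 = wpow π m' ++ v'.1 := congrArg Subtype.val h
    rcases lt_trichotomy m m' with hm | rfl | hm
    · exact absurd (wpow_aux_inj hnp hm v.2 h') id
    · have := List.append_cancel_left h'
      exact Prod.ext rfl (Subtype.ext this)
    · exact absurd (wpow_aux_inj hnp hm v'.2 h'.symm) id
  have hsurj : Function.Surjective f := by
    rintro ⟨w, m, v, hv, rfl⟩
    exact ⟨⟨m, ⟨v, hv⟩⟩, rfl⟩
  refine FinDesc.iso _ _ _ _ (FinDesc.omegaStarMul _ _ hP)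
    ⟨relIsoOfMono (Equiv.ofBijective f ⟨hinj, hsurj⟩) ?_ ?_ subtype_inlt_irr subtype_inlt_asym⟩
  · rintro ⟨m, v⟩ ⟨m', v'⟩ h
    rw [Prod.lex_def] at h
    rcases h with h | ⟨heq, h⟩
    · -- here h : m' < m
      show inlt (wpow π m ++ _) (wpow π m' ++ _)
      have h1 : wpow π m = wpow π m' ++ wpow π (m - m') := by
        rw [← wpow_add]; congr 1; omega
      rw [h1, List.append_assoc, inlt_append_iff]
      obtain ⟨k, hk⟩ : ∃ k, m - m' = k + 1 := ⟨m - m' - 1, by omega⟩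
      rw [hk]
      show inlt ((π ++ wpow π k) ++ _) _
      rw [List.append_assoc]
      exact hlt _ v'.2 _
    · cases heq
      show inlt (wpow π m ++ _) (wpow π m ++ _)
      rw [inlt_append_iff]
      exact h
  · rintro ⟨m, v⟩ ⟨m', v'⟩
    rcases lt_trichotomy m m' with hm | rfl | hm
    · exact Or.inr (Or.inr (Prod.Lex.left _ _ hm))
    · rcases subtype_inlt_trich v v' with h | h | h
      · exact Or.inl (by rw [h])
      · exact Or.inr (Or.inl (Prod.Lex.right _ h))
      · exact Or.inr (Or.inr (Prod.Lex.right _ h))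
    · exact Or.inr (Or.inl (Prod.Lex.left _ _ hm))

/-! ### shuffle over an abstract countable dense order -/

lemma FinDescW.shuffleW {n : ℕ} (hn : 1 ≤ n) (Ls : Fin n → Set (List Bool))
    (hLs : ∀ i, FinDescW (Ls i))
    (I : Type) [LinearOrder I] [Countable I] [DenselyOrdered I] [NoMinOrder I] [NoMaxOrder I]
    [Nonempty I]
    (c : I → Fin n) (hc : ∀ j : Fin n, ∀ a b : I, a < b → ∃ i, a < i ∧ i < b ∧ c i = j)
    (emb : I → List Bool) {S : Set (List Bool)}
    (hS : ∀ w, w ∈ S ↔ ∃ i k, k ∈ Ls (c i) ∧ w = emb i ++ k)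
    (cross : ∀ i i' : I, i < i' → ∀ k ∈ Ls (c i), ∀ k' ∈ Ls (c i'), inlt (emb i ++ k) (emb i' ++ k'))
    (cinj : ∀ i i' : I, ∀ k ∈ Ls (c i), ∀ k' ∈ Ls (c i'), emb i ++ k = emb i' ++ k' → i = i') :
    FinDescW S := by
  obtain ⟨ψ⟩ : Nonempty (ℚ ≃o I) := Order.iso_of_countable_dense ℚ I
  set χ : ℚ → Fin n := fun q => c (ψ q) with hχdef
  have hχ : ∀ j : Fin n, ∀ a b : ℚ, a < b → ∃ q, a < q ∧ q < b ∧ χ q = j := by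
    intro j a b hab
    obtain ⟨i, h1, h2, h3⟩ := hc j (ψ a) (ψ b) (ψ.lt_iff_lt.mpr hab)
    refine ⟨ψ.symm i, ?_, ?_, ?_⟩
    · have : ψ a < ψ (ψ.symm i) := by rwa [ψ.apply_symm_apply]
      exact ψ.lt_iff_lt.mp this
    · have : ψ (ψ.symm i) < ψ b := by rwa [ψ.apply_symm_apply]
      exact ψ.lt_iff_lt.mp this
    · show c (ψ (ψ.symm i)) = j
      rwa [ψ.apply_symm_apply]
  have base := FinDesc.shuffle n hn (fun j => {k // k ∈ Ls j}) (fun _ x y => inlt x.1 y.1) χ hχ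
    (fun j => hLs j)
  let f : ((q : ℚ) × {k // k ∈ Ls (χ q)}) → {w // w ∈ S} :=
    fun qk => ⟨emb (ψ qk.1) ++ qk.2.1, (hS _).mpr ⟨ψ qk.1, qk.2.1, qk.2.2, rfl⟩⟩
  have hinj : Function.Injective f := by
    rintro ⟨q, k⟩ ⟨q', k'⟩ h
    have h' : emb (ψ q) ++ k.1 = emb (ψ q') ++ k'.1 := congrArg Subtype.val h
    have hqq : ψ q = ψ q' := cinj _ _ k.1 k.2 k'.1 k'.2 h'
    have hq : q = q' := ψ.injective hqq
    subst hq
    have := List.append_cancel_left h'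
    exact Sigma.ext rfl (heq_of_eq (Subtype.ext this))
  have hsurj : Function.Surjective f := by
    rintro ⟨w, hw⟩
    obtain ⟨i, k, hk, rfl⟩ := (hS w).mp hw
    obtain ⟨q, rfl⟩ : ∃ q, i = ψ q := ⟨ψ.symm i, (ψ.apply_symm_apply i).symm⟩
    exact ⟨⟨q, ⟨k, hk⟩⟩, rfl⟩
  refine FinDesc.iso _ _ _ _ base
    ⟨relIsoOfMono (Equiv.ofBijective f ⟨hinj, hsurj⟩) ?_ ?_ subtype_inlt_irr subtype_inlt_asym⟩
  · rintro ⟨q, k⟩ ⟨q', k'⟩ h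
    rw [Sigma.lex_iff] at h
    rcases h with h | ⟨heq, h⟩
    · exact cross _ _ (ψ.lt_iff_lt.mpr h) _ k.2 _ k'.2
    · cases heq
      show inlt (emb (ψ q) ++ _) (emb (ψ q) ++ _)
      rw [inlt_append_iff]
      exact h
  · rintro ⟨q, k⟩ ⟨q', k'⟩
    rcases lt_trichotomy q q' with hq | rfl | hq
    · exact Or.inr (Or.inl (Sigma.Lex.left _ _ hq))
    · rcases subtype_inlt_trich k k' with h | h | h
      · exact Or.inl (by rw [h])
      · exact Or.inr (Or.inl (Sigma.Lex.right _ _ h))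
      · exact Or.inr (Or.inr (Sigma.Lex.right _ _ h))
    · exact Or.inr (Or.inr (Sigma.Lex.left _ _ hq))


/-! ### Automaton basics -/

namespace PDFA

variable {M : PDFA Bool}

def langFrom (M : PDFA Bool) (s : M.State) : Set (List Bool) :=
  {w | ∃ q ∈ M.accept, M.run s w = some q}

lemma lang_eq_langFrom (M : PDFA Bool) : M.lang = M.langFrom M.start := rfl

lemma run_nil (s : M.State) : M.run s [] = some s := rfl

lemma run_cons (s : M.State) (a : Bool) (w : List Bool) :
    M.run s (a :: w) = (M.step s a).bind (fun p => M.run p w) := by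
  simp [PDFA.run]

lemma run_append (s : M.State) (u v : List Bool) :
    M.run s (u ++ v) = (M.run s u).bind fun p => M.run p v := by
  simp [PDFA.run]

def reach (M : PDFA Bool) (s : M.State) : Set M.State := {p | ∃ w, M.run s w = some p}

lemma reach_self (s : M.State) : s ∈ M.reach s := ⟨[], rfl⟩

lemma reach_trans {s p r : M.State} (h1 : p ∈ M.reach s) (h2 : r ∈ M.reach p) :
    r ∈ M.reach s := by
  obtain ⟨u, hu⟩ := h1
  obtain ⟨v, hv⟩ := h2
  exact ⟨u ++ v, by rw [run_append, hu]; exact hv⟩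

lemma reach_step {s p : M.State} {a : Bool} (h : M.step s a = some p) : p ∈ M.reach s :=
  ⟨[a], by rw [show [a] = a :: [] from rfl, run_cons, h]; rfl⟩

lemma mem_langFrom_iff (s : M.State) (w : List Bool) :
    w ∈ M.langFrom s ↔ (w = [] ∧ s ∈ M.accept) ∨
      (∃ a w' p, w = a :: w' ∧ M.step s a = some p ∧ w' ∈ M.langFrom p) := by
  cases w with
  | nil =>
    constructor
    · rintro ⟨q, hq, hrun⟩
      rw [run_nil] at hrun
      exact Or.inl ⟨rfl, by cases hrun; exact hq⟩
    · rintro (⟨-, h⟩ | ⟨a, w', p, h, -⟩)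
      · exact ⟨s, h, run_nil s⟩
      · simp at h
  | cons a w' =>
    rw [show (a :: w' ∈ M.langFrom s) ↔ ∃ q ∈ M.accept, M.run s (a :: w') = some q from Iff.rfl]
    constructor
    · rintro ⟨q, hq, hrun⟩
      rw [run_cons] at hrun
      cases hstep : M.step s a with
      | none => rw [hstep] at hrun; simp at hrun
      | some p =>
        rw [hstep] at hrun
        exact Or.inr ⟨a, w', p, rfl, hstep, ⟨q, hq, hrun⟩⟩
    · rintro (⟨h, -⟩ | ⟨a', w'', p, heq, hstep, q, hq, hrun⟩)
      · simp at h
      · cases heq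
        exact ⟨q, hq, by rw [run_cons, hstep]; exact hrun⟩

/-- reachability card decrease across a non-returning step. -/
lemma reach_card_lt {s p : M.State} {a : Bool} (hstep : M.step s a = some p)
    (hnr : s ∉ M.reach p) : (M.reach p).ncard + 1 ≤ (M.reach s).ncard := by
  haveI := M.finState
  have hsub : M.reach p ⊆ M.reach s \ {s} := by
    intro x hx
    refine ⟨reach_trans (reach_step hstep) hx, ?_⟩
    intro hxs
    rw [Set.mem_singleton_iff] at hxs
    exact hnr (hxs ▸ hx)
  have h1 : (M.reach p).ncard ≤ (M.reach s \ {s}).ncard :=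
    Set.ncard_le_ncard hsub (Set.toFinite _)
  have h2 : (M.reach s \ {s}).ncard + 1 = (M.reach s).ncard :=
    Set.ncard_diff_singleton_add_one (reach_self s) (Set.toFinite _)
  omega

end PDFA

open PDFA


/-! ### Cycle case machinery -/

open scoped Classical

section Cycle

variable (M : PDFA Bool) (s₀ : M.State)

def Cset : Set M.State := {p | p ∈ M.reach s₀ ∧ s₀ ∈ M.reach p}

def c0 (p : M.State) : Prop := ∃ r, M.step p false = some r ∧ r ∈ Cset M s₀
def c1 (p : M.State) : Prop := ∃ r, M.step p true = some r ∧ r ∈ Cset M s₀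
def branchP (p : M.State) : Prop := c0 M s₀ p ∧ c1 M s₀ p

noncomputable def cchild (p : M.State) (b : Bool) : M.State :=
  if h : ∃ r, M.step p b = some r ∧ r ∈ Cset M s₀ then h.choose else s₀

lemma cchild_spec0 {p : M.State} (h : c0 M s₀ p) :
    M.step p false = some (cchild M s₀ p false) ∧ cchild M s₀ p false ∈ Cset M s₀ := by
  have h' : ∃ r, M.step p false = some r ∧ r ∈ Cset M s₀ := h
  rw [cchild, dif_pos h']
  exact h'.choose_spec

lemma cchild_spec1 {p : M.State} (h : c1 M s₀ p) :
    M.step p true = some (cchild M s₀ p true) ∧ cchild M s₀ p true ∈ Cset M s₀ := by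
  have h' : ∃ r, M.step p true = some r ∧ r ∈ Cset M s₀ := h
  rw [cchild, dif_pos h']
  exact h'.choose_spec

noncomputable def lnext (p : M.State) : M.State :=
  if c0 M s₀ p then cchild M s₀ p false else cchild M s₀ p true

noncomputable def lletter (p : M.State) : Bool :=
  if c0 M s₀ p then false else true

noncomputable def rnext (p : M.State) : M.State :=
  if c1 M s₀ p then cchild M s₀ p true else cchild M s₀ p false

noncomputable def rletter (p : M.State) : Bool :=
  if c1 M s₀ p then true else false

noncomputable def lstate : M.State → ℕ → M.State
  | p, 0 => p
  | p, n + 1 => lstate (lnext M s₀ p) n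

noncomputable def lpath : M.State → ℕ → List Bool
  | _, 0 => []
  | p, n + 1 => lletter M s₀ p :: lpath (lnext M s₀ p) n

noncomputable def rstate : M.State → ℕ → M.State
  | p, 0 => p
  | p, n + 1 => rstate (rnext M s₀ p) n

noncomputable def rpath : M.State → ℕ → List Bool
  | _, 0 => []
  | p, n + 1 => rletter M s₀ p :: rpath (rnext M s₀ p) n

def blockL (p : M.State) : Set (List Bool) :=
  {w | ¬ c0 M s₀ p ∧ ((∃ r e, M.step p false = some r ∧ e ∈ M.langFrom r ∧ w = false :: e) ∨
       (p ∈ M.accept ∧ w = []))}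

def blockR (p : M.State) : Set (List Bool) :=
  {w | ¬ c1 M s₀ p ∧ ((∃ r e, M.step p true = some r ∧ e ∈ M.langFrom r ∧ w = true :: e) ∨
       (p ∈ M.accept ∧ w = []))}

def BLat (p : M.State) (t : ℕ) : Set (List Bool) :=
  {w | ∃ b ∈ blockL M s₀ (lstate M s₀ p t), w = lpath M s₀ p t ++ b}

def TLat (p : M.State) (t : ℕ) : Set (List Bool) :=
  {w | ∃ b ∈ blockR M s₀ (rstate M s₀ p t), w = rpath M s₀ p t ++ b}

def BL (p : M.State) : Set (List Bool) := {w | ∃ t, w ∈ BLat M s₀ p t}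

def TL (p : M.State) : Set (List Bool) := {w | ∃ t, w ∈ TLat M s₀ p t}

def Kp (p : M.State) : Set (List Bool) :=
  {w | (∃ e ∈ TL M s₀ (cchild M s₀ p false), w = false :: e) ∨
       (w = [] ∧ p ∈ M.accept) ∨
       (∃ e ∈ BL M s₀ (cchild M s₀ p true), w = true :: e)}

def MIDw (p : M.State) : Set (List Bool) :=
  {w | ∃ v q k, M.run p v = some q ∧ q ∈ Cset M s₀ ∧ branchP M s₀ q ∧ k ∈ Kp M s₀ q ∧
       w = v ++ k}

@[simp] lemma lstate_zero (p : M.State) : lstate M s₀ p 0 = p := rfl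
@[simp] lemma lpath_zero (p : M.State) : lpath M s₀ p 0 = [] := rfl
@[simp] lemma rstate_zero (p : M.State) : rstate M s₀ p 0 = p := rfl
@[simp] lemma rpath_zero (p : M.State) : rpath M s₀ p 0 = [] := rfl
lemma lstate_succ (p : M.State) (n : ℕ) :
    lstate M s₀ p (n + 1) = lstate M s₀ (lnext M s₀ p) n := rfl
lemma lpath_succ (p : M.State) (n : ℕ) :
    lpath M s₀ p (n + 1) = lletter M s₀ p :: lpath M s₀ (lnext M s₀ p) n := rfl
lemma rstate_succ (p : M.State) (n : ℕ) :
    rstate M s₀ p (n + 1) = rstate M s₀ (rnext M s₀ p) n := rfl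
lemma rpath_succ (p : M.State) (n : ℕ) :
    rpath M s₀ p (n + 1) = rletter M s₀ p :: rpath M s₀ (rnext M s₀ p) n := rfl

variable {M s₀}

lemma s0_mem_C : s₀ ∈ Cset M s₀ := ⟨reach_self s₀, reach_self s₀⟩

lemma midC {p r q : M.State} {a : Bool} {v : List Bool} (hp : p ∈ Cset M s₀)
    (hstep : M.step p a = some r) (hrun : M.run r v = some q) (hq : q ∈ Cset M s₀) :
    r ∈ Cset M s₀ :=
  ⟨reach_trans hp.1 (reach_step hstep), reach_trans ⟨v, hrun⟩ hq.2⟩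

lemma run_to_s0 {p : M.State} (hcyc : ∃ w, w ≠ [] ∧ M.run s₀ w = some s₀)
    (hp : p ∈ Cset M s₀) : ∃ w, w ≠ [] ∧ M.run p w = some s₀ := by
  obtain ⟨u, hu⟩ := hp.2
  cases u with
  | nil =>
    rw [run_nil] at hu
    cases hu
    exact hcyc
  | cons a u' => exact ⟨a :: u', by simp, hu⟩

lemma allC (hcyc : ∃ w, w ≠ [] ∧ M.run s₀ w = some s₀) {p : M.State} (hp : p ∈ Cset M s₀) :
    c0 M s₀ p ∨ c1 M s₀ p := by
  obtain ⟨w, hw, hrun⟩ := run_to_s0 hcyc hp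
  cases w with
  | nil => exact absurd rfl hw
  | cons a w' =>
    rw [run_cons] at hrun
    cases hstep : M.step p a with
    | none => rw [hstep] at hrun; exact absurd hrun (by simp)
    | some r =>
      rw [hstep] at hrun
      have hrC : r ∈ Cset M s₀ := midC hp hstep hrun s0_mem_C
      cases a
      · exact Or.inl ⟨r, hstep, hrC⟩
      · exact Or.inr ⟨r, hstep, hrC⟩

lemma lnext_C (hcyc : ∃ w, w ≠ [] ∧ M.run s₀ w = some s₀) {p : M.State}
    (hp : p ∈ Cset M s₀) : lnext M s₀ p ∈ Cset M s₀ := by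
  rw [lnext]
  by_cases h : c0 M s₀ p
  · rw [if_pos h]; exact (cchild_spec0 M s₀ h).2
  · rw [if_neg h]
    have h1 : c1 M s₀ p := (allC hcyc hp).resolve_left h
    exact (cchild_spec1 M s₀ h1).2

lemma rnext_C (hcyc : ∃ w, w ≠ [] ∧ M.run s₀ w = some s₀) {p : M.State}
    (hp : p ∈ Cset M s₀) : rnext M s₀ p ∈ Cset M s₀ := by
  rw [rnext]
  by_cases h : c1 M s₀ p
  · rw [if_pos h]; exact (cchild_spec1 M s₀ h).2
  · rw [if_neg h]
    have h0 : c0 M s₀ p := (allC hcyc hp).resolve_right h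
    exact (cchild_spec0 M s₀ h0).2

lemma step_lletter (hcyc : ∃ w, w ≠ [] ∧ M.run s₀ w = some s₀) {p : M.State}
    (hp : p ∈ Cset M s₀) : M.step p (lletter M s₀ p) = some (lnext M s₀ p) := by
  rw [lletter, lnext]
  by_cases h : c0 M s₀ p
  · rw [if_pos h, if_pos h]; exact (cchild_spec0 M s₀ h).1
  · rw [if_neg h, if_neg h]
    exact (cchild_spec1 M s₀ ((allC hcyc hp).resolve_left h)).1

lemma step_rletter (hcyc : ∃ w, w ≠ [] ∧ M.run s₀ w = some s₀) {p : M.State}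
    (hp : p ∈ Cset M s₀) : M.step p (rletter M s₀ p) = some (rnext M s₀ p) := by
  rw [rletter, rnext]
  by_cases h : c1 M s₀ p
  · rw [if_pos h, if_pos h]; exact (cchild_spec1 M s₀ h).1
  · rw [if_neg h, if_neg h]
    exact (cchild_spec0 M s₀ ((allC hcyc hp).resolve_right h)).1

lemma lstate_C (hcyc : ∃ w, w ≠ [] ∧ M.run s₀ w = some s₀) :
    ∀ (t : ℕ) {p : M.State}, p ∈ Cset M s₀ → lstate M s₀ p t ∈ Cset M s₀ := by
  intro t
  induction t with
  | zero => intro p hp; exact hp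
  | succ t ih => intro p hp; exact ih (lnext_C hcyc hp)

lemma rstate_C (hcyc : ∃ w, w ≠ [] ∧ M.run s₀ w = some s₀) :
    ∀ (t : ℕ) {p : M.State}, p ∈ Cset M s₀ → rstate M s₀ p t ∈ Cset M s₀ := by
  intro t
  induction t with
  | zero => intro p hp; exact hp
  | succ t ih => intro p hp; exact ih (rnext_C hcyc hp)

lemma lstate_add (p : M.State) (m k : ℕ) :
    lstate M s₀ p (m + k) = lstate M s₀ (lstate M s₀ p m) k := by
  induction m generalizing p with
  | zero => rw [Nat.zero_add]; simp
  | succ m ih =>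
    have h : m + 1 + k = (m + k) + 1 := by omega
    rw [h]
    show lstate M s₀ (lnext M s₀ p) (m + k) = _
    rw [ih]
    rfl

lemma rstate_add (p : M.State) (m k : ℕ) :
    rstate M s₀ p (m + k) = rstate M s₀ (rstate M s₀ p m) k := by
  induction m generalizing p with
  | zero => rw [Nat.zero_add]; simp
  | succ m ih =>
    have h : m + 1 + k = (m + k) + 1 := by omega
    rw [h]
    show rstate M s₀ (rnext M s₀ p) (m + k) = _
    rw [ih]
    rfl

lemma lpath_add (p : M.State) (m k : ℕ) :
    lpath M s₀ p (m + k) = lpath M s₀ p m ++ lpath M s₀ (lstate M s₀ p m) k := by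
  induction m generalizing p with
  | zero => rw [Nat.zero_add]; simp
  | succ m ih =>
    have h : m + 1 + k = (m + k) + 1 := by omega
    rw [h]
    show lletter M s₀ p :: lpath M s₀ (lnext M s₀ p) (m + k) = _
    rw [ih]
    rfl

lemma rpath_add (p : M.State) (m k : ℕ) :
    rpath M s₀ p (m + k) = rpath M s₀ p m ++ rpath M s₀ (rstate M s₀ p m) k := by
  induction m generalizing p with
  | zero => rw [Nat.zero_add]; simp
  | succ m ih =>
    have h : m + 1 + k = (m + k) + 1 := by omega
    rw [h]
    show rletter M s₀ p :: rpath M s₀ (rnext M s₀ p) (m + k) = _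
    rw [ih]
    rfl

lemma run_lpath (hcyc : ∃ w, w ≠ [] ∧ M.run s₀ w = some s₀) :
    ∀ (t : ℕ) {p : M.State}, p ∈ Cset M s₀ →
      M.run p (lpath M s₀ p t) = some (lstate M s₀ p t) := by
  intro t
  induction t with
  | zero => intro p _; rfl
  | succ t ih =>
    intro p hp
    show M.run p (lletter M s₀ p :: lpath M s₀ (lnext M s₀ p) t) = _
    rw [run_cons, step_lletter hcyc hp]
    exact ih (lnext_C hcyc hp)

lemma run_rpath (hcyc : ∃ w, w ≠ [] ∧ M.run s₀ w = some s₀) :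
    ∀ (t : ℕ) {p : M.State}, p ∈ Cset M s₀ →
      M.run p (rpath M s₀ p t) = some (rstate M s₀ p t) := by
  intro t
  induction t with
  | zero => intro p _; rfl
  | succ t ih =>
    intro p hp
    show M.run p (rletter M s₀ p :: rpath M s₀ (rnext M s₀ p) t) = _
    rw [run_cons, step_rletter hcyc hp]
    exact ih (rnext_C hcyc hp)

lemma mem_BL_iff {p : M.State} {w : List Bool} :
    w ∈ BL M s₀ p ↔ w ∈ blockL M s₀ p ∨
      ∃ w', w' ∈ BL M s₀ (lnext M s₀ p) ∧ w = lletter M s₀ p :: w' := by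
  constructor
  · rintro ⟨t, b, hb, rfl⟩
    cases t with
    | zero => exact Or.inl (by simpa using hb)
    | succ t =>
      refine Or.inr ⟨lpath M s₀ (lnext M s₀ p) t ++ b, ⟨t, b, hb, rfl⟩, rfl⟩
  · rintro (hb | ⟨w', ⟨t, b, hb, rfl⟩, rfl⟩)
    · exact ⟨0, w, hb, by simp⟩
    · exact ⟨t + 1, b, hb, rfl⟩

lemma mem_TL_iff {p : M.State} {w : List Bool} :
    w ∈ TL M s₀ p ↔ w ∈ blockR M s₀ p ∨
      ∃ w', w' ∈ TL M s₀ (rnext M s₀ p) ∧ w = rletter M s₀ p :: w' := by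
  constructor
  · rintro ⟨t, b, hb, rfl⟩
    cases t with
    | zero => exact Or.inl (by simpa using hb)
    | succ t =>
      refine Or.inr ⟨rpath M s₀ (rnext M s₀ p) t ++ b, ⟨t, b, hb, rfl⟩, rfl⟩
  · rintro (hb | ⟨w', ⟨t, b, hb, rfl⟩, rfl⟩)
    · exact ⟨0, w, hb, by simp⟩
    · exact ⟨t + 1, b, hb, rfl⟩

end Cycle

section CycleOrder

variable {M : PDFA Bool} {s₀ : M.State}

lemma lemB (hcyc : ∃ w, w ≠ [] ∧ M.run s₀ w = some s₀) :
    ∀ (t : ℕ) {p : M.State}, p ∈ Cset M s₀ →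
    ∀ {x y : List Bool}, x ∈ BLat M s₀ p t → y ∈ TL M s₀ p → inlt x y := by
  intro t
  induction t with
  | zero =>
    intro p hp x y hx hy
    have hb : x ∈ blockL M s₀ p := by
      obtain ⟨b, hb, hxe⟩ := hx
      rw [lstate_zero] at hb
      rw [lpath_zero, List.nil_append] at hxe
      exact hxe ▸ hb
    obtain ⟨hnc0, hcase⟩ := hb
    have hc1 : c1 M s₀ p := (allC hcyc hp).resolve_left hnc0
    rcases mem_TL_iff.mp hy with hbR | ⟨y', _, rfl⟩
    · exact absurd hc1 hbR.1
    · have hrl : rletter M s₀ p = true := by rw [rletter, if_pos hc1]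
      rw [hrl]
      rcases hcase with ⟨r, e, _, _, rfl⟩ | ⟨_, rfl⟩ <;> simp
  | succ t ih =>
    intro p hp x y hx hy
    obtain ⟨b, hb, rfl⟩ := hx
    rw [lstate_succ] at hb
    rw [lpath_succ, List.cons_append]
    have hx' : lpath M s₀ (lnext M s₀ p) t ++ b ∈ BLat M s₀ (lnext M s₀ p) t := ⟨b, hb, rfl⟩
    rcases mem_TL_iff.mp hy with hbR | ⟨y', hy', rfl⟩
    · have hnc1 := hbR.1
      have hc0 : c0 M s₀ p := (allC hcyc hp).resolve_right hnc1
      have hll : lletter M s₀ p = false := by rw [lletter, if_pos hc0]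
      rw [hll]
      rcases hbR.2 with ⟨r, e, _, _, rfl⟩ | ⟨_, rfl⟩ <;> simp
    · by_cases hc0 : c0 M s₀ p
      · by_cases hc1 : c1 M s₀ p
        · have hll : lletter M s₀ p = false := by rw [lletter, if_pos hc0]
          have hrl : rletter M s₀ p = true := by rw [rletter, if_pos hc1]
          rw [hll, hrl]
          simp
        · have hagree : lnext M s₀ p = rnext M s₀ p := by
            rw [lnext, rnext, if_pos hc0, if_neg hc1]
          have hlr : lletter M s₀ p = rletter M s₀ p := by
            rw [lletter, rletter, if_pos hc0, if_neg hc1]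
          rw [hlr]
          exact Or.inr ⟨rfl, ih (lnext_C hcyc hp) hx' (hagree ▸ hy')⟩
      · have hc1 : c1 M s₀ p := (allC hcyc hp).resolve_left hc0
        have hagree : lnext M s₀ p = rnext M s₀ p := by
          rw [lnext, rnext, if_neg hc0, if_pos hc1]
        have hlr : lletter M s₀ p = rletter M s₀ p := by
          rw [lletter, rletter, if_neg hc0, if_pos hc1]
        rw [hlr]
        exact Or.inr ⟨rfl, ih (lnext_C hcyc hp) hx' (hagree ▸ hy')⟩

lemma lemA (hcyc : ∃ w, w ≠ [] ∧ M.run s₀ w = some s₀) :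
    ∀ (v : List Bool) {p q : M.State}, p ∈ Cset M s₀ → M.run p v = some q →
    q ∈ Cset M s₀ → branchP M s₀ q → ∀ {x}, x ∈ BL M s₀ p → ∀ {k}, k ∈ Kp M s₀ q →
    inlt x (v ++ k) := by
  intro v
  induction v with
  | nil =>
    intro p q hp hrun hq hbr x hx k hk
    rw [run_nil] at hrun
    cases hrun
    obtain ⟨hc0, hc1⟩ := hbr
    rcases mem_BL_iff.mp hx with hbL | ⟨x', hx', rfl⟩
    · exact absurd hc0 hbL.1
    · have hll : lletter M s₀ p = false := by rw [lletter, if_pos hc0]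
      have hlx : lnext M s₀ p = cchild M s₀ p false := by rw [lnext, if_pos hc0]
      rw [hll, List.nil_append]
      rcases hk with ⟨e, he, rfl⟩ | ⟨rfl, _⟩ | ⟨e, he, rfl⟩
      · obtain ⟨t, hx't⟩ := hlx ▸ hx'
        exact Or.inr ⟨rfl, lemB hcyc t (cchild_spec0 M s₀ hc0).2 hx't he⟩
      · simp
      · simp
  | cons b v' ihv =>
    intro p q hp hrun hq hbr x hx k hk
    rw [run_cons] at hrun
    cases hstep : M.step p b with
    | none => rw [hstep] at hrun; simp at hrun
    | some r =>
      rw [hstep] at hrun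
      simp only [Option.bind_some] at hrun
      have hrC : r ∈ Cset M s₀ := midC hp hstep hrun hq
      rcases mem_BL_iff.mp hx with hbL | ⟨x', hx', rfl⟩
      · have hnc0 := hbL.1
        have hb : b = true := by
          cases b
          · exact absurd ⟨r, hstep, hrC⟩ hnc0
          · rfl
        subst hb
        rcases hbL.2 with ⟨r', e, _, _, rfl⟩ | ⟨_, rfl⟩ <;> simp
      · cases b
        · have hc0 : c0 M s₀ p := ⟨r, hstep, hrC⟩
          have hll : lletter M s₀ p = false := by rw [lletter, if_pos hc0]
          have hlx : lnext M s₀ p = r := by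
            rw [lnext, if_pos hc0]
            exact Option.some.inj ((cchild_spec0 M s₀ hc0).1.symm.trans hstep)
          rw [hll, List.cons_append]
          exact Or.inr ⟨rfl, ihv hrC hrun hq hbr (hlx ▸ hx') hk⟩
        · by_cases hc0 : c0 M s₀ p
          · have hll : lletter M s₀ p = false := by rw [lletter, if_pos hc0]
            rw [hll, List.cons_append]
            simp
          · have hc1 : c1 M s₀ p := ⟨r, hstep, hrC⟩
            have hll : lletter M s₀ p = true := by rw [lletter, if_neg hc0]
            have hlx : lnext M s₀ p = r := by
              rw [lnext, if_neg hc0]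
              exact Option.some.inj ((cchild_spec1 M s₀ hc1).1.symm.trans hstep)
            rw [hll, List.cons_append]
            exact Or.inr ⟨rfl, ihv hrC hrun hq hbr (hlx ▸ hx') hk⟩

lemma lemA' (hcyc : ∃ w, w ≠ [] ∧ M.run s₀ w = some s₀) :
    ∀ (v : List Bool) {p q : M.State}, p ∈ Cset M s₀ → M.run p v = some q →
    q ∈ Cset M s₀ → branchP M s₀ q → ∀ {k}, k ∈ Kp M s₀ q → ∀ {y}, y ∈ TL M s₀ p →
    inlt (v ++ k) y := by
  intro v
  induction v with
  | nil =>
    intro p q hp hrun hq hbr k hk y hy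
    rw [run_nil] at hrun
    cases hrun
    obtain ⟨hc0, hc1⟩ := hbr
    rcases mem_TL_iff.mp hy with hbR | ⟨y', hy', rfl⟩
    · exact absurd hc1 hbR.1
    · have hrl : rletter M s₀ p = true := by rw [rletter, if_pos hc1]
      have hrx : rnext M s₀ p = cchild M s₀ p true := by rw [rnext, if_pos hc1]
      rw [hrl, List.nil_append]
      rcases hk with ⟨e, he, rfl⟩ | ⟨rfl, _⟩ | ⟨e, he, rfl⟩
      · simp
      · simp
      · obtain ⟨t, het⟩ := he
        exact Or.inr ⟨rfl, lemB hcyc t (cchild_spec1 M s₀ hc1).2 het (hrx ▸ hy')⟩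
  | cons b v' ihv =>
    intro p q hp hrun hq hbr k hk y hy
    rw [run_cons] at hrun
    cases hstep : M.step p b with
    | none => rw [hstep] at hrun; simp at hrun
    | some r =>
      rw [hstep] at hrun
      simp only [Option.bind_some] at hrun
      have hrC : r ∈ Cset M s₀ := midC hp hstep hrun hq
      rcases mem_TL_iff.mp hy with hbR | ⟨y', hy', rfl⟩
      · have hnc1 := hbR.1
        have hb : b = false := by
          cases b
          · rfl
          · exact absurd ⟨r, hstep, hrC⟩ hnc1
        subst hb
        rcases hbR.2 with ⟨r', e, _, _, rfl⟩ | ⟨_, rfl⟩ <;> simp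
      · cases b
        · by_cases hc1 : c1 M s₀ p
          · have hrl : rletter M s₀ p = true := by rw [rletter, if_pos hc1]
            rw [hrl, List.cons_append]
            simp
          · have hc0 : c0 M s₀ p := ⟨r, hstep, hrC⟩
            have hrl : rletter M s₀ p = false := by rw [rletter, if_neg hc1]
            have hrx : rnext M s₀ p = r := by
              rw [rnext, if_neg hc1]
              exact Option.some.inj ((cchild_spec0 M s₀ hc0).1.symm.trans hstep)
            rw [hrl, List.cons_append]
            exact Or.inr ⟨rfl, ihv hrC hrun hq hbr hk (hrx ▸ hy')⟩
        · have hc1 : c1 M s₀ p := ⟨r, hstep, hrC⟩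
          have hrl : rletter M s₀ p = true := by rw [rletter, if_pos hc1]
          have hrx : rnext M s₀ p = r := by
            rw [rnext, if_pos hc1]
            exact Option.some.inj ((cchild_spec1 M s₀ hc1).1.symm.trans hstep)
          rw [hrl, List.cons_append]
          exact Or.inr ⟨rfl, ihv hrC hrun hq hbr hk (hrx ▸ hy')⟩

lemma lemCR (hcyc : ∃ w, w ≠ [] ∧ M.run s₀ w = some s₀) :
    ∀ (v : List Bool) {v' : List Bool} {p q q' : M.State}, p ∈ Cset M s₀ →
    M.run p v = some q → q ∈ Cset M s₀ → branchP M s₀ q →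
    M.run p v' = some q' → q' ∈ Cset M s₀ → branchP M s₀ q' → inlt v v' →
    ∀ {k}, k ∈ Kp M s₀ q → ∀ {k'}, k' ∈ Kp M s₀ q' → inlt (v ++ k) (v' ++ k') := by
  intro v
  induction v with
  | nil =>
    intro v' p q q' hp hrun hq hbr hrun' hq' hbr' hvv' k hk k' hk'
    rw [run_nil] at hrun
    cases hrun
    cases v' with
    | nil => simp at hvv'
    | cons b' v'' =>
      rw [inlt_nil_cons] at hvv'
      subst hvv'
      rw [run_cons] at hrun'
      cases hstep : M.step p true with
      | none => rw [hstep] at hrun'; simp at hrun'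
      | some r =>
        rw [hstep] at hrun'
        simp only [Option.bind_some] at hrun'
        have hrC : r ∈ Cset M s₀ := midC hp hstep hrun' hq'
        rw [List.nil_append, List.cons_append]
        rcases hk with ⟨e, he, rfl⟩ | ⟨rfl, _⟩ | ⟨e, he, rfl⟩
        · simp
        · simp
        · have hc1 : c1 M s₀ p := ⟨r, hstep, hrC⟩
          have hcc : cchild M s₀ p true = r :=
            Option.some.inj ((cchild_spec1 M s₀ hc1).1.symm.trans hstep)
          exact Or.inr ⟨rfl, lemA hcyc v'' hrC hrun' hq' hbr' (hcc ▸ he) hk'⟩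
  | cons b v'' ihv =>
    intro v' p q q' hp hrun hq hbr hrun' hq' hbr' hvv' k hk k' hk'
    rw [run_cons] at hrun
    cases hstep : M.step p b with
    | none => rw [hstep] at hrun; simp at hrun
    | some r =>
      rw [hstep] at hrun
      simp only [Option.bind_some] at hrun
      have hrC : r ∈ Cset M s₀ := midC hp hstep hrun hq
      cases v' with
      | nil =>
        rw [run_nil] at hrun'
        cases hrun'
        rw [inlt_cons_nil] at hvv'
        subst hvv'
        have hc0 : c0 M s₀ p := ⟨r, hstep, hrC⟩
        have hcc : cchild M s₀ p false = r :=
          Option.some.inj ((cchild_spec0 M s₀ hc0).1.symm.trans hstep)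
        rw [List.nil_append, List.cons_append]
        rcases hk' with ⟨e, he, rfl⟩ | ⟨rfl, _⟩ | ⟨e, he, rfl⟩
        · exact Or.inr ⟨rfl, lemA' hcyc v'' hrC hrun hq hbr hk (hcc ▸ he)⟩
        · simp
        · simp
      | cons c' v''' =>
        rcases hvv' with ⟨rfl, rfl⟩ | ⟨rfl, hlt'⟩
        · rw [List.cons_append, List.cons_append]
          simp
        · rw [run_cons, hstep] at hrun'
          simp only [Option.bind_some] at hrun'
          rw [List.cons_append, List.cons_append]
          exact Or.inr ⟨rfl, ihv hrC hrun hq hbr hrun' hq' hbr' hlt' hk hk'⟩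

end CycleOrder

section CyclePartition

variable {M : PDFA Bool} {s₀ : M.State}

lemma BL_sub_lang (hcyc : ∃ w, w ≠ [] ∧ M.run s₀ w = some s₀) {p : M.State}
    (hp : p ∈ Cset M s₀) : BL M s₀ p ⊆ M.langFrom p := by
  rintro w ⟨t, b, hb, rfl⟩
  have hrun := run_lpath hcyc t hp
  obtain ⟨-, hcase⟩ := hb
  rcases hcase with ⟨r, e, hstep, ⟨qe, hqe, hrune⟩, rfl⟩ | ⟨hacc, rfl⟩
  · refine ⟨qe, hqe, ?_⟩
    rw [run_append, hrun, Option.bind_some, run_cons, hstep, Option.bind_some]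
    exact hrune
  · exact ⟨lstate M s₀ p t, hacc, by rw [List.append_nil, hrun]⟩

lemma TL_sub_lang (hcyc : ∃ w, w ≠ [] ∧ M.run s₀ w = some s₀) {p : M.State}
    (hp : p ∈ Cset M s₀) : TL M s₀ p ⊆ M.langFrom p := by
  rintro w ⟨t, b, hb, rfl⟩
  have hrun := run_rpath hcyc t hp
  obtain ⟨-, hcase⟩ := hb
  rcases hcase with ⟨r, e, hstep, ⟨qe, hqe, hrune⟩, rfl⟩ | ⟨hacc, rfl⟩
  · refine ⟨qe, hqe, ?_⟩
    rw [run_append, hrun, Option.bind_some, run_cons, hstep, Option.bind_some]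
    exact hrune
  · exact ⟨rstate M s₀ p t, hacc, by rw [List.append_nil, hrun]⟩

lemma Kp_sub_lang (hcyc : ∃ w, w ≠ [] ∧ M.run s₀ w = some s₀) {q : M.State}
    (hq : q ∈ Cset M s₀) (hbr : branchP M s₀ q) : Kp M s₀ q ⊆ M.langFrom q := by
  rintro k (⟨e, he, rfl⟩ | ⟨rfl, hacc⟩ | ⟨e, he, rfl⟩)
  · obtain ⟨qe, hqe, hrune⟩ := TL_sub_lang hcyc (cchild_spec0 M s₀ hbr.1).2 he
    exact ⟨qe, hqe, by rw [run_cons, (cchild_spec0 M s₀ hbr.1).1, Option.bind_some]; exact hrune⟩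
  · exact ⟨q, hacc, run_nil q⟩
  · obtain ⟨qe, hqe, hrune⟩ := BL_sub_lang hcyc (cchild_spec1 M s₀ hbr.2).2 he
    exact ⟨qe, hqe, by rw [run_cons, (cchild_spec1 M s₀ hbr.2).1, Option.bind_some]; exact hrune⟩

lemma MID_sub_lang (hcyc : ∃ w, w ≠ [] ∧ M.run s₀ w = some s₀) {p : M.State} :
    MIDw M s₀ p ⊆ M.langFrom p := by
  rintro w ⟨v, q, k, hrunv, hqC, hbr, hkK, rfl⟩
  obtain ⟨qe, hqe, hrune⟩ := Kp_sub_lang hcyc hqC hbr hkK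
  exact ⟨qe, hqe, by rw [run_append, hrunv, Option.bind_some]; exact hrune⟩

lemma G1sub (hcyc : ∃ w, w ≠ [] ∧ M.run s₀ w = some s₀) :
    ∀ (w : List Bool) {p : M.State}, p ∈ Cset M s₀ → w ∈ M.langFrom p →
    w ∈ BL M s₀ p ∨ w ∈ MIDw M s₀ p ∨ w ∈ TL M s₀ p := by
  intro w
  induction w with
  | nil =>
    intro p hp hw
    have hacc : p ∈ M.accept := by
      obtain ⟨q, hq, hrun⟩ := hw
      rw [run_nil] at hrun
      cases hrun
      exact hq
    by_cases hc0 : c0 M s₀ p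
    · by_cases hc1 : c1 M s₀ p
      · exact Or.inr (Or.inl ⟨[], p, [], run_nil p, hp, ⟨hc0, hc1⟩,
          Or.inr (Or.inl ⟨rfl, hacc⟩), rfl⟩)
      · exact Or.inr (Or.inr (mem_TL_iff.mpr (Or.inl ⟨hc1, Or.inr ⟨hacc, rfl⟩⟩)))
    · exact Or.inl (mem_BL_iff.mpr (Or.inl ⟨hc0, Or.inr ⟨hacc, rfl⟩⟩))
  | cons a w' ih =>
    intro p hp hw
    obtain ⟨qf, hqf, hrun⟩ := hw
    rw [run_cons] at hrun
    cases hstep : M.step p a with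
    | none => rw [hstep] at hrun; simp at hrun
    | some r =>
      rw [hstep, Option.bind_some] at hrun
      have hw' : w' ∈ M.langFrom r := ⟨qf, hqf, hrun⟩
      by_cases hrC : r ∈ Cset M s₀
      · rcases ih hrC hw' with hBL | hMID | hTL
        · cases a
          · have hc0 : c0 M s₀ p := ⟨r, hstep, hrC⟩
            have hll : lletter M s₀ p = false := by rw [lletter, if_pos hc0]
            have hlx : lnext M s₀ p = r := by
              rw [lnext, if_pos hc0]
              exact Option.some.inj ((cchild_spec0 M s₀ hc0).1.symm.trans hstep)
            refine Or.inl (mem_BL_iff.mpr (Or.inr ⟨w', ?_, by rw [hll]⟩))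
            rw [hlx]; exact hBL
          · by_cases hc0 : c0 M s₀ p
            · have hc1 : c1 M s₀ p := ⟨r, hstep, hrC⟩
              have hcc : cchild M s₀ p true = r :=
                Option.some.inj ((cchild_spec1 M s₀ hc1).1.symm.trans hstep)
              refine Or.inr (Or.inl ⟨[], p, true :: w', run_nil p, hp, ⟨hc0, hc1⟩,
                Or.inr (Or.inr ⟨w', ?_, rfl⟩), rfl⟩)
              rw [hcc]; exact hBL
            · have hc1 : c1 M s₀ p := ⟨r, hstep, hrC⟩
              have hll : lletter M s₀ p = true := by rw [lletter, if_neg hc0]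
              have hlx : lnext M s₀ p = r := by
                rw [lnext, if_neg hc0]
                exact Option.some.inj ((cchild_spec1 M s₀ hc1).1.symm.trans hstep)
              refine Or.inl (mem_BL_iff.mpr (Or.inr ⟨w', ?_, by rw [hll]⟩))
              rw [hlx]; exact hBL
        · obtain ⟨v, q, k, hrunv, hqC, hbr, hkK, rfl⟩ := hMID
          exact Or.inr (Or.inl ⟨a :: v, q, k,
            by rw [run_cons, hstep, Option.bind_some]; exact hrunv, hqC, hbr, hkK, rfl⟩)
        · cases a
          · by_cases hc1 : c1 M s₀ p
            · have hc0 : c0 M s₀ p := ⟨r, hstep, hrC⟩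
              have hcc : cchild M s₀ p false = r :=
                Option.some.inj ((cchild_spec0 M s₀ hc0).1.symm.trans hstep)
              refine Or.inr (Or.inl ⟨[], p, false :: w', run_nil p, hp, ⟨hc0, hc1⟩,
                Or.inl ⟨w', ?_, rfl⟩, rfl⟩)
              rw [hcc]; exact hTL
            · have hc0 : c0 M s₀ p := ⟨r, hstep, hrC⟩
              have hrl : rletter M s₀ p = false := by rw [rletter, if_neg hc1]
              have hrx : rnext M s₀ p = r := by
                rw [rnext, if_neg hc1]
                exact Option.some.inj ((cchild_spec0 M s₀ hc0).1.symm.trans hstep)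
              refine Or.inr (Or.inr (mem_TL_iff.mpr (Or.inr ⟨w', ?_, by rw [hrl]⟩)))
              rw [hrx]; exact hTL
          · have hc1 : c1 M s₀ p := ⟨r, hstep, hrC⟩
            have hrl : rletter M s₀ p = true := by rw [rletter, if_pos hc1]
            have hrx : rnext M s₀ p = r := by
              rw [rnext, if_pos hc1]
              exact Option.some.inj ((cchild_spec1 M s₀ hc1).1.symm.trans hstep)
            refine Or.inr (Or.inr (mem_TL_iff.mpr (Or.inr ⟨w', ?_, by rw [hrl]⟩)))
            rw [hrx]; exact hTL
      · cases a
        · have hnc0 : ¬ c0 M s₀ p := by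
            rintro ⟨r', hstep', hr'C⟩
            rw [hstep] at hstep'
            cases hstep'
            exact hrC hr'C
          exact Or.inl (mem_BL_iff.mpr (Or.inl ⟨hnc0, Or.inl ⟨r, w', hstep, hw', rfl⟩⟩))
        · have hnc1 : ¬ c1 M s₀ p := by
            rintro ⟨r', hstep', hr'C⟩
            rw [hstep] at hstep'
            cases hstep'
            exact hrC hr'C
          exact Or.inr (Or.inr (mem_TL_iff.mpr (Or.inl ⟨hnc1, Or.inl ⟨r, w', hstep, hw', rfl⟩⟩)))

end CyclePartition

section CycleFD

variable {M : PDFA Bool} {s₀ : M.State}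

lemma lpath_one (p : M.State) : lpath M s₀ p 1 = [lletter M s₀ p] := rfl
lemma rpath_one (p : M.State) : rpath M s₀ p 1 = [rletter M s₀ p] := rfl

lemma lpath_succ_right (p : M.State) (t : ℕ) :
    lpath M s₀ p (t + 1) = lpath M s₀ p t ++ [lletter M s₀ (lstate M s₀ p t)] := by
  have h := lpath_add (s₀ := s₀) p t 1
  rw [h, lpath_one]

lemma rpath_succ_right (p : M.State) (t : ℕ) :
    rpath M s₀ p (t + 1) = rpath M s₀ p t ++ [rletter M s₀ (rstate M s₀ p t)] := by
  have h := rpath_add (s₀ := s₀) p t 1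
  rw [h, rpath_one]

lemma lpath_decomp {p : M.State} {t n : ℕ} (htn : t < n) :
    lpath M s₀ p n = lpath M s₀ p t ++ (lletter M s₀ (lstate M s₀ p t) ::
      lpath M s₀ (lstate M s₀ p (t + 1)) (n - (t + 1))) := by
  have h2 := lpath_add (s₀ := s₀) p (t + 1) (n - (t + 1))
  rw [show t + 1 + (n - (t + 1)) = n by omega] at h2
  rw [h2, lpath_succ_right, List.append_assoc, List.singleton_append]

lemma rpath_decomp {p : M.State} {t n : ℕ} (htn : t < n) :
    rpath M s₀ p n = rpath M s₀ p t ++ (rletter M s₀ (rstate M s₀ p t) ::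
      rpath M s₀ (rstate M s₀ p (t + 1)) (n - (t + 1))) := by
  have h2 := rpath_add (s₀ := s₀) p (t + 1) (n - (t + 1))
  rw [show t + 1 + (n - (t + 1)) = n by omega] at h2
  rw [h2, rpath_succ_right, List.append_assoc, List.singleton_append]

lemma sepBL {p : M.State} {t n : ℕ} (htn : t < n) {x : List Bool}
    (hx : x ∈ BLat M s₀ p t) (z : List Bool) : inlt x (lpath M s₀ p n ++ z) := by
  obtain ⟨b, hb, rfl⟩ := hx
  have hll : lletter M s₀ (lstate M s₀ p t) = true := by rw [lletter, if_neg hb.1]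
  rw [lpath_decomp htn, hll, List.append_assoc, inlt_append_iff, List.cons_append]
  rcases hb.2 with ⟨r, e, _, _, rfl⟩ | ⟨_, rfl⟩ <;> simp

lemma sepTL {p : M.State} {t n : ℕ} (htn : t < n) {y : List Bool}
    (hy : y ∈ TLat M s₀ p t) (z : List Bool) : inlt (rpath M s₀ p n ++ z) y := by
  obtain ⟨b, hb, rfl⟩ := hy
  have hrl : rletter M s₀ (rstate M s₀ p t) = false := by rw [rletter, if_neg hb.1]
  rw [rpath_decomp htn, hrl, List.append_assoc, inlt_append_iff, List.cons_append]
  rcases hb.2 with ⟨r, e, _, _, rfl⟩ | ⟨_, rfl⟩ <;> simp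

lemma npBL {p : M.State} {t n : ℕ} (htn : t < n) {v : List Bool}
    (hv : v ∈ BLat M s₀ p t) : ¬ lpath M s₀ p n <+: v := by
  obtain ⟨b, hb, rfl⟩ := hv
  have hll : lletter M s₀ (lstate M s₀ p t) = true := by rw [lletter, if_neg hb.1]
  rintro ⟨tl, htl⟩
  rw [lpath_decomp htn, hll, List.append_assoc] at htl
  have h2 := List.append_cancel_left htl
  rw [List.cons_append] at h2
  rcases hb.2 with ⟨r, e, _, _, rfl⟩ | ⟨_, rfl⟩ <;> simp at h2

lemma npTL {p : M.State} {t n : ℕ} (htn : t < n) {v : List Bool}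
    (hv : v ∈ TLat M s₀ p t) : ¬ rpath M s₀ p n <+: v := by
  obtain ⟨b, hb, rfl⟩ := hv
  have hrl : rletter M s₀ (rstate M s₀ p t) = false := by rw [rletter, if_neg hb.1]
  rintro ⟨tl, htl⟩
  rw [rpath_decomp htn, hrl, List.append_assoc] at htl
  have h2 := List.append_cancel_left htl
  rw [List.cons_append] at h2
  rcases hb.2 with ⟨r, e, _, _, rfl⟩ | ⟨_, rfl⟩ <;> simp at h2

/-- `FinDescW` for a single block. -/
lemma blockL_fd
    (hE : ∀ p r (b : Bool), p ∈ Cset M s₀ → M.step p b = some r → r ∉ Cset M s₀ →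
      FinDescW (M.langFrom r))
    {p : M.State} (hp : p ∈ Cset M s₀) : FinDescW (blockL M s₀ p) := by
  by_cases hc0 : c0 M s₀ p
  · exact FinDescW.ofEmpty (by rintro w ⟨hn, -⟩; exact hn hc0)
  · cases hstep : M.step p false with
    | none =>
      by_cases hacc : p ∈ M.accept
      · refine FinDescW.ofSingleton [] ?_
        intro w
        constructor
        · rintro ⟨-, ⟨r, e, hstep', -, rfl⟩ | ⟨-, rfl⟩⟩
          · rw [hstep] at hstep'; exact nomatch hstep'
          · rfl
        · rintro rfl
          exact ⟨hc0, Or.inr ⟨hacc, rfl⟩⟩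
      · refine FinDescW.ofEmpty ?_
        rintro w ⟨-, ⟨r, e, hstep', -, rfl⟩ | ⟨hacc', -⟩⟩
        · rw [hstep] at hstep'; exact nomatch hstep'
        · exact hacc hacc'
    | some r =>
      have hrnC : r ∉ Cset M s₀ := fun hrC => hc0 ⟨r, hstep, hrC⟩
      have hfr := FinDescW.append [false] (hE p r false hp hstep hrnC)
      by_cases hacc : p ∈ M.accept
      · refine FinDescW.split (S₁ := {w | ∃ v ∈ M.langFrom r, w = [false] ++ v})
          (S₂ := {w | w = []}) ?_ ?_ hfr (FinDescW.ofSingleton [] (fun w => Iff.rfl))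
        · intro w
          constructor
          · rintro ⟨-, ⟨r', e, hstep', he, rfl⟩ | ⟨-, rfl⟩⟩
            · rw [hstep] at hstep'
              cases hstep'
              exact Or.inl ⟨e, he, rfl⟩
            · exact Or.inr rfl
          · rintro (⟨e, he, rfl⟩ | rfl)
            · exact ⟨hc0, Or.inl ⟨r, e, hstep, he, rfl⟩⟩
            · exact ⟨hc0, Or.inr ⟨hacc, rfl⟩⟩
        · rintro x ⟨e, -, rfl⟩ y rfl
          simp
      · apply hfr.congr
        ext w
        constructor
        · rintro ⟨-, ⟨r', e, hstep', he, rfl⟩ | ⟨hacc', -⟩⟩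
          · rw [hstep] at hstep'
            cases hstep'
            exact ⟨e, he, rfl⟩
          · exact absurd hacc' hacc
        · rintro ⟨e, he, rfl⟩
          exact ⟨hc0, Or.inl ⟨r, e, hstep, he, rfl⟩⟩

lemma blockR_fd
    (hE : ∀ p r (b : Bool), p ∈ Cset M s₀ → M.step p b = some r → r ∉ Cset M s₀ →
      FinDescW (M.langFrom r))
    {p : M.State} (hp : p ∈ Cset M s₀) : FinDescW (blockR M s₀ p) := by
  by_cases hc1 : c1 M s₀ p
  · exact FinDescW.ofEmpty (by rintro w ⟨hn, -⟩; exact hn hc1)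
  · cases hstep : M.step p true with
    | none =>
      by_cases hacc : p ∈ M.accept
      · refine FinDescW.ofSingleton [] ?_
        intro w
        constructor
        · rintro ⟨-, ⟨r, e, hstep', -, rfl⟩ | ⟨-, rfl⟩⟩
          · rw [hstep] at hstep'; exact nomatch hstep'
          · rfl
        · rintro rfl
          exact ⟨hc1, Or.inr ⟨hacc, rfl⟩⟩
      · refine FinDescW.ofEmpty ?_
        rintro w ⟨-, ⟨r, e, hstep', -, rfl⟩ | ⟨hacc', -⟩⟩
        · rw [hstep] at hstep'; exact nomatch hstep'
        · exact hacc hacc'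
    | some r =>
      have hrnC : r ∉ Cset M s₀ := fun hrC => hc1 ⟨r, hstep, hrC⟩
      have hfr := FinDescW.append [true] (hE p r true hp hstep hrnC)
      by_cases hacc : p ∈ M.accept
      · refine FinDescW.split (S₁ := {w | w = []})
          (S₂ := {w | ∃ v ∈ M.langFrom r, w = [true] ++ v}) ?_ ?_
          (FinDescW.ofSingleton [] (fun w => Iff.rfl)) hfr
        · intro w
          constructor
          · rintro ⟨-, ⟨r', e, hstep', he, rfl⟩ | ⟨-, rfl⟩⟩
            · rw [hstep] at hstep'
              cases hstep'
              exact Or.inr ⟨e, he, rfl⟩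
            · exact Or.inl rfl
          · rintro (rfl | ⟨e, he, rfl⟩)
            · exact ⟨hc1, Or.inr ⟨hacc, rfl⟩⟩
            · exact ⟨hc1, Or.inl ⟨r, e, hstep, he, rfl⟩⟩
        · rintro x rfl y ⟨e, -, rfl⟩
          simp
      · apply hfr.congr
        ext w
        constructor
        · rintro ⟨-, ⟨r', e, hstep', he, rfl⟩ | ⟨hacc', -⟩⟩
          · rw [hstep] at hstep'
            cases hstep'
            exact ⟨e, he, rfl⟩
          · exact absurd hacc' hacc
        · rintro ⟨e, he, rfl⟩
          exact ⟨hc1, Or.inl ⟨r, e, hstep, he, rfl⟩⟩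

def BLfin (M : PDFA Bool) (s₀ p : M.State) (n : ℕ) : Set (List Bool) :=
  {w | ∃ t < n, w ∈ BLat M s₀ p t}

def TLfin (M : PDFA Bool) (s₀ p : M.State) (n : ℕ) : Set (List Bool) :=
  {w | ∃ t < n, w ∈ TLat M s₀ p t}

lemma mem_BLat_zero {p : M.State} {w : List Bool} :
    w ∈ BLat M s₀ p 0 ↔ w ∈ blockL M s₀ p := by
  constructor
  · rintro ⟨b, hb, hxe⟩
    rw [lstate_zero] at hb
    rw [lpath_zero, List.nil_append] at hxe
    exact hxe ▸ hb
  · intro h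
    exact ⟨w, by simpa using h, by simp⟩

lemma mem_TLat_zero {p : M.State} {w : List Bool} :
    w ∈ TLat M s₀ p 0 ↔ w ∈ blockR M s₀ p := by
  constructor
  · rintro ⟨b, hb, hxe⟩
    rw [rstate_zero] at hb
    rw [rpath_zero, List.nil_append] at hxe
    exact hxe ▸ hb
  · intro h
    exact ⟨w, by simpa using h, by simp⟩

lemma mem_BLat_succ {p : M.State} {t : ℕ} {w : List Bool} :
    w ∈ BLat M s₀ p (t + 1) ↔
      ∃ w', w' ∈ BLat M s₀ (lnext M s₀ p) t ∧ w = lletter M s₀ p :: w' := by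
  constructor
  · rintro ⟨b, hb, rfl⟩
    rw [lstate_succ] at hb
    exact ⟨lpath M s₀ (lnext M s₀ p) t ++ b, ⟨b, hb, rfl⟩, rfl⟩
  · rintro ⟨w', ⟨b, hb, rfl⟩, rfl⟩
    exact ⟨b, hb, rfl⟩

lemma mem_TLat_succ {p : M.State} {t : ℕ} {w : List Bool} :
    w ∈ TLat M s₀ p (t + 1) ↔
      ∃ w', w' ∈ TLat M s₀ (rnext M s₀ p) t ∧ w = rletter M s₀ p :: w' := by
  constructor
  · rintro ⟨b, hb, rfl⟩
    rw [rstate_succ] at hb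
    exact ⟨rpath M s₀ (rnext M s₀ p) t ++ b, ⟨b, hb, rfl⟩, rfl⟩
  · rintro ⟨w', ⟨b, hb, rfl⟩, rfl⟩
    exact ⟨b, hb, rfl⟩

lemma BLfin_fd (hcyc : ∃ w, w ≠ [] ∧ M.run s₀ w = some s₀)
    (hE : ∀ p r (b : Bool), p ∈ Cset M s₀ → M.step p b = some r → r ∉ Cset M s₀ →
      FinDescW (M.langFrom r)) :
    ∀ (n : ℕ) {p : M.State}, p ∈ Cset M s₀ → FinDescW (BLfin M s₀ p n) := by
  intro n
  induction n with
  | zero =>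
    intro p hp
    exact FinDescW.ofEmpty (by rintro w ⟨t, ht, -⟩; omega)
  | succ n ih =>
    intro p hp
    refine FinDescW.split (S₁ := blockL M s₀ p)
      (S₂ := {w | ∃ w' ∈ BLfin M s₀ (lnext M s₀ p) n, w = [lletter M s₀ p] ++ w'}) ?_ ?_
      (blockL_fd hE hp) ?_
    · intro w
      constructor
      · rintro ⟨t, ht, hw⟩
        cases t with
        | zero => exact Or.inl (mem_BLat_zero.mp hw)
        | succ t =>
          obtain ⟨w', hw', rfl⟩ := mem_BLat_succ.mp hw
          exact Or.inr ⟨w', ⟨t, by omega, hw'⟩, rfl⟩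
      · rintro (hw | ⟨w', ⟨t, ht, hw'⟩, rfl⟩)
        · exact ⟨0, by omega, mem_BLat_zero.mpr hw⟩
        · exact ⟨t + 1, by omega, mem_BLat_succ.mpr ⟨w', hw', rfl⟩⟩
    · rintro x hx y ⟨w', -, rfl⟩
      have hx0 : x ∈ BLat M s₀ p 0 := mem_BLat_zero.mpr hx
      have := sepBL (Nat.zero_lt_one) hx0 w'
      rwa [lpath_one] at this
    · exact FinDescW.append [lletter M s₀ p] (ih (lnext_C hcyc hp))

lemma TLfin_fd (hcyc : ∃ w, w ≠ [] ∧ M.run s₀ w = some s₀)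
    (hE : ∀ p r (b : Bool), p ∈ Cset M s₀ → M.step p b = some r → r ∉ Cset M s₀ →
      FinDescW (M.langFrom r)) :
    ∀ (n : ℕ) {p : M.State}, p ∈ Cset M s₀ → FinDescW (TLfin M s₀ p n) := by
  intro n
  induction n with
  | zero =>
    intro p hp
    exact FinDescW.ofEmpty (by rintro w ⟨t, ht, -⟩; omega)
  | succ n ih =>
    intro p hp
    refine FinDescW.split
      (S₁ := {w | ∃ w' ∈ TLfin M s₀ (rnext M s₀ p) n, w = [rletter M s₀ p] ++ w'})
      (S₂ := blockR M s₀ p) ?_ ?_ ?_ (blockR_fd hE hp)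
    · intro w
      constructor
      · rintro ⟨t, ht, hw⟩
        cases t with
        | zero => exact Or.inr (mem_TLat_zero.mp hw)
        | succ t =>
          obtain ⟨w', hw', rfl⟩ := mem_TLat_succ.mp hw
          exact Or.inl ⟨w', ⟨t, by omega, hw'⟩, rfl⟩
      · rintro (⟨w', ⟨t, ht, hw'⟩, rfl⟩ | hw)
        · exact ⟨t + 1, by omega, mem_TLat_succ.mpr ⟨w', hw', rfl⟩⟩
        · exact ⟨0, by omega, mem_TLat_zero.mpr hw⟩
    · rintro x ⟨w', -, rfl⟩ y hy
      have hy0 : y ∈ TLat M s₀ p 0 := mem_TLat_zero.mpr hy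
      have := sepTL (Nat.zero_lt_one) hy0 w'
      rwa [rpath_one] at this
    · exact FinDescW.append [rletter M s₀ p] (ih (rnext_C hcyc hp))

lemma lstate_mul {s₁ : M.State} {k : ℕ} (hper : lstate M s₀ s₁ k = s₁) :
    ∀ m, lstate M s₀ s₁ (m * k) = s₁ := by
  intro m
  induction m with
  | zero => simp
  | succ m ih =>
    rw [show (m + 1) * k = m * k + k by ring, lstate_add, ih, hper]

lemma lpath_mul {s₁ : M.State} {k : ℕ} (hper : lstate M s₀ s₁ k = s₁) :
    ∀ m, lpath M s₀ s₁ (m * k) = wpow (lpath M s₀ s₁ k) m := by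
  intro m
  induction m with
  | zero => simp [wpow]
  | succ m ih =>
    rw [show (m + 1) * k = k + m * k by ring, lpath_add, hper]
    show _ = lpath M s₀ s₁ k ++ wpow (lpath M s₀ s₁ k) m
    rw [ih]

lemma rstate_mul {s₁ : M.State} {k : ℕ} (hper : rstate M s₀ s₁ k = s₁) :
    ∀ m, rstate M s₀ s₁ (m * k) = s₁ := by
  intro m
  induction m with
  | zero => simp
  | succ m ih =>
    rw [show (m + 1) * k = m * k + k by ring, rstate_add, ih, hper]

lemma rpath_mul {s₁ : M.State} {k : ℕ} (hper : rstate M s₀ s₁ k = s₁) :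
    ∀ m, rpath M s₀ s₁ (m * k) = wpow (rpath M s₀ s₁ k) m := by
  intro m
  induction m with
  | zero => simp [wpow]
  | succ m ih =>
    rw [show (m + 1) * k = k + m * k by ring, rpath_add, hper]
    show _ = rpath M s₀ s₁ k ++ wpow (rpath M s₀ s₁ k) m
    rw [ih]

lemma mem_BLat_shift {p : M.State} (n t : ℕ) {w : List Bool} :
    w ∈ BLat M s₀ p (n + t) ↔
      ∃ v ∈ BLat M s₀ (lstate M s₀ p n) t, w = lpath M s₀ p n ++ v := by
  constructor
  · rintro ⟨b, hb, rfl⟩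
    rw [lstate_add] at hb
    exact ⟨lpath M s₀ (lstate M s₀ p n) t ++ b, ⟨b, hb, rfl⟩,
      by rw [lpath_add, List.append_assoc]⟩
  · rintro ⟨v, ⟨b, hb, rfl⟩, rfl⟩
    refine ⟨b, ?_, by rw [lpath_add, List.append_assoc]⟩
    rw [lstate_add]
    exact hb

lemma mem_TLat_shift {p : M.State} (n t : ℕ) {w : List Bool} :
    w ∈ TLat M s₀ p (n + t) ↔
      ∃ v ∈ TLat M s₀ (rstate M s₀ p n) t, w = rpath M s₀ p n ++ v := by
  constructor
  · rintro ⟨b, hb, rfl⟩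
    rw [rstate_add] at hb
    exact ⟨rpath M s₀ (rstate M s₀ p n) t ++ b, ⟨b, hb, rfl⟩,
      by rw [rpath_add, List.append_assoc]⟩
  · rintro ⟨v, ⟨b, hb, rfl⟩, rfl⟩
    refine ⟨b, ?_, by rw [rpath_add, List.append_assoc]⟩
    rw [rstate_add]
    exact hb

lemma BL_self_fd (hcyc : ∃ w, w ≠ [] ∧ M.run s₀ w = some s₀)
    (hE : ∀ p r (b : Bool), p ∈ Cset M s₀ → M.step p b = some r → r ∉ Cset M s₀ →
      FinDescW (M.langFrom r))
    {s₁ : M.State} (hs₁ : s₁ ∈ Cset M s₀) {k : ℕ} (hk : 1 ≤ k)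
    (hper : lstate M s₀ s₁ k = s₁) : FinDescW (BL M s₀ s₁) := by
  have homega := FinDescW.omega (lpath M s₀ s₁ k) (BLfin_fd hcyc hE k hs₁)
    (fun v hv => by obtain ⟨j, hj, hvj⟩ := hv; exact npBL hj hvj)
    (fun v hv y => by obtain ⟨j, hj, hvj⟩ := hv; exact sepBL hj hvj y)
  apply homega.congr
  ext w
  constructor
  · rintro ⟨t, hw⟩
    have ht : t = t / k * k + t % k := by
      have h := (Nat.div_add_mod t k).symm
      rw [Nat.mul_comm] at h
      exact h
    rw [ht] at hw
    obtain ⟨v, hv, rfl⟩ := (mem_BLat_shift (t / k * k) (t % k)).mp hw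
    rw [lstate_mul hper] at hv
    refine ⟨t / k, v, ⟨t % k, Nat.mod_lt _ (by omega), hv⟩, ?_⟩
    rw [lpath_mul hper]
  · rintro ⟨m, v, ⟨j, hj, hv⟩, rfl⟩
    refine ⟨m * k + j, (mem_BLat_shift (m * k) j).mpr ⟨v, ?_, ?_⟩⟩
    · rw [lstate_mul hper]
      exact hv
    · rw [lpath_mul hper]

lemma TL_self_fd (hcyc : ∃ w, w ≠ [] ∧ M.run s₀ w = some s₀)
    (hE : ∀ p r (b : Bool), p ∈ Cset M s₀ → M.step p b = some r → r ∉ Cset M s₀ →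
      FinDescW (M.langFrom r))
    {s₁ : M.State} (hs₁ : s₁ ∈ Cset M s₀) {k : ℕ} (hk : 1 ≤ k)
    (hper : rstate M s₀ s₁ k = s₁) : FinDescW (TL M s₀ s₁) := by
  have homega := FinDescW.omegaStar (rpath M s₀ s₁ k) (TLfin_fd hcyc hE k hs₁)
    (fun v hv => by obtain ⟨j, hj, hvj⟩ := hv; exact npTL hj hvj)
    (fun v hv y => by obtain ⟨j, hj, hvj⟩ := hv; exact sepTL hj hvj y)
  apply homega.congr
  ext w
  constructor
  · rintro ⟨t, hw⟩
    have ht : t = t / k * k + t % k := by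
      have h := (Nat.div_add_mod t k).symm
      rw [Nat.mul_comm] at h
      exact h
    rw [ht] at hw
    obtain ⟨v, hv, rfl⟩ := (mem_TLat_shift (t / k * k) (t % k)).mp hw
    rw [rstate_mul hper] at hv
    refine ⟨t / k, v, ⟨t % k, Nat.mod_lt _ (by omega), hv⟩, ?_⟩
    rw [rpath_mul hper]
  · rintro ⟨m, v, ⟨j, hj, hv⟩, rfl⟩
    refine ⟨m * k + j, (mem_TLat_shift (m * k) j).mpr ⟨v, ?_, ?_⟩⟩
    · rw [rstate_mul hper]
      exact hv
    · rw [rpath_mul hper]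

lemma BL_fd (hcyc : ∃ w, w ≠ [] ∧ M.run s₀ w = some s₀)
    (hE : ∀ p r (b : Bool), p ∈ Cset M s₀ → M.step p b = some r → r ∉ Cset M s₀ →
      FinDescW (M.langFrom r))
    {p : M.State} (hp : p ∈ Cset M s₀) : FinDescW (BL M s₀ p) := by
  haveI := M.finState
  obtain ⟨i, j, hij, heq'⟩ : ∃ i j, i < j ∧ lstate M s₀ p i = lstate M s₀ p j := by
    obtain ⟨a, b, hne, heq⟩ := Finite.exists_ne_map_eq_of_infinite (fun n => lstate M s₀ p n)
    rcases Nat.lt_trichotomy a b with h | h | h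
    · exact ⟨a, b, h, heq⟩
    · exact absurd h hne
    · exact ⟨b, a, h, heq.symm⟩
  set s₁ := lstate M s₀ p i with hs₁def
  have hs₁C : s₁ ∈ Cset M s₀ := lstate_C hcyc i hp
  have hper : lstate M s₀ s₁ (j - i) = s₁ := by
    have h2 := lstate_add (s₀ := s₀) p i (j - i)
    rw [show i + (j - i) = j by omega] at h2
    rw [← h2, ← heq']
  have hself := BL_self_fd hcyc hE hs₁C (by omega) hper
  refine FinDescW.split (S₁ := BLfin M s₀ p i)
    (S₂ := {w | ∃ v ∈ BL M s₀ s₁, w = lpath M s₀ p i ++ v}) ?_ ?_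
    (BLfin_fd hcyc hE i hp) (FinDescW.append _ hself)
  · intro w
    constructor
    · rintro ⟨t, hw⟩
      rcases Nat.lt_or_ge t i with h | h
      · exact Or.inl ⟨t, h, hw⟩
      · have ht : t = i + (t - i) := by omega
        rw [ht] at hw
        obtain ⟨v, hv, rfl⟩ := (mem_BLat_shift i (t - i)).mp hw
        exact Or.inr ⟨v, ⟨t - i, hv⟩, rfl⟩
    · rintro (⟨t, -, hw⟩ | ⟨v, ⟨t', hv⟩, rfl⟩)
      · exact ⟨t, hw⟩
      · exact ⟨i + t', (mem_BLat_shift i t').mpr ⟨v, hv, rfl⟩⟩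
  · rintro x ⟨t, ht, hx⟩ y ⟨v, -, rfl⟩
    exact sepBL ht hx v

lemma TL_fd (hcyc : ∃ w, w ≠ [] ∧ M.run s₀ w = some s₀)
    (hE : ∀ p r (b : Bool), p ∈ Cset M s₀ → M.step p b = some r → r ∉ Cset M s₀ →
      FinDescW (M.langFrom r))
    {p : M.State} (hp : p ∈ Cset M s₀) : FinDescW (TL M s₀ p) := by
  haveI := M.finState
  obtain ⟨i, j, hij, heq'⟩ : ∃ i j, i < j ∧ rstate M s₀ p i = rstate M s₀ p j := by
    obtain ⟨a, b, hne, heq⟩ := Finite.exists_ne_map_eq_of_infinite (fun n => rstate M s₀ p n)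
    rcases Nat.lt_trichotomy a b with h | h | h
    · exact ⟨a, b, h, heq⟩
    · exact absurd h hne
    · exact ⟨b, a, h, heq.symm⟩
  set s₁ := rstate M s₀ p i with hs₁def
  have hs₁C : s₁ ∈ Cset M s₀ := rstate_C hcyc i hp
  have hper : rstate M s₀ s₁ (j - i) = s₁ := by
    have h2 := rstate_add (s₀ := s₀) p i (j - i)
    rw [show i + (j - i) = j by omega] at h2
    rw [← h2, ← heq']
  have hself := TL_self_fd hcyc hE hs₁C (by omega) hper
  refine FinDescW.split
    (S₁ := {w | ∃ v ∈ TL M s₀ s₁, w = rpath M s₀ p i ++ v})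
    (S₂ := TLfin M s₀ p i) ?_ ?_
    (FinDescW.append _ hself) (TLfin_fd hcyc hE i hp)
  · intro w
    constructor
    · rintro ⟨t, hw⟩
      rcases Nat.lt_or_ge t i with h | h
      · exact Or.inr ⟨t, h, hw⟩
      · have ht : t = i + (t - i) := by omega
        rw [ht] at hw
        obtain ⟨v, hv, rfl⟩ := (mem_TLat_shift i (t - i)).mp hw
        exact Or.inl ⟨v, ⟨t - i, hv⟩, rfl⟩
    · rintro (⟨v, ⟨t', hv⟩, rfl⟩ | ⟨t, -, hw⟩)
      · exact ⟨i + t', (mem_TLat_shift i t').mpr ⟨v, hv, rfl⟩⟩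
      · exact ⟨t, hw⟩
  · rintro x ⟨v, -, rfl⟩ y ⟨t, ht, hy⟩
    exact sepTL ht hy v

lemma Kp_fd (hcyc : ∃ w, w ≠ [] ∧ M.run s₀ w = some s₀)
    (hE : ∀ p r (b : Bool), p ∈ Cset M s₀ → M.step p b = some r → r ∉ Cset M s₀ →
      FinDescW (M.langFrom r))
    {q : M.State} (hbr : branchP M s₀ q) : FinDescW (Kp M s₀ q) := by
  have h0C := (cchild_spec0 M s₀ hbr.1).2
  have h1C := (cchild_spec1 M s₀ hbr.2).2
  refine FinDescW.split
    (S₁ := {w | ∃ v ∈ TL M s₀ (cchild M s₀ q false), w = [false] ++ v})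
    (S₂ := {w | (w = [] ∧ q ∈ M.accept) ∨
            ∃ v ∈ BL M s₀ (cchild M s₀ q true), w = [true] ++ v}) ?_ ?_
    (FinDescW.append [false] (TL_fd hcyc hE h0C)) ?_
  · intro w
    constructor
    · rintro (⟨e, he, rfl⟩ | ⟨rfl, hacc⟩ | ⟨e, he, rfl⟩)
      · exact Or.inl ⟨e, he, rfl⟩
      · exact Or.inr (Or.inl ⟨rfl, hacc⟩)
      · exact Or.inr (Or.inr ⟨e, he, rfl⟩)
    · rintro (⟨e, he, rfl⟩ | ⟨rfl, hacc⟩ | ⟨e, he, rfl⟩)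
      · exact Or.inl ⟨e, he, rfl⟩
      · exact Or.inr (Or.inl ⟨rfl, hacc⟩)
      · exact Or.inr (Or.inr ⟨e, he, rfl⟩)
  · rintro x ⟨e, -, rfl⟩ y (⟨rfl, -⟩ | ⟨e', -, rfl⟩) <;> simp
  · refine FinDescW.split (S₁ := {w | w = [] ∧ q ∈ M.accept})
      (S₂ := {w | ∃ v ∈ BL M s₀ (cchild M s₀ q true), w = [true] ++ v})
      (fun w => Iff.rfl) ?_ ?_ (FinDescW.append [true] (BL_fd hcyc hE h1C))
    · rintro x ⟨rfl, -⟩ y ⟨e', -, rfl⟩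
      simp
    · by_cases hacc : q ∈ M.accept
      · exact FinDescW.ofSingleton [] (by simp [hacc])
      · exact FinDescW.ofEmpty (by rintro w ⟨-, h⟩; exact hacc h)

end CycleFD

section CycleMid

variable {M : PDFA Bool} {s₀ : M.State}

lemma hnode_aux {p : M.State} (hp : p ∈ Cset M s₀) {qt : M.State} (hqt : qt ∈ Cset M s₀) :
    ∃ t, M.run p t = some qt := by
  obtain ⟨u, hu⟩ := hp.2
  obtain ⟨u', hu'⟩ := hqt.1
  exact ⟨u ++ u', by rw [run_append, hu, Option.bind_some]; exact hu'⟩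

lemma MID_fd (hcyc : ∃ w, w ≠ [] ∧ M.run s₀ w = some s₀)
    (hE : ∀ p r (b : Bool), p ∈ Cset M s₀ → M.step p b = some r → r ∉ Cset M s₀ →
      FinDescW (M.langFrom r)) : FinDescW (MIDw M s₀ s₀) := by
  by_cases hbr : ∃ q, q ∈ Cset M s₀ ∧ branchP M s₀ q
  case neg =>
    exact FinDescW.ofEmpty (by rintro w ⟨v, q, k, -, hqC, hbrq, -, -⟩; exact hbr ⟨q, hqC, hbrq⟩)
  case pos =>
  obtain ⟨q₀b, hq₀bC, hq₀bBr⟩ := hbr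
  have hsub : ∀ (v : List Bool),
      v ∈ {v | ∃ q, M.run s₀ v = some q ∧ q ∈ Cset M s₀ ∧ branchP M s₀ q} →
      ∀ (b : Bool) (qt : M.State), qt ∈ Cset M s₀ →
      ∃ t, M.run s₀ (v ++ b :: t) = some qt := by
    intro v hv b qt hqt
    obtain ⟨q, hrun, hqC, hbrq⟩ := hv
    have hcc : M.step q b = some (cchild M s₀ q b) ∧ cchild M s₀ q b ∈ Cset M s₀ := by
      cases b
      · exact cchild_spec0 M s₀ hbrq.1
      · exact cchild_spec1 M s₀ hbrq.2
    obtain ⟨t, ht⟩ := hnode_aux hcc.2 hqt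
    refine ⟨t, ?_⟩
    rw [run_append, hrun, Option.bind_some, run_cons, hcc.1, Option.bind_some]
    exact ht
  set I := {v : List Bool // v ∈ {v | ∃ q, M.run s₀ v = some q ∧ q ∈ Cset M s₀ ∧
    branchP M s₀ q}} with hI
  let rB : I → I → Prop := fun x y => inlt x.1 y.1
  haveI hirr : IsIrrefl I rB := ⟨fun a => inlt_irrefl a.1⟩
  haveI htra : IsTrans I rB := ⟨fun a b c h1 h2 => inlt_trans _ _ _ h1 h2⟩
  haveI htri : IsTrichotomous I rB := ⟨fun a b h1 h2 => by
    rcases inlt_total a.1 b.1 with h | h | h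
    · exact Subtype.ext h
    · exact absurd h h1
    · exact absurd h h2⟩
  haveI hso : IsStrictOrder I rB := ⟨⟩
  haveI : IsStrictTotalOrder I rB := ⟨⟩
  haveI : DecidableRel rB := Classical.decRel _
  letI linOrd : LinearOrder I := linearOrderOfSTO rB
  letI ltI : LT I := @Preorder.toLT I (@PartialOrder.toPreorder I
    (@LinearOrder.toPartialOrder I linOrd))
  have hnonempty : Nonempty I := by
    obtain ⟨t, ht⟩ := hnode_aux (s0_mem_C (M := M) (s₀ := s₀)) hq₀bC
    exact ⟨⟨t, q₀b, ht, hq₀bC, hq₀bBr⟩⟩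
  have hcount : Countable I := inferInstance
  have hnomin : @NoMinOrder I ltI := by
    constructor
    intro a
    obtain ⟨t, ht⟩ := hsub a.1 a.2 false q₀b hq₀bC
    refine ⟨⟨a.1 ++ false :: t, q₀b, ht, hq₀bC, hq₀bBr⟩, ?_⟩
    show rB _ _
    exact inlt_append_false_self a.1 t
  have hnomax : @NoMaxOrder I ltI := by
    constructor
    intro a
    obtain ⟨t, ht⟩ := hsub a.1 a.2 true q₀b hq₀bC
    refine ⟨⟨a.1 ++ true :: t, q₀b, ht, hq₀bC, hq₀bBr⟩, ?_⟩
    show rB _ _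
    exact inlt_self_append_true a.1 t
  have hdense : ∀ (a b : I), inlt a.1 b.1 → ∀ (qt : M.State), qt ∈ Cset M s₀ →
      branchP M s₀ qt → ∃ m : I, inlt a.1 m.1 ∧ inlt m.1 b.1 ∧ M.run s₀ m.1 = some qt := by
    intro a b hab qt hqtC hqtBr
    rcases inlt_cases hab with ⟨t, hbt⟩ | ⟨t, hat⟩ | ⟨cp, sa, tb, hae, hbe⟩
    · obtain ⟨t', ht'⟩ := hsub b.1 b.2 false qt hqtC
      refine ⟨⟨b.1 ++ false :: t', qt, ht', hqtC, hqtBr⟩, ?_, ?_, ht'⟩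
      · show inlt a.1 (b.1 ++ false :: t')
        rw [hbt, List.append_assoc]
        exact inlt_self_append_true a.1 (t ++ false :: t')
      · exact inlt_append_false_self b.1 t'
    · obtain ⟨t', ht'⟩ := hsub a.1 a.2 true qt hqtC
      refine ⟨⟨a.1 ++ true :: t', qt, ht', hqtC, hqtBr⟩, inlt_self_append_true a.1 t', ?_, ht'⟩
      show inlt (a.1 ++ true :: t') b.1
      rw [hat, List.append_assoc]
      exact inlt_append_false_self b.1 (t ++ true :: t')
    · obtain ⟨t', ht'⟩ := hsub a.1 a.2 true qt hqtC
      refine ⟨⟨a.1 ++ true :: t', qt, ht', hqtC, hqtBr⟩, inlt_self_append_true a.1 t', ?_, ht'⟩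
      show inlt (a.1 ++ true :: t') b.1
      rw [hae, hbe, List.append_assoc]
      exact inlt_append_false_true cp (sa ++ true :: t') tb
  have hdenseI : @DenselyOrdered I ltI := by
    constructor
    intro a b hab
    obtain ⟨m, h1, h2, -⟩ := hdense a b hab q₀b hq₀bC hq₀bBr
    exact ⟨m, h1, h2⟩
  haveI := M.finState
  haveI : Fintype {q : M.State // q ∈ Cset M s₀ ∧ branchP M s₀ q} :=
    Fintype.ofFinite _
  haveI : Nonempty {q : M.State // q ∈ Cset M s₀ ∧ branchP M s₀ q} :=
    ⟨⟨q₀b, hq₀bC, hq₀bBr⟩⟩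
  have hn1 : 1 ≤ Fintype.card {q : M.State // q ∈ Cset M s₀ ∧ branchP M s₀ q} :=
    Fintype.card_pos
  let enum : {q : M.State // q ∈ Cset M s₀ ∧ branchP M s₀ q} ≃
      Fin (Fintype.card {q : M.State // q ∈ Cset M s₀ ∧ branchP M s₀ q}) :=
    Fintype.equivFin _
  have stBex : ∀ v : I, ∃ q, M.run s₀ v.1 = some q ∧ q ∈ Cset M s₀ ∧ branchP M s₀ q :=
    fun v => v.2
  let stB : I → {q : M.State // q ∈ Cset M s₀ ∧ branchP M s₀ q} :=
    fun v => ⟨(stBex v).choose, (stBex v).choose_spec.2.1, (stBex v).choose_spec.2.2⟩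
  have stB_run : ∀ v : I, M.run s₀ v.1 = some (stB v).1 := fun v => (stBex v).choose_spec.1
  have stB_eq : ∀ (v : I) (q : M.State), M.run s₀ v.1 = some q → (stB v).1 = q := by
    intro v q h
    have h2 := stB_run v
    rw [h2] at h
    exact Option.some.inj h
  have hLs_c : ∀ v : I,
      Kp M s₀ (enum.symm (enum (stB v))).1 = Kp M s₀ (stB v).1 := by
    intro v
    rw [Equiv.symm_apply_apply]
  have hcdens : ∀ j, ∀ a b : I, rB a b →
      ∃ i, rB a i ∧ rB i b ∧ enum (stB i) = j := by
    intro j a b hab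
    obtain ⟨m, h1, h2, hrun⟩ := hdense a b hab (enum.symm j).1
      (enum.symm j).2.1 (enum.symm j).2.2
    refine ⟨m, h1, h2, ?_⟩
    have hm : stB m = enum.symm j := Subtype.ext (stB_eq m _ hrun)
    rw [hm, Equiv.apply_symm_apply]
  refine @FinDescW.shuffleW _ hn1 (fun j => Kp M s₀ (enum.symm j).1)
    (fun j => Kp_fd hcyc hE (enum.symm j).2.2) I linOrd hcount hdenseI hnomin hnomax
    hnonempty (fun v => enum (stB v)) (fun j a b hab => hcdens j a b hab)
    (fun v => v.1) _ ?_ ?_ ?_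
  · intro w
    constructor
    · rintro ⟨v, q, k, hrun, hqC, hbrq, hk, rfl⟩
      refine ⟨⟨v, q, hrun, hqC, hbrq⟩, k, ?_, rfl⟩
      beta_reduce
      rw [hLs_c]
      have hq : (stB ⟨v, ⟨q, hrun, hqC, hbrq⟩⟩).1 = q := stB_eq _ q hrun
      rw [hq]
      exact hk
    · rintro ⟨i, k, hk, rfl⟩
      beta_reduce at hk ⊢
      rw [hLs_c] at hk
      exact ⟨i.1, (stB i).1, k, stB_run i, (stB i).2.1, (stB i).2.2, hk, rfl⟩
  · intro i i' hii' k hk k' hk'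
    beta_reduce at hk hk' ⊢
    rw [hLs_c] at hk hk'
    exact lemCR hcyc i.1 s0_mem_C (stB_run i) (stB i).2.1 (stB i).2.2 (stB_run i')
      (stB i').2.1 (stB i').2.2 hii' hk hk'
  · intro i i' k hk k' hk' heq
    beta_reduce at hk hk' heq
    rw [hLs_c] at hk hk'
    by_contra hne
    rcases inlt_total i.1 i'.1 with h | h | h
    · exact hne (Subtype.ext h)
    · have hcontra := lemCR hcyc i.1 s0_mem_C (stB_run i) (stB i).2.1 (stB i).2.2
        (stB_run i') (stB i').2.1 (stB i').2.2 h hk hk'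
      rw [heq] at hcontra
      exact inlt_irrefl _ hcontra
    · have hcontra := lemCR hcyc i'.1 s0_mem_C (stB_run i') (stB i').2.1 (stB i').2.2
        (stB_run i) (stB i).2.1 (stB i).2.2 h hk' hk
      rw [← heq] at hcontra
      exact inlt_irrefl _ hcontra

end CycleMid

/-! ### The main induction -/

lemma cycleCase {M : PDFA Bool} (s : M.State)
    (hcyc : ∃ w, w ≠ [] ∧ M.run s w = some s)
    (IH : ∀ p : M.State, p ∈ M.reach s → s ∉ M.reach p → FinDescW (M.langFrom p)) :
    FinDescW (M.langFrom s) := by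
  have hE : ∀ p r (b : Bool), p ∈ Cset M s → M.step p b = some r → r ∉ Cset M s →
      FinDescW (M.langFrom r) := by
    intro p r b hp hstep hrnC
    have hrr : r ∈ M.reach s := reach_trans hp.1 (reach_step hstep)
    apply IH r hrr
    intro hsr
    exact hrnC ⟨hrr, hsr⟩
  refine FinDescW.split (S₁ := BL M s s) (S₂ := MIDw M s s ∪ TL M s s) ?_ ?_
    (BL_fd hcyc hE s0_mem_C) ?_
  · intro w
    constructor
    · intro hw
      rcases G1sub hcyc w s0_mem_C hw with h | h | h
      · exact Or.inl h
      · exact Or.inr (Or.inl h)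
      · exact Or.inr (Or.inr h)
    · rintro (h | h | h)
      · exact BL_sub_lang hcyc s0_mem_C h
      · exact MID_sub_lang hcyc h
      · exact TL_sub_lang hcyc s0_mem_C h
  · rintro x hx y (hy | hy)
    · obtain ⟨v, q, k, hrun, hqC, hbrq, hk, rfl⟩ := hy
      exact lemA hcyc v s0_mem_C hrun hqC hbrq hx hk
    · obtain ⟨t, hx⟩ := hx
      exact lemB hcyc t s0_mem_C hx hy
  · refine FinDescW.split (S₁ := MIDw M s s) (S₂ := TL M s s) (fun w => Iff.rfl) ?_
      (MID_fd hcyc hE) (TL_fd hcyc hE s0_mem_C)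
    rintro x ⟨v, q, k, hrun, hqC, hbrq, hk, rfl⟩ y hy
    exact lemA' hcyc v s0_mem_C hrun hqC hbrq hk hy

theorem mainInd {M : PDFA Bool} : ∀ (n : ℕ) (s : M.State),
    (M.reach s).ncard ≤ n → FinDescW (M.langFrom s) := by
  intro n
  induction n with
  | zero =>
    intro s hs
    haveI := M.finState
    exfalso
    have h0 : (M.reach s).ncard = 0 := by omega
    rw [Set.ncard_eq_zero (Set.toFinite _)] at h0
    exact absurd (h0 ▸ reach_self s) (Set.notMem_empty _)
  | succ n IH =>
    intro s hs
    by_cases hcyc : ∃ w, w ≠ [] ∧ M.run s w = some s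
    · refine cycleCase s hcyc ?_
      intro p hp hnr
      obtain ⟨w, hw⟩ := hp
      -- find the first step towards p... easier: p ∈ reach s with s ∉ reach p means p ≠ s;
      -- but we need a card bound for reach p directly.
      haveI := M.finState
      apply IH
      have hsub : M.reach p ⊆ M.reach s \ {s} := by
        intro x hx
        refine ⟨reach_trans ⟨w, hw⟩ hx, ?_⟩
        intro hxs
        rw [Set.mem_singleton_iff] at hxs
        exact hnr (hxs ▸ hx)
      have h1 : (M.reach p).ncard ≤ (M.reach s \ {s}).ncard :=
        Set.ncard_le_ncard hsub (Set.toFinite _)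
      have h2 : (M.reach s \ {s}).ncard + 1 = (M.reach s).ncard :=
        Set.ncard_diff_singleton_add_one (reach_self s) (Set.toFinite _)
      omega
    · -- no-cycle case
      have hstepcard : ∀ (a : Bool) (p : M.State), M.step s a = some p →
          FinDescW (M.langFrom p) := by
        intro a p hstep
        have hnr : s ∉ M.reach p := by
          rintro ⟨w, hw⟩
          exact hcyc ⟨a :: w, by simp, by rw [run_cons, hstep]; exact hw⟩
        apply IH
        have := reach_card_lt hstep hnr
        omega
      -- decompose
      set S0 : Set (List Bool) :=
        {w | ∃ p w', M.step s false = some p ∧ w' ∈ M.langFrom p ∧ w = false :: w'} with hS0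
      set S1 : Set (List Bool) :=
        {w | ∃ p w', M.step s true = some p ∧ w' ∈ M.langFrom p ∧ w = true :: w'} with hS1
      set Smid : Set (List Bool) := {w | w = [] ∧ s ∈ M.accept} with hSmid
      have hd0 : FinDescW S0 := by
        cases hstep : M.step s false with
        | none =>
          apply FinDescW.ofEmpty
          rintro w ⟨p, w', hp, -, -⟩
          rw [hstep] at hp; exact nomatch hp
        | some p =>
          have := FinDescW.append [false] (hstepcard false p hstep)
          apply this.congr
          ext w
          constructor
          · rintro ⟨p', w', hp', hw', rfl⟩
            rw [hstep] at hp'; cases hp'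
            exact ⟨w', hw', rfl⟩
          · rintro ⟨v, hv, rfl⟩
            exact ⟨p, v, hstep, hv, rfl⟩
      have hd1 : FinDescW S1 := by
        cases hstep : M.step s true with
        | none =>
          apply FinDescW.ofEmpty
          rintro w ⟨p, w', hp, -, -⟩
          rw [hstep] at hp; exact nomatch hp
        | some p =>
          have := FinDescW.append [true] (hstepcard true p hstep)
          apply this.congr
          ext w
          constructor
          · rintro ⟨p', w', hp', hw', rfl⟩
            rw [hstep] at hp'; cases hp'
            exact ⟨w', hw', rfl⟩
          · rintro ⟨v, hv, rfl⟩
            exact ⟨p, v, hstep, hv, rfl⟩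
      have hdmid : FinDescW Smid := by
        by_cases hacc : s ∈ M.accept
        · exact FinDescW.ofSingleton [] (by simp [hSmid, hacc])
        · exact FinDescW.ofEmpty (by rintro w ⟨-, h⟩; exact hacc h)
      refine FinDescW.split (S₁ := S0) (S₂ := Smid ∪ S1) ?_ ?_ hd0 ?_
      · intro w
        rw [mem_langFrom_iff]
        constructor
        · rintro (⟨rfl, hacc⟩ | ⟨a, w', p, rfl, hstep, hw'⟩)
          · exact Or.inr (Or.inl ⟨rfl, hacc⟩)
          · cases a
            · exact Or.inl ⟨p, w', hstep, hw', rfl⟩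
            · exact Or.inr (Or.inr ⟨p, w', hstep, hw', rfl⟩)
        · rintro (⟨p, w', hstep, hw', rfl⟩ | ⟨rfl, hacc⟩ | ⟨p, w', hstep, hw', rfl⟩)
          · exact Or.inr ⟨false, w', p, rfl, hstep, hw'⟩
          · exact Or.inl ⟨rfl, hacc⟩
          · exact Or.inr ⟨true, w', p, rfl, hstep, hw'⟩
      · rintro x ⟨p, w', -, -, rfl⟩ y (⟨rfl, -⟩ | ⟨q, v', -, -, rfl⟩)
        · simp
        · simp
      · refine FinDescW.split (S₁ := Smid) (S₂ := S1) (fun w => Iff.rfl) ?_ hdmid hd1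
        rintro x ⟨rfl, -⟩ y ⟨q, v', -, -, rfl⟩
        simp

/-- For every deterministic finite automaton `M` over `{0,1}`,
the linguage `𝐋(M) = (L(M), <₂)` is a finite description linear order. -/
theorem linguage_finDesc (M : PDFA Bool) :
    FinDesc {w : List Bool // w ∈ M.lang} (fun x y => inlt x.1 y.1) := by
  rw [lang_eq_langFrom]
  exact mainInd (M.reach M.start).ncard M.start le_rfl
end

section
/- If linear orders L₀ and L₁ are each order-isomorphic to the linguage of a deterministic finite automaton over {0,1}, then their binary sum L₀ + L₁ (the linear order obtained by placing a copy of L₁ after a copy of L₀) is also order-isomorphic to the linguage of a deterministic finite automaton over {0,1}. -/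
/-- `(L, r)` is order-isomorphic to the linguage `(L(M), <₂)` of some
deterministic finite automaton `M` over `{0,1}`. -/
def IsLinguageOf (L : Type) (r : L → L → Prop) : Prop :=
  ∃ M : PDFA Bool, Nonempty (r ≃r fun x y : M.lang => inlt x.1 y.1)

/-! ### Auxiliary material for the sum construction -/

lemma PDFA.run_cons_s3 {σ : Type} (M : PDFA σ) (q : M.State) (a : σ) (w : List σ) :
    M.run q (a :: w) = (M.step q a) >>= fun q' => M.run q' w := rfl

/-- The sum automaton: a fresh start state; `0` leads to a copy of `M₀`,
`1` leads to a copy of `M₁`. -/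
@[reducible]
def sumPDFA (M₀ M₁ : PDFA Bool) : PDFA Bool where
  State := Option (M₀.State ⊕ M₁.State)
  finState := by
    haveI := M₀.finState; haveI := M₁.finState
    exact Finite.of_equiv _ (Equiv.optionEquivSumPUnit.{0,0} (M₀.State ⊕ M₁.State)).symm
  start := none
  accept := {s | (∃ q ∈ M₀.accept, s = some (.inl q)) ∨ (∃ q ∈ M₁.accept, s = some (.inr q))}
  step := fun s b =>
    match s with
    | none => some (some (if b then .inr M₁.start else .inl M₀.start))
    | some (.inl q) => (M₀.step q b).map (fun q' => some (.inl q'))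
    | some (.inr q) => (M₁.step q b).map (fun q' => some (.inr q'))

lemma option_some_bind {α β : Type} (a : α) (f : α → Option β) :
    (some a >>= f) = f a := rfl

lemma sum_step_inl (M₀ M₁ : PDFA Bool) (q : M₀.State) (b : Bool) :
    (sumPDFA M₀ M₁).step (some (.inl q)) b
      = (M₀.step q b).map (fun q' => some (.inl q')) := rfl

lemma sum_step_inr (M₀ M₁ : PDFA Bool) (q : M₁.State) (b : Bool) :
    (sumPDFA M₀ M₁).step (some (.inr q)) b
      = (M₁.step q b).map (fun q' => some (.inr q')) := rfl

lemma sum_run_inl (M₀ M₁ : PDFA Bool) (w : List Bool) (q : M₀.State) :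
    (sumPDFA M₀ M₁).run (some (.inl q)) w
      = (M₀.run q w).map (fun q' => some (.inl q')) := by
  induction w generalizing q with
  | nil => rfl
  | cons a w ih =>
    rw [PDFA.run_cons_s3, PDFA.run_cons_s3, sum_step_inl]
    cases h : M₀.step q a with
    | none => rfl
    | some q' => simpa using ih q'

lemma sum_run_inr (M₀ M₁ : PDFA Bool) (w : List Bool) (q : M₁.State) :
    (sumPDFA M₀ M₁).run (some (.inr q)) w
      = (M₁.run q w).map (fun q' => some (.inr q')) := by
  induction w generalizing q with
  | nil => rfl
  | cons a w ih =>
    rw [PDFA.run_cons_s3, PDFA.run_cons_s3, sum_step_inr]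
    cases h : M₁.step q a with
    | none => rfl
    | some q' => simpa using ih q'

lemma mem_sum_lang (M₀ M₁ : PDFA Bool) (w : List Bool) :
    w ∈ (sumPDFA M₀ M₁).lang ↔
      (∃ w', w = false :: w' ∧ w' ∈ M₀.lang) ∨ (∃ w', w = true :: w' ∧ w' ∈ M₁.lang) := by
  cases w with
  | nil =>
    simp only [PDFA.lang, Set.mem_setOf_eq]
    constructor
    · rintro ⟨q, hq, hr⟩
      have : (some none : Option (Option (M₀.State ⊕ M₁.State))) = some q := hr
      rcases hq with ⟨q', _, h⟩ | ⟨q', _, h⟩ <;> simp_all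
    · rintro (⟨w', h, _⟩ | ⟨w', h, _⟩) <;> simp_all
  | cons b w =>
    cases b with
    | false =>
      simp only [PDFA.lang, Set.mem_setOf_eq]
      rw [PDFA.run_cons_s3]
      have hstep : (sumPDFA M₀ M₁).step none false = some (some (.inl M₀.start)) := rfl
      rw [hstep]
      simp only [option_some_bind, sum_run_inl]
      constructor
      · rintro ⟨q, hq, hr⟩
        obtain ⟨q'', hq'', heq⟩ := Option.map_eq_some_iff.1 hr
        rcases hq with ⟨q', hq', h⟩ | ⟨q', hq', h⟩
        · subst h
          obtain rfl : q'' = q' := by simpa using heq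
          exact Or.inl ⟨w, rfl, q'', hq', hq''⟩
        · subst h; simp_all
      · rintro (⟨w', hw, q, hq, hr⟩ | ⟨w', hw, _⟩)
        · obtain rfl : w' = w := by injection hw with h1 h2; exact h2.symm
          exact ⟨some (.inl q), Or.inl ⟨q, hq, rfl⟩, by simp [hr]⟩
        · exact absurd hw (by simp)
    | true =>
      simp only [PDFA.lang, Set.mem_setOf_eq]
      rw [PDFA.run_cons_s3]
      have hstep : (sumPDFA M₀ M₁).step none true = some (some (.inr M₁.start)) := rfl
      rw [hstep]
      simp only [option_some_bind, sum_run_inr]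
      constructor
      · rintro ⟨q, hq, hr⟩
        obtain ⟨q'', hq'', heq⟩ := Option.map_eq_some_iff.1 hr
        rcases hq with ⟨q', hq', h⟩ | ⟨q', hq', h⟩
        · subst h; simp_all
        · subst h
          obtain rfl : q'' = q' := by simpa using heq
          exact Or.inr ⟨w, rfl, q'', hq', hq''⟩
      · rintro (⟨w', hw, _⟩ | ⟨w', hw, q, hq, hr⟩)
        · exact absurd hw (by simp)
        · obtain rfl : w' = w := by injection hw with h1 h2; exact h2.symm
          exact ⟨some (.inr q), Or.inr ⟨q, hq, rfl⟩, by simp [hr]⟩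

lemma inlt_cons_same (b : Bool) (x y : List Bool) :
    inlt (b :: x) (b :: y) ↔ inlt x y := by
  cases b <;> simp [inlt]

lemma inlt_false_true (x y : List Bool) : inlt (false :: x) (true :: y) := by
  simp [inlt]

lemma not_inlt_true_false (x y : List Bool) : ¬ inlt (true :: x) (false :: y) := by
  simp [inlt]

/-- If `L₀` and `L₁` are each order-isomorphic to the linguage of a
DFA over `{0,1}`, then so is their binary sum `L₀ + L₁` (a copy of `L₁` after a copy
of `L₀`). -/
theorem isLinguage_sum (L₀ L₁ : Type) (r₀ : L₀ → L₀ → Prop) (r₁ : L₁ → L₁ → Prop)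
    (h₀ : IsLinguageOf L₀ r₀) (h₁ : IsLinguageOf L₁ r₁) :
    IsLinguageOf (L₀ ⊕ L₁) (Sum.Lex r₀ r₁) := by
  obtain ⟨M₀, ⟨e₀⟩⟩ := h₀
  obtain ⟨M₁, ⟨e₁⟩⟩ := h₁
  refine ⟨sumPDFA M₀ M₁, ⟨?_⟩⟩
  -- first, an iso from the lex sum of the two linguages to the sum linguage
  set s₀ : M₀.lang → M₀.lang → Prop := fun x y => inlt x.1 y.1 with hs₀
  set s₁ : M₁.lang → M₁.lang → Prop := fun x y => inlt x.1 y.1 with hs₁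
  have f : ∀ z : M₀.lang ⊕ M₁.lang,
      (Sum.elim (fun x : M₀.lang => (false : Bool) :: x.1)
        (fun x : M₁.lang => (true : Bool) :: x.1) z) ∈ (sumPDFA M₀ M₁).lang := by
    rintro (x | x)
    · exact (mem_sum_lang M₀ M₁ _).2 (Or.inl ⟨x.1, rfl, x.2⟩)
    · exact (mem_sum_lang M₀ M₁ _).2 (Or.inr ⟨x.1, rfl, x.2⟩)
  let F : M₀.lang ⊕ M₁.lang → (sumPDFA M₀ M₁).lang := fun z => ⟨_, f z⟩
  have hFbij : Function.Bijective F := by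
    constructor
    · rintro (x | x) (y | y) h <;>
        simp only [F, Sum.elim_inl, Sum.elim_inr, Subtype.mk.injEq, List.cons.injEq] at h
      · exact congrArg Sum.inl (Subtype.ext h.2)
      · exact absurd h.1 (by simp)
      · exact absurd h.1 (by simp)
      · exact congrArg Sum.inr (Subtype.ext h.2)
    · rintro ⟨w, hw⟩
      rcases (mem_sum_lang M₀ M₁ w).1 hw with ⟨w', rfl, hw'⟩ | ⟨w', rfl, hw'⟩
      · exact ⟨Sum.inl ⟨w', hw'⟩, rfl⟩
      · exact ⟨Sum.inr ⟨w', hw'⟩, rfl⟩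
  have hmap : ∀ z₁ z₂ : M₀.lang ⊕ M₁.lang,
      inlt (F z₁).1 (F z₂).1 ↔ Sum.Lex s₀ s₁ z₁ z₂ := by
    rintro (x | x) (y | y)
    · simpa [F, inlt_cons_same] using
        ⟨fun h => h, fun h => h⟩
    · simp only [F, Sum.elim_inl, Sum.elim_inr]
      exact ⟨fun _ => Sum.Lex.sep x y, fun _ => inlt_false_true _ _⟩
    · simp only [F, Sum.elim_inl, Sum.elim_inr]
      exact ⟨fun h => absurd h (not_inlt_true_false _ _), fun h => by cases h⟩
    · simpa [F, inlt_cons_same] using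
        ⟨fun h => h, fun h => h⟩
  let G : Sum.Lex s₀ s₁ ≃r (fun x y : (sumPDFA M₀ M₁).lang => inlt x.1 y.1) :=
    ⟨Equiv.ofBijective F hFbij, by
      intro a b
      exact hmap a b⟩
  exact (RelIso.sumLexCongr e₀ e₁).trans G
end
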